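/- arXiv:2502.09353 — 10 statements merged into one kernel-verified Lean document; each statement's English description precedes it below -/
import Mathlib

section
/- Let n ≥ 3 and let C : ZMod n → EuclideanSpace ℝ (Fin 2) be a closed polygon with C(i+1) ≠ C(i) for all i, and suppose that at no vertex the direction is reversed, i.e. for every i the oriented angle (with respect to the standard orientation of the plane) from the edge vector e_{i-1} = C(i) − C(i−1) to e_i = C(i+1) − C(i) is not equal to π. Then there exists an integer k such that ∑_{i ∈ ZMod n} θ_i = 2πk, where θ_i ∈ (−π, π) is the real representative of the oriented angle from e_{i−1} to e_i. -/
open scoped RealInnerProductSpace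

noncomputable instance : Fact (Module.finrank ℝ (EuclideanSpace ℝ (Fin 2)) = 2) :=
  ⟨finrank_euclideanSpace_fin⟩

/-- The standard orientation of the Euclidean plane. -/
noncomputable def stdOrientation : Orientation ℝ (EuclideanSpace ℝ (Fin 2)) (Fin 2) :=
  (EuclideanSpace.basisFun (Fin 2) ℝ).toBasis.orientation

theorem total_signed_curvature_of_closed_polygon
    (n : ℕ) [NeZero n] (hn : 3 ≤ n)
    (C : ZMod n → EuclideanSpace ℝ (Fin 2))
    (hC : ∀ i : ZMod n, C (i + 1) ≠ C i)
    (hrev : ∀ i : ZMod n,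
      stdOrientation.oangle (C i - C (i - 1)) (C (i + 1) - C i) ≠ (Real.pi : Real.Angle)) :
    ∃ k : ℤ,
      ∑ i : ZMod n, (stdOrientation.oangle (C i - C (i - 1)) (C (i + 1) - C i)).toReal
        = 2 * Real.pi * k := by
  set e : ZMod n → EuclideanSpace ℝ (Fin 2) := fun i => C (i + 1) - C i with he
  have hne : ∀ i, e i ≠ 0 := fun i => sub_ne_zero.mpr (hC i)
  have hCe : ∀ i : ZMod n, C i - C (i - 1) = e (i - 1) := by
    intro i; simp [he]
  set g : ZMod n → Real.Angle := fun i => stdOrientation.oangle (e 0) (e i) with hg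
  have hθ : ∀ i : ZMod n,
      stdOrientation.oangle (C i - C (i - 1)) (C (i + 1) - C i) = g i - g (i - 1) := by
    intro i
    rw [hCe i]
    have h := stdOrientation.oangle_add (hne 0) (hne (i - 1)) (hne i)
    have : stdOrientation.oangle (e (i - 1)) (e i) = g i - g (i - 1) := by
      rw [hg]; dsimp only; rw [← h]; abel
    simpa [he] using this
  have hsum0 : (∑ i : ZMod n, stdOrientation.oangle (C i - C (i - 1)) (C (i + 1) - C i))
      = (0 : Real.Angle) := by
    calc ∑ i : ZMod n, stdOrientation.oangle (C i - C (i - 1)) (C (i + 1) - C i)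
        = ∑ i : ZMod n, (g i - g (i - 1)) := Finset.sum_congr rfl fun i _ => hθ i
      _ = (∑ i : ZMod n, g i) - ∑ i : ZMod n, g (i - 1) := Finset.sum_sub_distrib _ _
      _ = 0 := by
          rw [Fintype.sum_equiv (Equiv.subRight (1 : ZMod n)) (fun i => g (i - 1)) g
            (fun i => rfl)]
          exact sub_self _
  have hcoe : ((∑ i : ZMod n,
      (stdOrientation.oangle (C i - C (i - 1)) (C (i + 1) - C i)).toReal : ℝ) : Real.Angle)
      = 0 := by
    rw [← hsum0,
      show ((∑ i : ZMod n, (stdOrientation.oangle (C i - C (i - 1))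
          (C (i + 1) - C i)).toReal : ℝ) : Real.Angle)
        = Real.Angle.coeHom (∑ i : ZMod n, (stdOrientation.oangle (C i - C (i - 1))
          (C (i + 1) - C i)).toReal) from rfl,
      map_sum]
    exact Finset.sum_congr rfl fun i _ => Real.Angle.coe_toReal _
  rw [show (0 : Real.Angle) = ((0 : ℝ) : Real.Angle) by norm_cast,
    Real.Angle.angle_eq_iff_two_pi_dvd_sub] at hcoe
  obtain ⟨k, hk⟩ := hcoe
  exact ⟨k, by linarith⟩
end

section
/- Let L > 0 and let γ : ℝ → EuclideanSpace ℝ (Fin 2) be twice continuously differentiable, L-periodic (γ(t + L) = γ(t) for all t), and parametrized by arc length (‖γ'(t)‖ = 1 for all t). Then there exists an integer k such that ∫_0^L κˢ(t) dt = 2πk, where κˢ(t) = γ₁''(t)·γ₀'(t) − γ₀''(t)·γ₁'(t) is the signed curvature of γ. -/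
open Complex in
theorem total_signed_curvature_of_closed_curve
    (L : ℝ) (hL : 0 < L)
    (γ : ℝ → EuclideanSpace ℝ (Fin 2))
    (hsmooth : ContDiff ℝ 2 γ)
    (hper : ∀ t : ℝ, γ (t + L) = γ t)
    (hunit : ∀ t : ℝ, ‖deriv γ t‖ = 1) :
    ∃ k : ℤ,
      ∫ t in (0 : ℝ)..L,
        (deriv (deriv γ) t 1 * deriv γ t 0 - deriv (deriv γ) t 0 * deriv γ t 1)
      = 2 * Real.pi * k := by
  set g := deriv γ with hgdef
  have h2 : ContDiff ℝ ((1:ℕ∞) + 1) γ := by exact_mod_cast hsmooth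
  have hg1 : ContDiff ℝ 1 g := (contDiff_succ_iff_deriv.mp h2).2.2
  have hγd : Differentiable ℝ γ := (contDiff_succ_iff_deriv.mp h2).1
  have hgd : Differentiable ℝ g := hg1.differentiable one_ne_zero
  have hg'c : Continuous (deriv g) := hg1.continuous_deriv le_rfl
  -- coordinate functions
  have hcoord : ∀ (i : Fin 2) (t : ℝ), HasDerivAt (fun s => g s i) (deriv g t i) t := by
    intro i t
    exact (EuclideanSpace.proj i).hasFDerivAt.comp_hasDerivAt t (hgd t).hasDerivAt
  -- norm-squared identity
  have hnorm : ∀ t : ℝ, (g t 0) ^ 2 + (g t 1) ^ 2 = 1 := by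
    intro t
    have h := hunit t
    rw [EuclideanSpace.norm_eq] at h
    have hnn : 0 ≤ ∑ i : Fin 2, ‖g t i‖ ^ 2 := Finset.sum_nonneg fun i _ => sq_nonneg _
    have hx : (∑ i : Fin 2, ‖g t i‖ ^ 2) = 1 := by
      nlinarith [Real.sq_sqrt hnn, h]
    simpa [Fin.sum_univ_two, Real.norm_eq_abs, _root_.sq_abs] using hx
  -- orthogonality
  have hortho : ∀ t : ℝ, g t 0 * deriv g t 0 + g t 1 * deriv g t 1 = 0 := by
    intro t
    have h1 : HasDerivAt (fun s => (g s 0) ^ 2 + (g s 1) ^ 2)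
        (2 * g t 0 * deriv g t 0 + 2 * g t 1 * deriv g t 1) t := by
      have : HasDerivAt (fun s => (g s 0) ^ 2 + (g s 1) ^ 2)
          (((2:ℕ):ℝ) * g t 0 ^ (2 - 1) * deriv g t 0 + ((2:ℕ):ℝ) * g t 1 ^ (2 - 1) * deriv g t 1) t :=
        ((hcoord 0 t).pow 2).add ((hcoord 1 t).pow 2)
      convert this using 1; push_cast; ring
    have hconst : (fun s => (g s 0) ^ 2 + (g s 1) ^ 2) = fun _ => (1 : ℝ) :=
      funext hnorm
    rw [hconst] at h1
    have := h1.unique (hasDerivAt_const t 1)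
    linarith
  -- the curvature κ and complex function z
  set κ : ℝ → ℝ := fun t => deriv g t 1 * g t 0 - deriv g t 0 * g t 1 with hκdef
  have hκc : Continuous κ := by
    have c0 : Continuous fun t => g t 0 := (continuous_apply (0 : Fin 2)).comp ((PiLp.continuous_ofLp 2 _).comp hgd.continuous)
    have c1 : Continuous fun t => g t 1 := (continuous_apply (1 : Fin 2)).comp ((PiLp.continuous_ofLp 2 _).comp hgd.continuous)
    have d0 : Continuous fun t => deriv g t 0 := (continuous_apply (0 : Fin 2)).comp ((PiLp.continuous_ofLp 2 _).comp hg'c)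
    have d1 : Continuous fun t => deriv g t 1 := (continuous_apply (1 : Fin 2)).comp ((PiLp.continuous_ofLp 2 _).comp hg'c)
    exact (d1.mul c0).sub (d0.mul c1)
  set z : ℝ → ℂ := fun t => (g t 0 : ℂ) + (g t 1 : ℂ) * Complex.I with hzdef
  have hz : ∀ t, HasDerivAt z (Complex.I * κ t * z t) t := by
    intro t
    have h := ((hcoord 0 t).ofReal_comp).add (((hcoord 1 t).ofReal_comp).mul_const Complex.I)
    have e0 : -(κ t * g t 1) = deriv g t 0 := by
      simp only [hκdef]
      linear_combination (deriv g t 0) * (hnorm t) - (g t 0) * (hortho t)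
    have e1 : κ t * g t 0 = deriv g t 1 := by
      simp only [hκdef]
      linear_combination (deriv g t 1) * (hnorm t) - (g t 1) * (hortho t)
    have key : Complex.I * (κ t : ℂ) * z t
        = ((deriv g t 0 : ℝ) : ℂ) + ((deriv g t 1 : ℝ) : ℂ) * Complex.I := by
      rw [hzdef, ← e0, ← e1]
      push_cast
      ring_nf
      rw [Complex.I_sq]
      ring
    rw [show (Complex.I * ↑(κ t) * z t) = _ from key]
    exact h
  have hzne : ∀ t, z t ≠ 0 := by
    intro t h
    rw [hzdef] at h
    simp only [Complex.ext_iff, Complex.add_re, Complex.ofReal_re, Complex.mul_re,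
      Complex.ofReal_im, Complex.I_re, Complex.I_im, Complex.add_im, Complex.mul_im,
      Complex.zero_re, Complex.zero_im] at h
    obtain ⟨h0, h1⟩ := h
    have := hnorm t
    nlinarith [this, h0, h1]
  -- antiderivative of κ
  set Θ : ℝ → ℝ := fun t => ∫ s in (0:ℝ)..t, κ s with hΘdef
  have hΘ : ∀ t, HasDerivAt Θ (κ t) t := fun t =>
    (hκc.integral_hasStrictDerivAt 0 t).hasDerivAt
  set f : ℝ → ℂ := fun t => z t * Complex.exp (-(Θ t : ℂ) * Complex.I) with hfdef
  have hf : ∀ t, HasDerivAt f 0 t := by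
    intro t
    have he : HasDerivAt (fun s => Complex.exp (-(Θ s : ℂ) * Complex.I))
        (Complex.exp (-(Θ t : ℂ) * Complex.I) * (-(κ t : ℂ) * Complex.I)) t :=
      (((hΘ t).ofReal_comp).neg.mul_const Complex.I).cexp
    have : HasDerivAt f (Complex.I * κ t * z t * Complex.exp (-(Θ t : ℂ) * Complex.I)
        + z t * (Complex.exp (-(Θ t : ℂ) * Complex.I) * (-(κ t : ℂ) * Complex.I))) t :=
      (hz t).mul he
    convert this using 1
    ring
  have hfd : Differentiable ℝ f := fun t => (hf t).differentiableAt
  have hfc : f L = f 0 := is_const_of_deriv_eq_zero hfd (fun t => (hf t).deriv) L 0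
  -- periodicity of g
  have hgper : g L = g 0 := by
    have h1 : HasDerivAt (γ ∘ fun t => t + L) ((1:ℝ) • deriv γ (0 + L)) 0 :=
      HasDerivAt.scomp (0:ℝ) (hγd (0 + L)).hasDerivAt ((hasDerivAt_id (0:ℝ)).add_const L)
    have h2 : (γ ∘ fun t => t + L) = γ := funext hper
    rw [h2] at h1
    have h3 : deriv γ 0 = (1:ℝ) • deriv γ (0 + L) := h1.deriv
    rw [zero_add, one_smul] at h3
    exact h3.symm
  have hzper : z L = z 0 := by rw [hzdef]; simp [hgper]
  have hΘ0 : Θ 0 = 0 := by simp [hΘdef]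
  rw [hfdef] at hfc
  simp only [hΘ0, hzper, Complex.ofReal_zero, neg_zero, zero_mul, Complex.exp_zero,
    mul_one] at hfc
  have hexp : Complex.exp (-(Θ L : ℂ) * Complex.I) = 1 :=
    mul_left_cancel₀ (hzne 0) (by rw [mul_one]; exact hfc)
  obtain ⟨n, hn⟩ := Complex.exp_eq_one_iff.mp hexp
  have h' : (-(Θ L : ℂ)) * Complex.I = ((n : ℂ) * (2 * Real.pi)) * Complex.I := by
    rw [hn]; ring
  have h'' := mul_right_cancel₀ Complex.I_ne_zero h'
  have hreal : -(Θ L) = (n : ℝ) * (2 * Real.pi) := by exact_mod_cast h''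
  refine ⟨-n, ?_⟩
  have hfin : Θ L = 2 * Real.pi * ((-n : ℤ) : ℝ) := by push_cast; linarith
  exact hfin
end

section
/- (Hopf's Umlaufsatz.) Let L > 0 and let γ : ℝ → EuclideanSpace ℝ (Fin 2) be twice continuously differentiable, L-periodic, parametrized by arc length (‖γ'(t)‖ = 1 for all t), and simple, i.e. γ is injective on the interval [0, L). Then ∫_0^L κˢ(t) dt = 2π or ∫_0^L κˢ(t) dt = −2π, where κˢ(t) = γ₁''(t)·γ₀'(t) − γ₀''(t)·γ₁'(t) is the signed curvature of γ. -/
open Complex Set Real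

noncomputable section

namespace Hopf

/-- Uniqueness of lifts through `exp(· * I)` on preconnected sets. -/
lemma lift_eqOn {X : Type*} [TopologicalSpace X] {S : Set X} (hS : IsPreconnected S)
    {u v : X → ℝ} (hu : ContinuousOn u S) (hv : ContinuousOn v S)
    (h : ∀ x ∈ S, Complex.exp (u x * I) = Complex.exp (v x * I))
    {x₀ : X} (hx₀ : x₀ ∈ S) (h0 : u x₀ = v x₀) : EqOn u v S := by
  set d : X → ℝ := fun x => u x - v x with hd
  have hmul : ∀ x ∈ S, ∃ n : ℤ, d x = n * (2 * π) := by
    intro x hx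
    have : Complex.exp ((d x : ℝ) * I) = 1 := by
      have : ((d x : ℝ) : ℂ) * I = u x * I - v x * I := by
        push_cast [hd]; ring
      rw [this, Complex.exp_sub, h x hx, div_self (Complex.exp_ne_zero _)]
    rw [Complex.exp_eq_one_iff] at this
    obtain ⟨n, hn⟩ := this
    refine ⟨n, ?_⟩
    have hI : ((d x : ℝ) : ℂ) = n * (2 * π) := by
      rw [show (n:ℂ) * (2*π*I) = ((n:ℂ)*(2*π))*I by ring] at hn
      exact mul_right_cancel₀ I_ne_zero hn
    exact_mod_cast hI
  have hdc : ContinuousOn d S := hu.sub hv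
  have himg : IsPreconnected (d '' S) := hS.image d hdc
  intro x hx
  by_contra hne
  have hd0 : d x₀ = 0 := by simp [hd, h0]
  have hdx : d x ≠ 0 := by simpa [hd, sub_eq_zero] using hne
  have h0img : (0 : ℝ) ∈ d '' S := ⟨x₀, hx₀, hd0⟩
  have hximg : d x ∈ d '' S := ⟨x, hx, rfl⟩
  have hpi : π ∈ d '' S ∨ -π ∈ d '' S := by
    rcases lt_or_gt_of_ne hdx with hlt | hgt
    · right
      have h1 : d x ≤ -π := by
        obtain ⟨n, hn⟩ := hmul x hx
        have hn0 : n ≤ -1 := by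
          by_contra hc
          push_neg at hc
          have : 0 ≤ n := by omega
          have : (0:ℝ) ≤ d x := by
            rw [hn]; positivity
          linarith
        have : (n : ℝ) ≤ -1 := by exact_mod_cast hn0
        rw [hn]; nlinarith [Real.pi_pos]
      exact himg.Icc_subset hximg h0img ⟨h1.trans' (by linarith), by linarith [Real.pi_pos]⟩
    · left
      have h1 : 2 * π ≤ d x := by
        obtain ⟨n, hn⟩ := hmul x hx
        have hn0 : 1 ≤ n := by
          by_contra hc
          push_neg at hc
          have : n ≤ 0 := by omega
          have : d x ≤ 0 := by
            rw [hn]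
            have : (n:ℝ) ≤ 0 := by exact_mod_cast this
            nlinarith [Real.pi_pos]
          linarith
        have : (1:ℝ) ≤ n := by exact_mod_cast hn0
        rw [hn]; nlinarith [Real.pi_pos]
      refine himg.Icc_subset h0img hximg ⟨by positivity, by linarith [Real.pi_pos]⟩
  rcases hpi with ⟨y, hy, hdy⟩ | ⟨y, hy, hdy⟩
  · obtain ⟨n, hn⟩ := hmul y hy
    rw [hdy] at hn
    have : (1 : ℝ) = 2 * n := by
      have h2 : π * 1 = π * (2 * n) := by linear_combination hn
      exact mul_left_cancel₀ Real.pi_ne_zero h2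
    have : (1 : ℤ) = 2 * n := by exact_mod_cast this
    omega
  · obtain ⟨n, hn⟩ := hmul y hy
    rw [hdy] at hn
    have : (-1 : ℝ) = 2 * n := by
      have h2 : π * (-1) = π * (2 * n) := by linear_combination hn
      exact mul_left_cancel₀ Real.pi_ne_zero h2
    have : (-1 : ℤ) = 2 * n := by exact_mod_cast this
    omega

/-- A continuous function whose sine stays nonnegative and which starts in `[0, π]`
stays in `[0, π]`. -/
lemma band_lemma {u : ℝ → ℝ} {a b : ℝ} (hab : a ≤ b) (hu : ContinuousOn u (Icc a b))
    (hs : ∀ x ∈ Icc a b, 0 ≤ Real.sin (u x)) (ha : u a ∈ Icc 0 π) : u b ∈ Icc 0 π := by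
  by_contra hc
  rw [mem_Icc, not_and_or] at hc
  push_neg at hc
  rcases hc with hlt | hgt
  · -- u b < 0
    set v := max (u b) (-(π/2)) with hv
    have hvmem : v ∈ Icc (u b) (u a) := by
      constructor
      · exact le_max_left _ _
      · have : v < 0 := by
          rw [hv, max_lt_iff]
          exact ⟨hlt, by linarith [Real.pi_pos]⟩
        linarith [ha.1]
    obtain ⟨x, hxmem, hxv⟩ := intermediate_value_Icc' hab hu hvmem
    have hneg : Real.sin v < 0 := by
      apply Real.sin_neg_of_neg_of_neg_pi_lt
      · rw [hv, max_lt_iff]; exact ⟨hlt, by linarith [Real.pi_pos]⟩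
      · rw [hv]; have := Real.pi_pos; simp only [lt_max_iff]; right; linarith
    rw [← hxv] at hneg
    exact absurd (hs x hxmem) (not_le.mpr hneg)
  · -- π < u b
    set v := min (u b) (3*π/2) with hv
    have hvmem : v ∈ Icc (u a) (u b) := by
      constructor
      · have : π < v := by
          rw [hv, lt_min_iff]
          exact ⟨hgt, by linarith [Real.pi_pos]⟩
        linarith [ha.2]
      · exact min_le_left _ _
    obtain ⟨x, hxmem, hxv⟩ := intermediate_value_Icc hab hu hvmem
    have hneg : Real.sin v < 0 := by
      have h1 : π < v := by
        rw [hv, lt_min_iff]; exact ⟨hgt, by linarith [Real.pi_pos]⟩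
      have h2 : v - π < π := by
        rw [hv]
        have := Real.pi_pos
        have : v ≤ 3*π/2 := min_le_right _ _
        linarith
      have := Real.sin_pos_of_pos_of_lt_pi (by linarith : 0 < v - π) h2
      have hsub : Real.sin (v - π) = -Real.sin v := Real.sin_sub_pi v
      linarith [hsub ▸ this]
    rw [← hxv] at hneg
    exact absurd (hs x hxmem) (not_le.mpr hneg)

/-- Existence of continuous lifts through `exp(· * I)` on compact convex sets. -/
lemma lift_exists {K : Set (ℝ × ℝ)} (hconv : Convex ℝ K) (hcomp : IsCompact K)
    {h : ℝ × ℝ → ℂ} (hcont : ContinuousOn h K) (hnorm : ∀ p ∈ K, ‖h p‖ = 1)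
    {p₀ : ℝ × ℝ} (hp₀ : p₀ ∈ K) :
    ∃ Θ : ℝ × ℝ → ℝ, ContinuousOn Θ K ∧ (∀ p ∈ K, Complex.exp (Θ p * I) = h p) ∧
      Θ p₀ = Complex.arg (h p₀) := by
  -- uniform continuity: find δ
  have hUC : UniformContinuousOn h K := hcomp.uniformContinuousOn_of_continuous hcont
  rw [Metric.uniformContinuousOn_iff] at hUC
  obtain ⟨δ, hδ0, hδ⟩ := hUC 1 one_pos
  -- boundedness
  obtain ⟨C, hC⟩ := Metric.isBounded_iff.mp hcomp.isBounded
  have hC0 : 0 ≤ C ∨ K = ∅ := by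
    rcases eq_empty_or_nonempty K with he | ⟨q, hq⟩
    · right; exact he
    · left; have := hC hq hq; simpa using this
  -- choose N
  obtain ⟨n, hn⟩ := exists_nat_gt (C / δ)
  set N : ℕ := n + 1 with hN
  have hN0 : 0 < (N : ℝ) := by positivity
  have hCN : C / N < δ := by
    rcases hC0 with hC0 | hKe
    · rw [div_lt_iff₀ hN0]
      have h1 : C / δ < N := by
        rw [hN]; push_cast; linarith
      rw [div_lt_iff₀ hδ0] at h1
      linarith
    · -- K empty: C arbitrary, but we can't conclude; handle separately below
      rw [hKe] at hp₀; exact absurd hp₀ (notMem_empty _)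
  -- the chain of points
  set c : ℝ × ℝ → ℕ → ℝ × ℝ := fun p k => p₀ + ((k : ℝ) / N) • (p - p₀) with hc
  have hcmem : ∀ p ∈ K, ∀ k ≤ N, c p k ∈ K := by
    intro p hp k hk
    have ht : (k : ℝ) / N ∈ Icc (0:ℝ) 1 := by
      constructor
      · positivity
      · rw [div_le_one hN0]; exact_mod_cast hk
    exact hconv.add_smul_sub_mem hp₀ hp ht
  have hc0 : ∀ p, c p 0 = p₀ := by intro p; simp [hc]
  have hcN : ∀ p, c p N = p := by
    intro p
    simp only [hc]
    rw [div_self (ne_of_gt hN0), one_smul]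
    abel
  have hcdist : ∀ p ∈ K, ∀ k, dist (c p (k+1)) (c p k) ≤ C / N := by
    intro p hp k
    have : c p (k+1) - c p k = ((1:ℝ) / N) • (p - p₀) := by
      simp only [hc]
      have hq : ((k+1 : ℕ) : ℝ)/(N:ℝ) = (k:ℝ)/N + 1/N := by push_cast; ring
      rw [hq, add_smul]
      abel
    rw [dist_eq_norm, this]
    rw [norm_smul]
    have hpd : ‖p - p₀‖ ≤ C := by
      rw [← dist_eq_norm]; exact hC hp hp₀
    have : ‖(1:ℝ)/N‖ = 1/N := by
      rw [Real.norm_eq_abs, abs_of_pos]; positivity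
    rw [this]
    calc 1/N * ‖p - p₀‖ ≤ 1/N * C := by
          apply mul_le_mul_of_nonneg_left hpd; positivity
      _ = C / N := by ring
  have hne : ∀ p ∈ K, h p ≠ 0 := by
    intro p hp
    intro hz
    have := hnorm p hp
    rw [hz] at this; simp at this
  -- ratio
  set r : ℝ × ℝ → ℕ → ℂ := fun p k => h (c p (k+1)) / h (c p k) with hr
  have hrre : ∀ p ∈ K, ∀ k, k + 1 ≤ N → 0 < (r p k).re := by
    intro p hp k hk
    have h1 : dist (h (c p (k+1))) (h (c p k)) < 1 := by
      apply hδ _ (hcmem p hp _ hk) _ (hcmem p hp _ (by omega))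
      exact lt_of_le_of_lt (hcdist p hp k) hCN
    have habs1 : ‖h (c p k)‖ = 1 := hnorm _ (hcmem p hp _ (by omega))
    have habs2 : ‖h (c p (k+1))‖ = 1 := hnorm _ (hcmem p hp _ hk)
    have hrabs : ‖r p k‖ = 1 := by
      rw [hr]; simp [norm_div, habs1, habs2]
    have hr1 : ‖r p k - 1‖ < 1 := by
      rw [hr]
      have hne0 : h (c p k) ≠ 0 := hne _ (hcmem p hp _ (by omega))
      have : h (c p (k+1)) / h (c p k) - 1 = (h (c p (k+1)) - h (c p k)) / h (c p k) := by
        field_simp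
      rw [this, norm_div, habs1, div_one]
      rw [Complex.dist_eq] at h1
      exact h1
    -- now conclude re > 0
    have e1 : Complex.normSq (r p k) = 1 := by
      rw [← Complex.sq_norm, hrabs]; norm_num
    have e2 : Complex.normSq (r p k - 1) < 1 := by
      rw [← Complex.sq_norm]
      nlinarith [norm_nonneg (r p k - 1)]
    rw [Complex.normSq_apply] at e1
    have e3 : (r p k - 1).re = (r p k).re - 1 := by simp
    have e4 : (r p k - 1).im = (r p k).im := by simp
    rw [Complex.normSq_apply, e3, e4] at e2
    nlinarith
  -- definition of Θ
  set Θ : ℝ × ℝ → ℝ := fun p => Complex.arg (h p₀) + ∑ k ∈ Finset.range N, Complex.arg (r p k)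
    with hΘ
  have hexp : ∀ p ∈ K, ∀ m, m ≤ N →
      Complex.exp ((Complex.arg (h p₀) + ∑ k ∈ Finset.range m, Complex.arg (r p k)) * I)
        = h (c p m) := by
    intro p hp m
    induction m with
    | zero =>
      intro _
      rw [hc0]
      have h2 := Complex.norm_mul_exp_arg_mul_I (h p₀)
      rw [hnorm p₀ hp₀] at h2
      push_cast
      simpa using h2
    | succ m ih =>
      intro hm
      have hmN : m ≤ N := by omega
      rw [Finset.sum_range_succ]
      have hsplit : ((Complex.arg (h p₀) : ℂ)
            + ((∑ k ∈ Finset.range m, Complex.arg (r p k) + Complex.arg (r p m) : ℝ) : ℂ)) * I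
          = ((Complex.arg (h p₀) : ℂ)
              + ((∑ k ∈ Finset.range m, Complex.arg (r p k) : ℝ) : ℂ)) * I
            + ((Complex.arg (r p m) : ℝ) : ℂ) * I := by
        push_cast; ring
      rw [hsplit, Complex.exp_add, ih hmN]
      have hrm : Complex.exp ((Complex.arg (r p m) : ℝ) * I) = r p m := by
        have habs : ‖r p m‖ = 1 := by
          rw [hr, norm_div, hnorm _ (hcmem p hp _ hm), hnorm _ (hcmem p hp _ hmN)]
          norm_num
        have h5 := Complex.norm_mul_exp_arg_mul_I (r p m)
        rw [habs] at h5
        simpa using h5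
      rw [hrm, hr]
      have hne0 : h (c p m) ≠ 0 := hne _ (hcmem p hp _ hmN)
      field_simp
  refine ⟨Θ, ?_, ?_, ?_⟩
  · -- continuity
    apply ContinuousOn.add continuousOn_const
    apply continuousOn_finset_sum
    intro k hk
    rw [Finset.mem_range] at hk
    have hck : Continuous fun p => c p k := by
      apply continuous_const.add
      exact (by fun_prop :
        Continuous fun p : ℝ × ℝ => ((k:ℝ)/N) • (p - p₀))
    have hck1 : Continuous fun p => c p (k+1) := by
      apply continuous_const.add
      exact (by fun_prop :
        Continuous fun p : ℝ × ℝ => (((k+1:ℕ):ℝ)/N) • (p - p₀))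
    have h1 : ContinuousOn (fun p => h (c p (k+1))) K :=
      hcont.comp hck1.continuousOn (fun p hp => hcmem p hp _ (by omega))
    have h2 : ContinuousOn (fun p => h (c p k)) K :=
      hcont.comp hck.continuousOn (fun p hp => hcmem p hp _ (by omega))
    have hrd : ContinuousOn (fun p => r p k) K := by
      exact h1.div h2 (fun p hp => hne _ (hcmem p hp _ (by omega)))
    intro p hp
    have hat : ContinuousAt Complex.arg (r p k) := by
      apply Complex.continuousAt_arg
      rw [Complex.mem_slitPlane_iff]
      left
      exact hrre p hp k (by omega)
    exact ContinuousAt.comp_continuousWithinAt (f := fun q : ℝ × ℝ => r q k)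
      (g := Complex.arg) hat (hrd p hp)
  · intro p hp
    have h3 := hexp p hp N le_rfl
    rw [hcN] at h3
    have h4 : ((Θ p : ℝ) : ℂ) = (Complex.arg (h p₀) : ℂ)
        + ((∑ k ∈ Finset.range N, Complex.arg (r p k) : ℝ) : ℂ) := by
      rw [hΘ]; push_cast; ring
    rw [h4]
    exact h3
  · rw [hΘ]
    have hcp : ∀ k', c p₀ k' = p₀ := by intro k'; simp [hc]
    have hone : ∀ k, r p₀ k = 1 := by
      intro k
      show h (c p₀ (k+1)) / h (c p₀ k) = 1
      rw [hcp, hcp, div_self (hne _ hp₀)]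
    simp [hone]

/-- The signed curvature data of a plane curve written as a complex-valued function. -/
def kappa (f : ℝ → ℂ) (t : ℝ) : ℝ := ((starRingEnd ℂ) (deriv f t) * deriv (deriv f) t).im

lemma smooth_facts {E : Type*} [NormedAddCommGroup E] [NormedSpace ℝ E]
    {f : ℝ → E} (hf : ContDiff ℝ 2 f) :
    Differentiable ℝ f ∧ Differentiable ℝ (deriv f) ∧ Continuous (deriv (deriv f)) := by
  have h2 : ContDiff ℝ ((1 : WithTop ℕ∞) + 1) f := by
    rw [show ((1 : WithTop ℕ∞) + 1) = 2 from by norm_num]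
    exact hf
  rw [contDiff_succ_iff_deriv] at h2
  obtain ⟨hd, -, h1⟩ := h2
  rw [contDiff_one_iff_deriv] at h1
  exact ⟨hd, h1.1, h1.2⟩

lemma kappa_continuous {f : ℝ → ℂ} (hf : ContDiff ℝ 2 f) : Continuous (kappa f) := by
  obtain ⟨hd, hd1, hc2⟩ := smooth_facts hf
  exact (Complex.continuous_im.comp
    (((Complex.continuous_conj.comp hd1.continuous)).mul hc2))

lemma deriv_periodic {f : ℝ → ℂ} {L : ℝ} (hper : Function.Periodic f L) :
    Function.Periodic (deriv f) L := by
  intro x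
  have h1 : deriv (fun t => f (t + L)) x = deriv f (x + L) := deriv_comp_add_const f L x
  rw [← h1]
  congr 1
  exact funext hper

lemma kappa_periodic {f : ℝ → ℂ} {L : ℝ} (hper : Function.Periodic f L) :
    Function.Periodic (kappa f) L := by
  intro x
  unfold kappa
  rw [deriv_periodic hper x, deriv_periodic (deriv_periodic hper) x]

/-- Two values of a periodic simple function agree exactly when the arguments differ
by a multiple of the period. -/
lemma eq_iff_period {f : ℝ → ℂ} {L : ℝ} (hL : 0 < L) (hper : Function.Periodic f L)
    (hinj : Set.InjOn f (Set.Ico 0 L)) {a b : ℝ} (hab : f a = f b) :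
    ∃ n : ℤ, b - a = n * L := by
  have ha' : toIcoMod hL 0 a ∈ Set.Ico 0 L := by simpa using toIcoMod_mem_Ico hL 0 a
  have hb' : toIcoMod hL 0 b ∈ Set.Ico 0 L := by simpa using toIcoMod_mem_Ico hL 0 b
  have hfa : f (toIcoMod hL 0 a) = f a := by
    rw [toIcoMod]; exact hper.sub_zsmul_eq _
  have hfb : f (toIcoMod hL 0 b) = f b := by
    rw [toIcoMod]; exact hper.sub_zsmul_eq _
  have heq : toIcoMod hL 0 a = toIcoMod hL 0 b := hinj ha' hb' (by rw [hfa, hfb, hab])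
  rw [toIcoMod, toIcoMod] at heq
  refine ⟨toIcoDiv hL 0 b - toIcoDiv hL 0 a, ?_⟩
  have : b - a = (toIcoDiv hL 0 b • L) - (toIcoDiv hL 0 a • L) := by linarith [heq]
  rw [this]
  push_cast [zsmul_eq_mul]
  ring

/-- Existence of a `C¹` angle function for a unit-speed curve. -/
lemma exists_theta {f : ℝ → ℂ} (hf : ContDiff ℝ 2 f) (hunit : ∀ t, ‖deriv f t‖ = 1) :
    ∃ θ : ℝ → ℝ, Continuous θ ∧ θ 0 = (deriv f 0).arg ∧
      (∀ t, Complex.exp ((θ t : ℝ) * I) = deriv f t) ∧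
      (∀ a b : ℝ, θ b - θ a = ∫ t in a..b, kappa f t) := by
  obtain ⟨hd, hd1, hc2⟩ := smooth_facts hf
  set f' := deriv f with hf'
  set f'' := deriv (deriv f) with hf''
  have habs : ∀ t, ‖f' t‖ = 1 := by
    intro t; exact hunit t
  have hκc : Continuous (kappa f) := kappa_continuous hf
  -- orthogonality
  have horth : ∀ t, ((starRingEnd ℂ) (f' t) * f'' t).re = 0 := by
    intro t
    have hre : HasDerivAt (fun s => (f' s).re) ((f'' t).re) t :=
      Complex.reCLM.hasFDerivAt.comp_hasDerivAt t ((hd1 t).hasDerivAt)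
    have him : HasDerivAt (fun s => (f' s).im) ((f'' t).im) t :=
      Complex.imCLM.hasFDerivAt.comp_hasDerivAt t ((hd1 t).hasDerivAt)
    have hsq : HasDerivAt (fun s => (f' s).re ^ 2 + (f' s).im ^ 2)
        (2 * (f' t).re * (f'' t).re + 2 * (f' t).im * (f'' t).im) t := by
      have h1 := (hre.pow 2).add (him.pow 2)
      exact h1.congr_deriv (by push_cast; ring)
    have hconst : (fun s => (f' s).re ^ 2 + (f' s).im ^ 2) = fun _ => (1:ℝ) := by
      funext s
      have := habs s
      have h2 : Complex.normSq (f' s) = 1 := by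
        rw [← Complex.sq_norm, this]; norm_num
      rw [Complex.normSq_apply] at h2
      nlinarith [h2]
    rw [hconst] at hsq
    have h0 := hsq.unique (hasDerivAt_const t (1:ℝ))
    simp only [Complex.mul_re, Complex.conj_re, Complex.conj_im]
    nlinarith [h0]
  -- f'' = f' * (κ * I)
  have hode : ∀ t, f'' t = f' t * ((kappa f t : ℝ) * I) := by
    intro t
    have h1 : (starRingEnd ℂ) (f' t) * f'' t = (kappa f t : ℝ) * I := by
      apply Complex.ext
      · rw [horth t]; simp
      · simp [kappa, hf', hf'']
    have h2 : f' t * ((starRingEnd ℂ) (f' t) * f'' t) = f'' t := by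
      rw [← mul_assoc, Complex.mul_conj]
      have : Complex.normSq (f' t) = 1 := by
        rw [← Complex.sq_norm, habs t]; norm_num
      rw [this]
      simp
    rw [← h1, h2]
  -- define θ
  set θ : ℝ → ℝ := fun t => (f' 0).arg + ∫ s in (0:ℝ)..t, kappa f s with hθ
  have hθd : ∀ t, HasDerivAt θ (kappa f t) t := by
    intro t
    exact (HasDerivAt.const_add _ ((hκc.integral_hasStrictDerivAt 0 t).hasDerivAt))
  have hθc : Continuous θ := by
    have : Differentiable ℝ θ := fun t => (hθd t).differentiableAt
    exact this.continuous
  have hθ0 : θ 0 = (f' 0).arg := by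
    simp [hθ]
  -- the lift property
  have hlift : ∀ t, Complex.exp ((θ t : ℝ) * I) = f' t := by
    have hw : ∀ t, HasDerivAt (fun s => f' s * Complex.exp (-(θ s : ℂ) * I)) 0 t := by
      intro t
      have h1 : HasDerivAt f' (f'' t) t := (hd1 t).hasDerivAt
      have hθC : HasDerivAt (fun s => ((θ s : ℝ) : ℂ)) ((kappa f t : ℝ) : ℂ) t :=
        Complex.ofRealCLM.hasFDerivAt.comp_hasDerivAt t (hθd t)
      have h2 : HasDerivAt (fun s => -(θ s : ℂ) * I) (-(kappa f t : ℝ) * I) t := by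
        exact (hθC.neg).mul_const I
      have h3 : HasDerivAt (fun s => Complex.exp (-(θ s : ℂ) * I))
          (Complex.exp (-(θ t : ℂ) * I) * (-(kappa f t : ℝ) * I)) t := h2.cexp
      have h4 := h1.mul h3
      exact h4.congr_deriv (by rw [hode t]; ring)
    have hconst : ∀ t, f' t * Complex.exp (-(θ t : ℂ) * I)
        = f' 0 * Complex.exp (-(θ 0 : ℂ) * I) := by
      intro t
      exact is_const_of_deriv_eq_zero (fun s => (hw s).differentiableAt)
        (fun s => (hw s).deriv) t 0
    have hw0 : f' 0 * Complex.exp (-(θ 0 : ℂ) * I) = 1 := by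
      rw [hθ0]
      have h5 := Complex.norm_mul_exp_arg_mul_I (f' 0)
      rw [habs 0] at h5
      simp only [Complex.ofReal_one, one_mul] at h5
      rw [neg_mul, Complex.exp_neg, h5]
      rw [mul_inv_cancel₀]
      intro h0
      have h8 := habs 0
      rw [h0] at h8
      simp at h8
    intro t
    have h6 := (hconst t).trans hw0
    have h7 : Complex.exp (-(θ t : ℂ) * I) * Complex.exp ((θ t : ℂ) * I) = 1 := by
      rw [← Complex.exp_add]; ring_nf; exact Complex.exp_zero
    calc Complex.exp ((θ t : ℝ) * I)
        = (f' t * Complex.exp (-(θ t : ℂ) * I)) * Complex.exp ((θ t : ℂ) * I) := by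
          rw [h6]; ring
      _ = f' t * (Complex.exp (-(θ t : ℂ) * I) * Complex.exp ((θ t : ℂ) * I)) := by ring
      _ = f' t := by rw [h7, mul_one]
  refine ⟨θ, hθc, hθ0, hlift, ?_⟩
  intro a b
  have hInt : ∀ u v : ℝ, IntervalIntegrable (kappa f) MeasureTheory.volume u v :=
    fun u v => hκc.intervalIntegrable u v
  have := intervalIntegral.integral_add_adjacent_intervals (hInt 0 a) (hInt a b)
  simp only [hθ]
  linarith [this]

-- helpers
lemma div_real_im (z : ℂ) (r : ℝ) : (z / (r : ℂ)).im = z.im / r := by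
  by_cases hr : r = 0
  · simp [hr]
  · rw [div_eq_mul_inv, ← Complex.ofReal_inv, Complex.mul_im]
    simp only [Complex.ofReal_inv, Complex.inv_re, Complex.inv_im, Complex.ofReal_re,
      Complex.ofReal_im]
    field_simp
    rw [Complex.normSq_ofReal]; ring

lemma div_real_re (z : ℂ) (r : ℝ) : (z / (r : ℂ)).re = z.re / r := by
  by_cases hr : r = 0
  · simp [hr]
  · rw [div_eq_mul_inv, ← Complex.ofReal_inv, Complex.mul_re]
    simp only [Complex.ofReal_inv, Complex.inv_re, Complex.inv_im, Complex.ofReal_re,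
      Complex.ofReal_im]
    field_simp
    rw [Complex.normSq_ofReal]; ring

lemma unit_abs {z : ℂ} (hz : z ≠ 0) : ‖z / (‖z‖ : ℂ)‖ = 1 := by
  rw [norm_div, Complex.norm_real, Real.norm_eq_abs, abs_of_pos (norm_pos_iff.mpr hz), div_self]
  exact ne_of_gt (norm_pos_iff.mpr hz)

lemma smul_div_abs (r : ℝ) (hr : 0 < r) (z : ℂ) :
    (r • z) / (‖r • z‖ : ℂ) = z / (‖z‖ : ℂ) := by
  by_cases hz : z = 0
  · simp [hz]
  · rw [Complex.real_smul, norm_mul, Complex.norm_real, Real.norm_eq_abs, abs_of_pos hr]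
    push_cast
    rw [div_eq_div_iff]
    · ring
    · intro h
      rw [mul_eq_zero] at h
      rcases h with h | h
      · exact (ne_of_gt hr) (by exact_mod_cast h)
      · exact (norm_ne_zero_iff.mpr hz) (by exact_mod_cast h)
    · exact Complex.ofReal_ne_zero.mpr (norm_ne_zero_iff.mpr hz)

set_option maxHeartbeats 1000000 in
lemma core {L : ℝ} (hL : 0 < L) {f : ℝ → ℂ} (hf : ContDiff ℝ 2 f)
    (hper : Function.Periodic f L) (hunit : ∀ t, ‖deriv f t‖ = 1)
    (hinj : Set.InjOn f (Set.Ico 0 L)) (hmin : ∀ t, (f 0).im ≤ (f t).im)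
    (hdir : deriv f 0 = 1) :
    (∫ t in (0:ℝ)..L, kappa f t) = 2 * π := by
  obtain ⟨hd, hd1, hc2⟩ := smooth_facts hf
  obtain ⟨θ, hθc, hθ0, hθlift, hθint⟩ := exists_theta hf hunit
  have habs : ∀ t, ‖deriv f t‖ = 1 := fun t => by
    exact hunit t
  have hf'ne : ∀ t, deriv f t ≠ 0 := by
    intro t h0
    have := habs t; rw [h0] at this; simp at this
  have hfL0 : f L = f 0 := by simpa using hper 0
  have hf'L0 : deriv f L = deriv f 0 := by simpa using deriv_periodic hper 0
  -- the averaged secant map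
  set g : ℝ × ℝ → ℂ := fun p => ∫ u in (0:ℝ)..1, deriv f (p.1 + u * (p.2 - p.1)) with hg
  have gcont : Continuous g := by
    have hunc : Continuous (Function.uncurry
        (fun (p : ℝ × ℝ) (u : ℝ) => deriv f (p.1 + u * (p.2 - p.1)))) := by
      have : Continuous (deriv f) := hd1.continuous
      fun_prop
    exact intervalIntegral.continuous_parametric_intervalIntegral_of_continuous'
      (μ := MeasureTheory.volume) hunc 0 1
  have gdiag : ∀ t, g (t, t) = deriv f t := by
    intro t
    simp only [hg, sub_self, mul_zero, add_zero]
    simp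
  have gval : ∀ s t : ℝ, (t - s) • g (s, t) = f t - f s := by
    intro s t
    have h1 : ∀ u : ℝ, HasDerivAt (fun v => f (s + v * (t - s)))
        ((t - s) • deriv f (s + u * (t - s))) u := by
      intro u
      have hψ : HasDerivAt (fun v : ℝ => s + v * (t - s)) (t - s) u := by
        simpa using ((hasDerivAt_id u).mul_const (t - s)).const_add s
      exact ((hd _).hasDerivAt).scomp u hψ
    have h2 : ∫ u in (0:ℝ)..1, (t - s) • deriv f (s + u * (t - s))
        = f (s + 1 * (t - s)) - f (s + 0 * (t - s)) := by
      refine intervalIntegral.integral_eq_sub_of_hasDerivAt (fun u _ => h1 u) ?_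
      apply Continuous.intervalIntegrable
      exact (by have := hd1.continuous; fun_prop : Continuous fun u : ℝ =>
        (t - s) • deriv f (s + u * (t - s)))
    have h3 : ∫ u in (0:ℝ)..1, (t - s) • deriv f (s + u * (t - s))
        = (t - s) • ∫ u in (0:ℝ)..1, deriv f (s + u * (t - s)) :=
      intervalIntegral.integral_smul (t - s) _
    rw [← h3, h2]
    norm_num
  have gsec : ∀ s t : ℝ, s < t → g (s, t) = (t - s)⁻¹ • (f t - f s) := by
    intro s t h
    have h0 := gval s t
    have hne : t - s ≠ 0 := ne_of_gt (sub_pos.mpr h)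
    rw [← h0, smul_smul, inv_mul_cancel₀ hne, one_smul]
  -- nonvanishing of secants
  have hfne : ∀ s t : ℝ, 0 < t - s → t - s < L → f t ≠ f s := by
    intro s t h1 h2 heq
    obtain ⟨n, hn⟩ := eq_iff_period hL hper hinj heq
    rcases le_or_gt 0 n with h | h
    · have : (0:ℝ) ≤ n := by exact_mod_cast h
      nlinarith
    · have hn1 : n ≤ -1 := by omega
      have : (n:ℝ) ≤ -1 := by exact_mod_cast hn1
      nlinarith
  -- the two triangles
  set T1 : Set (ℝ×ℝ) := {p | 0 ≤ p.1 ∧ p.1 ≤ p.2 ∧ p.2 ≤ L ∧ p.2 - p.1 ≤ 3*L/4} with hT1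
  set T2 : Set (ℝ×ℝ) := {p | 0 ≤ p.1 ∧ p.1 ≤ p.2 ∧ p.2 ≤ L ∧ L/2 ≤ p.2 - p.1} with hT2
  have hconv1 : Convex ℝ T1 := by
    intro p hp q hq a b ha hb hab
    simp only [hT1, mem_setOf_eq, Prod.fst_add, Prod.snd_add, Prod.smul_fst, Prod.smul_snd,
      smul_eq_mul] at hp hq ⊢
    refine ⟨?_, ?_, ?_, ?_⟩ <;> nlinarith [hp.1, hp.2.1, hp.2.2.1, hp.2.2.2,
      hq.1, hq.2.1, hq.2.2.1, hq.2.2.2]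
  have hconv2 : Convex ℝ T2 := by
    intro p hp q hq a b ha hb hab
    simp only [hT2, mem_setOf_eq, Prod.fst_add, Prod.snd_add, Prod.smul_fst, Prod.smul_snd,
      smul_eq_mul] at hp hq ⊢
    refine ⟨?_, ?_, ?_, ?_⟩ <;> nlinarith [hp.1, hp.2.1, hp.2.2.1, hp.2.2.2,
      hq.1, hq.2.1, hq.2.2.1, hq.2.2.2]
  have hclosed1 : IsClosed T1 := by
    have e1 : IsClosed {p : ℝ×ℝ | 0 ≤ p.1} := isClosed_le continuous_const continuous_fst
    have e2 : IsClosed {p : ℝ×ℝ | p.1 ≤ p.2} := isClosed_le continuous_fst continuous_snd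
    have e3 : IsClosed {p : ℝ×ℝ | p.2 ≤ L} := isClosed_le continuous_snd continuous_const
    have e4 : IsClosed {p : ℝ×ℝ | p.2 - p.1 ≤ 3*L/4} :=
      isClosed_le (continuous_snd.sub continuous_fst) continuous_const
    have : T1 = {p : ℝ×ℝ | 0 ≤ p.1} ∩ ({p | p.1 ≤ p.2} ∩ ({p | p.2 ≤ L}
        ∩ {p | p.2 - p.1 ≤ 3*L/4})) := by
      ext p; simp [hT1, and_assoc]
    rw [this]
    exact e1.inter (e2.inter (e3.inter e4))
  have hclosed2 : IsClosed T2 := by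
    have e1 : IsClosed {p : ℝ×ℝ | 0 ≤ p.1} := isClosed_le continuous_const continuous_fst
    have e2 : IsClosed {p : ℝ×ℝ | p.1 ≤ p.2} := isClosed_le continuous_fst continuous_snd
    have e3 : IsClosed {p : ℝ×ℝ | p.2 ≤ L} := isClosed_le continuous_snd continuous_const
    have e4 : IsClosed {p : ℝ×ℝ | L/2 ≤ p.2 - p.1} :=
      isClosed_le continuous_const (continuous_snd.sub continuous_fst)
    have : T2 = {p : ℝ×ℝ | 0 ≤ p.1} ∩ ({p | p.1 ≤ p.2} ∩ ({p | p.2 ≤ L}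
        ∩ {p | L/2 ≤ p.2 - p.1})) := by
      ext p; simp [hT2, and_assoc]
    rw [this]
    exact e1.inter (e2.inter (e3.inter e4))
  have hsub : ∀ p : ℝ×ℝ, (0 ≤ p.1 ∧ p.1 ≤ p.2 ∧ p.2 ≤ L) →
      p ∈ (Icc (0:ℝ) L) ×ˢ (Icc (0:ℝ) L) := by
    intro p hp
    exact ⟨⟨hp.1, hp.2.1.trans hp.2.2⟩, ⟨hp.1.trans hp.2.1, hp.2.2⟩⟩
  have hcomp1 : IsCompact T1 :=
    (isCompact_Icc.prod isCompact_Icc).of_isClosed_subset hclosed1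
      (fun p hp => hsub p ⟨hp.1, hp.2.1, hp.2.2.1⟩)
  have hcomp2 : IsCompact T2 :=
    (isCompact_Icc.prod isCompact_Icc).of_isClosed_subset hclosed2
      (fun p hp => hsub p ⟨hp.1, hp.2.1, hp.2.2.1⟩)
  -- nonvanishing on the triangles
  have hg1ne : ∀ p ∈ T1, g p ≠ 0 := by
    rintro ⟨s', t'⟩ hp
    obtain ⟨h1, h2, h3, h4⟩ := hp
    simp only at h1 h2 h3 h4
    rcases eq_or_lt_of_le h2 with heq | hlt
    · subst heq
      rw [gdiag]
      exact hf'ne s'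
    · intro h0
      have hgv := gval s' t'
      rw [h0, smul_zero] at hgv
      refine hfne s' t' (by linarith) (by linarith) ?_
      exact sub_eq_zero.mp hgv.symm
  have hg2ne : ∀ p ∈ T2, g (p.2 - L, p.1) ≠ 0 := by
    rintro ⟨s', t'⟩ hp
    obtain ⟨h1, h2, h3, h4⟩ := hp
    simp only at h1 h2 h3 h4 ⊢
    rcases eq_or_lt_of_le (show t' - L ≤ s' by linarith) with heq | hlt
    · rw [heq, gdiag]
      exact hf'ne _
    · intro h0
      have hgv := gval (t' - L) s'
      rw [h0, smul_zero] at hgv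
      have hfp : f (t' - L) = f t' := hper.sub_eq t'
      rw [hfp] at hgv
      have h5 : f s' = f t' := sub_eq_zero.mp hgv.symm
      exact hfne s' t' (by linarith) (by linarith) h5.symm
  -- the secant direction maps
  set A : ℝ×ℝ → ℂ := fun p => g p / (‖g p‖ : ℂ) with hA
  set B : ℝ×ℝ → ℂ := fun p => -(g (p.2 - L, p.1) / (‖g (p.2 - L, p.1)‖ : ℂ))
    with hB
  have hAdiag : ∀ t, A (t, t) = deriv f t := by
    intro t
    have h1 : g (t, t) = deriv f t := gdiag t
    simp only [hA, h1, habs t]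
    norm_num
  have hAsec : ∀ s t : ℝ, s < t → A (s, t) = (f t - f s) / (‖f t - f s‖ : ℂ) := by
    intro s t h
    simp only [hA]
    rw [gsec s t h]
    exact smul_div_abs _ (inv_pos.mpr (sub_pos.mpr h)) _
  have hBsec : ∀ s t : ℝ, t - L < s →
      B (s, t) = -((f s - f t) / (‖f s - f t‖ : ℂ)) := by
    intro s t h
    simp only [hB]
    rw [gsec (t - L) s h, hper.sub_eq t]
    rw [smul_div_abs _ (inv_pos.mpr (by linarith : (0:ℝ) < s - (t - L))) _]
  have hBcorner : B (0, L) = -1 := by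
    simp only [hB]
    rw [show ((L:ℝ) - L, (0:ℝ)) = ((0:ℝ), (0:ℝ)) from by norm_num, gdiag, hdir]
    norm_num
  -- A = B on the overlap
  have hABovl : ∀ p ∈ T1 ∩ T2, A p = B p := by
    rintro ⟨s', t'⟩ ⟨⟨h1, h2, h3, h4⟩, ⟨-, -, -, h8⟩⟩
    simp only at h1 h2 h3 h4 h8
    have hlt : s' < t' := by linarith
    have hlt2 : t' - L < s' := by linarith
    rw [hAsec s' t' hlt, hBsec s' t' hlt2]
    rw [show f s' - f t' = -(f t' - f s') by ring, norm_neg]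
    rw [neg_div, neg_neg]
  -- continuity
  have habsg : Continuous fun p => ((‖g p‖ : ℝ) : ℂ) :=
    Complex.continuous_ofReal.comp (continuous_norm.comp gcont)
  have hAcont : ContinuousOn A T1 := by
    apply ContinuousOn.div gcont.continuousOn habsg.continuousOn
    intro p hp
    simpa using norm_ne_zero_iff.mpr (hg1ne p hp)
  have hswap : Continuous fun p : ℝ×ℝ => ((p.2 - L, p.1) : ℝ×ℝ) :=
    (continuous_snd.sub continuous_const).prodMk continuous_fst
  have hBcont : ContinuousOn B T2 := by
    apply ContinuousOn.neg
    apply ContinuousOn.div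
    · exact (gcont.comp hswap).continuousOn
    · exact (habsg.comp hswap).continuousOn
    · intro p hp
      simpa using norm_ne_zero_iff.mpr (hg2ne p hp)
  have hAabs : ∀ p ∈ T1, ‖A p‖ = 1 := fun p hp => unit_abs (hg1ne p hp)
  have hBabs : ∀ p ∈ T2, ‖B p‖ = 1 := by
    intro p hp
    simp only [hB, norm_neg]
    exact unit_abs (hg2ne p hp)
  -- the lifts
  have hbase1 : ((0:ℝ), (0:ℝ)) ∈ T1 := by
    show (0:ℝ) ≤ 0 ∧ (0:ℝ) ≤ 0 ∧ (0:ℝ) ≤ L ∧ (0:ℝ) - 0 ≤ 3*L/4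
    refine ⟨le_refl _, le_refl _, le_of_lt hL, by linarith⟩
  obtain ⟨Θ₁, hΘ₁c, hΘ₁lift, hΘ₁base⟩ := lift_exists hconv1 hcomp1 hAcont hAabs hbase1
  have hq0mem1 : ((0:ℝ), L/2) ∈ T1 := by
    show (0:ℝ) ≤ 0 ∧ (0:ℝ) ≤ L/2 ∧ L/2 ≤ L ∧ L/2 - 0 ≤ 3*L/4
    refine ⟨le_refl _, by linarith, by linarith, by linarith⟩
  have hq0mem2 : ((0:ℝ), L/2) ∈ T2 := by
    show (0:ℝ) ≤ 0 ∧ (0:ℝ) ≤ L/2 ∧ L/2 ≤ L ∧ L/2 ≤ L/2 - 0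
    refine ⟨le_refl _, by linarith, by linarith, by linarith⟩
  obtain ⟨Θ₂, hΘ₂c, hΘ₂lift, hΘ₂base⟩ := lift_exists hconv2 hcomp2 hBcont hBabs hq0mem2
  have hΘ₁00 : Θ₁ ((0:ℝ), (0:ℝ)) = 0 := by
    rw [hΘ₁base, hAdiag 0, hdir, Complex.arg_one]
  -- normalized second lift
  set c : ℝ := Θ₁ ((0:ℝ), L/2) - Θ₂ ((0:ℝ), L/2) with hc
  set Θ₂' : ℝ×ℝ → ℝ := fun p => Θ₂ p + c with hΘ₂'
  have hexpc : Complex.exp ((c : ℝ) * I) = 1 := by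
    have h1 : Complex.exp ((Θ₁ ((0:ℝ), L/2) : ℝ) * I) = A ((0:ℝ), L/2) :=
      hΘ₁lift _ hq0mem1
    have h2 : Complex.exp ((Θ₂ ((0:ℝ), L/2) : ℝ) * I) = B ((0:ℝ), L/2) :=
      hΘ₂lift _ hq0mem2
    have h3 : A ((0:ℝ), L/2) = B ((0:ℝ), L/2) := hABovl _ ⟨hq0mem1, hq0mem2⟩
    have h4 : ((c : ℝ) : ℂ) * I = (Θ₁ ((0:ℝ), L/2) : ℝ) * I - (Θ₂ ((0:ℝ), L/2) : ℝ) * I := by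
      rw [hc]; push_cast; ring
    rw [h4, Complex.exp_sub, h1, h2, h3, div_self]
    intro h0
    have := hBabs _ hq0mem2
    rw [h0] at this; simp at this
  have hΘ₂'lift : ∀ p ∈ T2, Complex.exp ((Θ₂' p : ℝ) * I) = B p := by
    intro p hp
    have h4 : ((Θ₂' p : ℝ) : ℂ) * I = (Θ₂ p : ℝ) * I + (c : ℝ) * I := by
      rw [hΘ₂']; push_cast; ring
    rw [h4, Complex.exp_add, hΘ₂lift p hp, hexpc, mul_one]
  have hΘ₂'c : ContinuousOn Θ₂' T2 := hΘ₂c.add continuousOn_const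
  -- agreement on the overlap
  have hovl : EqOn Θ₁ Θ₂' (T1 ∩ T2) := by
    apply lift_eqOn (hconv1.inter hconv2).isPreconnected
      (hΘ₁c.mono inter_subset_left) (hΘ₂'c.mono inter_subset_right)
      (fun p hp => by rw [hΘ₁lift p hp.1, hΘ₂'lift p hp.2, hABovl p hp])
      (⟨hq0mem1, hq0mem2⟩ : ((0:ℝ), L/2) ∈ T1 ∩ T2)
    simp only [hΘ₂', hc]; ring
  -- the diagonal equals θ
  have hdiagmem : ∀ t ∈ Icc (0:ℝ) L, ((t, t) : ℝ×ℝ) ∈ T1 := by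
    intro t ht
    show 0 ≤ t ∧ t ≤ t ∧ t ≤ L ∧ t - t ≤ 3*L/4
    refine ⟨ht.1, le_refl _, ht.2, by linarith⟩
  have hdiag : EqOn (fun t => Θ₁ (t, t)) θ (Icc (0:ℝ) L) := by
    have hdc : ContinuousOn (fun t : ℝ => Θ₁ (t, t)) (Icc (0:ℝ) L) :=
      ContinuousOn.comp hΘ₁c (Continuous.continuousOn
        (by fun_prop : Continuous fun t : ℝ => ((t, t) : ℝ × ℝ))) hdiagmem
    have hde : ∀ t ∈ Icc (0:ℝ) L, Complex.exp (((fun t : ℝ => Θ₁ (t, t)) t : ℝ) * I)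
        = Complex.exp ((θ t : ℝ) * I) := by
      intro t ht
      show Complex.exp ((Θ₁ (t, t) : ℝ) * I) = Complex.exp ((θ t : ℝ) * I)
      rw [hΘ₁lift _ (hdiagmem t ht), hAdiag t, hθlift t]
    have hd0 : (fun t : ℝ => Θ₁ (t, t)) 0 = θ 0 := by
      show Θ₁ (0, 0) = θ 0
      rw [hΘ₁00, hθ0, hdir, Complex.arg_one]
    exact lift_eqOn isPreconnected_Icc hdc hθc.continuousOn hde
      (⟨le_refl _, le_of_lt hL⟩ : (0:ℝ) ∈ Icc (0:ℝ) L) hd0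
  -- Stage 1 : left edge, lower part
  have hmem1 : ∀ x ∈ Icc (0:ℝ) (L/2), ((0:ℝ), x) ∈ T1 := by
    intro x hx
    show (0:ℝ) ≤ 0 ∧ (0:ℝ) ≤ x ∧ x ≤ L ∧ x - 0 ≤ 3*L/4
    refine ⟨le_refl _, hx.1, by linarith [hx.2], by linarith [hx.2]⟩
  have hstage1 : Θ₁ ((0:ℝ), L/2) ∈ Icc 0 π := by
    have hcont : ContinuousOn (fun x : ℝ => Θ₁ ((0:ℝ), x)) (Icc (0:ℝ) (L/2)) :=
      ContinuousOn.comp hΘ₁c (Continuous.continuousOn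
        (by fun_prop : Continuous fun x : ℝ => (((0:ℝ), x) : ℝ × ℝ))) hmem1
    have hsin : ∀ x ∈ Icc (0:ℝ) (L/2), 0 ≤ Real.sin ((fun x : ℝ => Θ₁ ((0:ℝ), x)) x) := by
      intro x hx
      show 0 ≤ Real.sin (Θ₁ ((0:ℝ), x))
      have hlift := hΘ₁lift _ (hmem1 x hx)
      have himA : 0 ≤ (A ((0:ℝ), x)).im := by
        rcases eq_or_lt_of_le hx.1 with heq | hlt
        · rw [← heq, hAdiag 0, hdir]
          norm_num
        · rw [hAsec 0 x hlt, div_real_im]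
          apply div_nonneg _ (norm_nonneg _)
          simp only [Complex.sub_im]
          linarith [hmin x]
      have hs : Real.sin (Θ₁ ((0:ℝ), x)) = (A ((0:ℝ), x)).im := by
        rw [← hlift, Complex.exp_ofReal_mul_I_im]
      rw [hs]
      exact himA
    have hstart : (fun x : ℝ => Θ₁ ((0:ℝ), x)) 0 ∈ Icc 0 π := by
      show Θ₁ ((0:ℝ), (0:ℝ)) ∈ Icc 0 π
      rw [hΘ₁00]
      exact ⟨le_refl _, le_of_lt Real.pi_pos⟩
    exact band_lemma (u := fun x : ℝ => Θ₁ ((0:ℝ), x)) (a := 0) (b := L/2) (by linarith) hcont hsin hstart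
  -- Stage 2 : left edge, upper part
  have hmem2 : ∀ x ∈ Icc (L/2) L, ((0:ℝ), x) ∈ T2 := by
    intro x hx
    show (0:ℝ) ≤ 0 ∧ (0:ℝ) ≤ x ∧ x ≤ L ∧ L/2 ≤ x - 0
    refine ⟨le_refl _, by linarith [hx.1], hx.2, by linarith [hx.1]⟩
  have hstage2 : Θ₂' ((0:ℝ), L) = π := by
    have hbandres : Θ₂' ((0:ℝ), L) ∈ Icc 0 π := by
      have hcont : ContinuousOn (fun x : ℝ => Θ₂' ((0:ℝ), x)) (Icc (L/2) L) :=
        ContinuousOn.comp hΘ₂'c (Continuous.continuousOn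
          (by fun_prop : Continuous fun x : ℝ => (((0:ℝ), x) : ℝ × ℝ))) hmem2
      have hsin : ∀ x ∈ Icc (L/2) L, 0 ≤ Real.sin ((fun x : ℝ => Θ₂' ((0:ℝ), x)) x) := by
        intro x hx
        show 0 ≤ Real.sin (Θ₂' ((0:ℝ), x))
        have hlift := hΘ₂'lift _ (hmem2 x hx)
        have himB : 0 ≤ (B ((0:ℝ), x)).im := by
          rcases eq_or_lt_of_le hx.2 with heq | hlt
          · rw [heq, hBcorner]
            norm_num
          · rw [hBsec 0 x (by linarith), Complex.neg_im, div_real_im]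
            rw [neg_nonneg]
            apply div_nonpos_of_nonpos_of_nonneg _ (norm_nonneg _)
            simp only [Complex.sub_im]
            linarith [hmin x]
        have hs : Real.sin (Θ₂' ((0:ℝ), x)) = (B ((0:ℝ), x)).im := by
          rw [← hlift, Complex.exp_ofReal_mul_I_im]
        rw [hs]
        exact himB
      have hstart : (fun x : ℝ => Θ₂' ((0:ℝ), x)) (L/2) ∈ Icc 0 π := by
        show Θ₂' ((0:ℝ), L/2) ∈ Icc 0 π
        have hq := hovl ⟨hq0mem1, hq0mem2⟩
        rw [← hq]
        exact hstage1
      exact band_lemma (u := fun x : ℝ => Θ₂' ((0:ℝ), x)) (a := L/2) (b := L) (by linarith) hcont hsin hstart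
    have hcos : Real.cos (Θ₂' ((0:ℝ), L)) = -1 := by
      have hlift := hΘ₂'lift ((0:ℝ), L) (hmem2 L ⟨by linarith, le_refl _⟩)
      rw [hBcorner] at hlift
      have := congrArg Complex.re hlift
      rw [Complex.exp_ofReal_mul_I_re] at this
      simpa using this
    have : Real.cos (Θ₂' ((0:ℝ), L)) = Real.cos π := by rw [hcos, Real.cos_pi]
    exact Real.injOn_cos hbandres ⟨le_of_lt Real.pi_pos, le_refl _⟩ this
  -- Stage 3 : top edge, left part
  have hmem3 : ∀ s ∈ Icc (0:ℝ) (L/4), ((s, L) : ℝ×ℝ) ∈ T2 := by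
    intro s hs
    show 0 ≤ s ∧ s ≤ L ∧ L ≤ L ∧ L/2 ≤ L - s
    refine ⟨hs.1, by linarith [hs.2], le_refl _, by linarith [hs.2]⟩
  have hstage3 : 2*π - Θ₂' (L/4, L) ∈ Icc 0 π := by
    have hcont : ContinuousOn (fun s : ℝ => 2*π - Θ₂' (s, L)) (Icc (0:ℝ) (L/4)) := by
      apply ContinuousOn.sub continuousOn_const
      exact ContinuousOn.comp hΘ₂'c (Continuous.continuousOn
        (by fun_prop : Continuous fun s : ℝ => ((s, L) : ℝ × ℝ))) hmem3
    have hsin : ∀ s ∈ Icc (0:ℝ) (L/4),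
        0 ≤ Real.sin ((fun s : ℝ => 2*π - Θ₂' (s, L)) s) := by
      intro s hs
      show 0 ≤ Real.sin (2*π - Θ₂' (s, L))
      have hlift := hΘ₂'lift _ (hmem3 s hs)
      have himB : (B ((s:ℝ), L)).im ≤ 0 := by
        rcases eq_or_lt_of_le hs.1 with heq | hlt
        · rw [← heq, hBcorner]
          norm_num
        · rw [hBsec s L (by linarith), Complex.neg_im, div_real_im]
          rw [neg_nonpos]
          apply div_nonneg _ (norm_nonneg _)
          simp only [Complex.sub_im]
          rw [hfL0]
          linarith [hmin s]
      have hsineq : Real.sin (Θ₂' ((s:ℝ), L)) = (B ((s:ℝ), L)).im := by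
        rw [← hlift, Complex.exp_ofReal_mul_I_im]
      have h2 : Real.sin (2*π - Θ₂' ((s:ℝ), L)) = -Real.sin (Θ₂' ((s:ℝ), L)) := by
        rw [Real.sin_sub]
        simp [Real.sin_two_pi, Real.cos_two_pi]
      rw [h2, hsineq]
      linarith
    have hstart : (fun s : ℝ => 2*π - Θ₂' (s, L)) 0 ∈ Icc 0 π := by
      show 2*π - Θ₂' ((0:ℝ), L) ∈ Icc 0 π
      rw [hstage2]
      constructor
      · linarith [Real.pi_pos]
      · linarith [Real.pi_pos]
    exact band_lemma (u := fun s : ℝ => 2*π - Θ₂' (s, L)) (a := 0) (b := L/4) (by linarith) hcont hsin hstart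
  -- Stage 4 : top edge, right part
  have hmem4 : ∀ s ∈ Icc (L/4) L, ((s, L) : ℝ×ℝ) ∈ T1 := by
    intro s hs
    show 0 ≤ s ∧ s ≤ L ∧ L ≤ L ∧ L - s ≤ 3*L/4
    refine ⟨by linarith [hs.1], hs.2, le_refl _, by linarith [hs.1]⟩
  have hstage4 : 2*π - Θ₁ (L, L) ∈ Icc 0 π := by
    have hcont : ContinuousOn (fun s : ℝ => 2*π - Θ₁ (s, L)) (Icc (L/4) L) := by
      apply ContinuousOn.sub continuousOn_const
      exact ContinuousOn.comp hΘ₁c (Continuous.continuousOn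
        (by fun_prop : Continuous fun s : ℝ => ((s, L) : ℝ × ℝ))) hmem4
    have hsin : ∀ s ∈ Icc (L/4) L,
        0 ≤ Real.sin ((fun s : ℝ => 2*π - Θ₁ (s, L)) s) := by
      intro s hs
      show 0 ≤ Real.sin (2*π - Θ₁ (s, L))
      have hlift := hΘ₁lift _ (hmem4 s hs)
      have himA : (A ((s:ℝ), L)).im ≤ 0 := by
        rcases eq_or_lt_of_le hs.2 with heq | hlt
        · rw [heq, hAdiag L, hf'L0, hdir]
          norm_num
        · rw [hAsec s L hlt, div_real_im]
          apply div_nonpos_of_nonpos_of_nonneg _ (norm_nonneg _)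
          simp only [Complex.sub_im]
          rw [hfL0]
          linarith [hmin s]
      have hsineq : Real.sin (Θ₁ ((s:ℝ), L)) = (A ((s:ℝ), L)).im := by
        rw [← hlift, Complex.exp_ofReal_mul_I_im]
      have h2 : Real.sin (2*π - Θ₁ ((s:ℝ), L)) = -Real.sin (Θ₁ ((s:ℝ), L)) := by
        rw [Real.sin_sub]
        simp [Real.sin_two_pi, Real.cos_two_pi]
      rw [h2, hsineq]
      linarith
    have hstart : (fun s : ℝ => 2*π - Θ₁ (s, L)) (L/4) ∈ Icc 0 π := by
      show 2*π - Θ₁ (L/4, L) ∈ Icc 0 π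
      have hov4 : Θ₁ (L/4, L) = Θ₂' (L/4, L) := by
        apply hovl
        constructor
        · show 0 ≤ L/4 ∧ L/4 ≤ L ∧ L ≤ L ∧ L - L/4 ≤ 3*L/4
          refine ⟨by linarith, by linarith, le_refl _, by linarith⟩
        · show 0 ≤ L/4 ∧ L/4 ≤ L ∧ L ≤ L ∧ L/2 ≤ L - L/4
          refine ⟨by linarith, by linarith, le_refl _, by linarith⟩
      rw [hov4]
      exact hstage3
    exact band_lemma (u := fun s : ℝ => 2*π - Θ₁ (s, L)) (a := L/4) (b := L) (by linarith) hcont hsin hstart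
  -- conclusion
  have hΘLL : Θ₁ (L, L) = θ L := hdiag ⟨le_of_lt hL, le_refl _⟩
  have hcosL : Real.cos (θ L) = 1 := by
    have hlift := hθlift L
    rw [hf'L0, hdir] at hlift
    have := congrArg Complex.re hlift
    rw [Complex.exp_ofReal_mul_I_re] at this
    simpa using this
  have hθL : θ L = 2*π := by
    have h1 : 2*π - θ L ∈ Icc 0 π := by rw [← hΘLL]; exact hstage4
    have h2 : Real.cos (2*π - θ L) = Real.cos 0 := by
      rw [Real.cos_sub]
      simp [Real.sin_two_pi, Real.cos_two_pi, hcosL]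
    have h3 := Real.injOn_cos h1 ⟨le_refl _, le_of_lt Real.pi_pos⟩ h2
    linarith
  have hfinal := hθint 0 L
  rw [hθL, hθ0, hdir, Complex.arg_one] at hfinal
  linarith [hfinal]

set_option maxHeartbeats 1000000 in
lemma main_c {L : ℝ} (hL : 0 < L) {f : ℝ → ℂ} (hf : ContDiff ℝ 2 f)
    (hper : Function.Periodic f L) (hunit : ∀ t, ‖deriv f t‖ = 1)
    (hinj : Set.InjOn f (Set.Ico 0 L)) :
    (∫ t in (0:ℝ)..L, kappa f t) = 2 * π ∨ (∫ t in (0:ℝ)..L, kappa f t) = -(2 * π) := by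
  -- a point of minimal height
  have hyc : Continuous fun t => (f t).im :=
    Complex.continuous_im.comp (hf.continuous)
  obtain ⟨t₀, ht₀mem, ht₀min⟩ := (isCompact_Icc (a := (0:ℝ)) (b := L)).exists_isMinOn
    (nonempty_Icc.mpr (le_of_lt hL)) hyc.continuousOn
  have hminglob : ∀ t : ℝ, (f t₀).im ≤ (f t).im := by
    intro t
    have h1 : toIcoMod hL 0 t ∈ Set.Ico 0 L := by simpa using toIcoMod_mem_Ico hL 0 t
    have h2 : f (toIcoMod hL 0 t) = f t := by
      rw [toIcoMod]; exact hper.sub_zsmul_eq _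
    have h3 := ht₀min (Set.mem_Icc.mpr ⟨h1.1, le_of_lt h1.2⟩)
    simp only at h3
    rw [← h2]
    exact h3
  -- shift the parametrization
  set f₁ : ℝ → ℂ := fun s => f (s + t₀) with hf₁def
  have hf₁ : ContDiff ℝ 2 f₁ := hf.comp (contDiff_id.add contDiff_const)
  have hper₁ : Function.Periodic f₁ L := by
    intro s
    simp only [hf₁def]
    rw [show s + L + t₀ = s + t₀ + L by ring]
    exact hper _
  have hder₁ : ∀ s, deriv f₁ s = deriv f (s + t₀) := fun s => deriv_comp_add_const f t₀ s
  have hder₁' : ∀ s, deriv (deriv f₁) s = deriv (deriv f) (s + t₀) := by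
    intro s
    have h1 : deriv f₁ = fun s => deriv f (s + t₀) := funext hder₁
    rw [h1]
    exact deriv_comp_add_const (deriv f) t₀ s
  have hkap₁ : ∀ s, kappa f₁ s = kappa f (s + t₀) := by
    intro s; unfold kappa; rw [hder₁, hder₁']
  have hunit₁ : ∀ s, ‖deriv f₁ s‖ = 1 := fun s => by rw [hder₁]; exact hunit _
  have hinj₁ : Set.InjOn f₁ (Set.Ico 0 L) := by
    intro a ha b hb heq
    obtain ⟨n, hn⟩ := eq_iff_period hL hper hinj (heq : f (a + t₀) = f (b + t₀))
    have hn' : b - a = n * L := by linarith [hn]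
    have hb1 : b - a < L := by
      rcases ha with ⟨ha1, ha2⟩; rcases hb with ⟨hb1, hb2⟩; linarith
    have hb2 : -L < b - a := by
      rcases ha with ⟨ha1, ha2⟩; rcases hb with ⟨hb1, hb2⟩; linarith
    have hn0 : n = 0 := by
      by_contra hc
      rcases lt_or_gt_of_ne hc with h | h
      · have h1 : n ≤ -1 := by omega
        have : (n:ℝ) ≤ -1 := by exact_mod_cast h1
        nlinarith
      · have h1 : 1 ≤ n := by omega
        have : (1:ℝ) ≤ n := by exact_mod_cast h1
        nlinarith
    rw [hn0] at hn'
    simp at hn'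
    linarith [hn']
  have hmin₁ : ∀ s, (f₁ 0).im ≤ (f₁ s).im := by
    intro s
    simp only [hf₁def, zero_add]
    exact hminglob (s + t₀)
  -- the integrals agree
  have hWeq : (∫ t in (0:ℝ)..L, kappa f₁ t) = ∫ t in (0:ℝ)..L, kappa f t := by
    have h1 : (∫ t in (0:ℝ)..L, kappa f₁ t) = ∫ t in (0:ℝ)..L, kappa f (t + t₀) := by
      apply intervalIntegral.integral_congr
      intro t _
      exact hkap₁ t
    rw [h1, intervalIntegral.integral_comp_add_right]
    have h2 := (kappa_periodic hper).intervalIntegral_add_eq t₀ 0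
    rw [zero_add] at h2
    rw [show (0:ℝ) + t₀ = t₀ by ring, show L + t₀ = t₀ + L by ring]
    exact h2
  -- horizontal tangent at the base point
  obtain ⟨hd₁, hd₁1, hc₁2⟩ := smooth_facts hf₁
  have him0 : (deriv f₁ 0).im = 0 := by
    have hloc : IsLocalMin (fun s => (f₁ s).im) 0 := by
      apply Filter.Eventually.of_forall
      intro s
      exact hmin₁ s
    have hda : HasDerivAt (fun s => (f₁ s).im) ((deriv f₁ 0).im) 0 :=
      Complex.imCLM.hasFDerivAt.comp_hasDerivAt 0 (hd₁ 0).hasDerivAt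
    exact hloc.hasDerivAt_eq_zero hda
  have habs₁ : ‖deriv f₁ 0‖ = 1 := by
    exact hunit₁ 0
  have hre1 : (deriv f₁ 0).re = 1 ∨ (deriv f₁ 0).re = -1 := by
    have h1 : Complex.normSq (deriv f₁ 0) = 1 := by
      rw [← Complex.sq_norm, habs₁]; norm_num
    rw [Complex.normSq_apply, him0] at h1
    have h2 : ((deriv f₁ 0).re - 1) * ((deriv f₁ 0).re + 1) = 0 := by nlinarith
    rcases mul_eq_zero.mp h2 with h | h
    · left; linarith
    · right; linarith
  rcases hre1 with hre | hre
  · -- positively oriented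
    left
    have hdir : deriv f₁ 0 = 1 := by
      apply Complex.ext
      · simpa using hre
      · simpa using him0
    rw [← hWeq]
    exact core hL hf₁ hper₁ hunit₁ hinj₁ hmin₁ hdir
  · -- negatively oriented: reverse the curve
    right
    set f₂ : ℝ → ℂ := fun s => f₁ (-s) with hf₂def
    have hf₂ : ContDiff ℝ 2 f₂ := hf₁.comp contDiff_neg
    have hper₂ : Function.Periodic f₂ L := by
      intro s
      simp only [hf₂def]
      rw [show -(s + L) = -s - L by ring]
      exact hper₁.sub_eq (-s)
    have hder₂ : ∀ s, deriv f₂ s = -(deriv f₁ (-s)) := fun s => deriv_comp_neg f₁ s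
    have hder₂' : ∀ s, deriv (deriv f₂) s = deriv (deriv f₁) (-s) := by
      intro s
      have h1 : deriv f₂ = fun s => -(deriv f₁ (-s)) := funext hder₂
      rw [h1, deriv.fun_neg]
      rw [deriv_comp_neg, neg_neg]
    have hkap₂ : ∀ s, kappa f₂ s = -(kappa f₁ (-s)) := by
      intro s
      unfold kappa
      rw [hder₂, hder₂', map_neg, neg_mul, Complex.neg_im]
    have hunit₂ : ∀ s, ‖deriv f₂ s‖ = 1 := fun s => by
      rw [hder₂, norm_neg]; exact hunit₁ _
    have hinj₂ : Set.InjOn f₂ (Set.Ico 0 L) := by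
      intro a ha b hb heq
      obtain ⟨n, hn⟩ := eq_iff_period hL hper₁ hinj₁ (heq : f₁ (-a) = f₁ (-b))
      have hn' : a - b = n * L := by linarith [hn]
      have hb1 : a - b < L := by
        rcases ha with ⟨ha1, ha2⟩; rcases hb with ⟨hb1, hb2⟩; linarith
      have hb2 : -L < a - b := by
        rcases ha with ⟨ha1, ha2⟩; rcases hb with ⟨hb1, hb2⟩; linarith
      have hn0 : n = 0 := by
        by_contra hc
        rcases lt_or_gt_of_ne hc with h | h
        · have h1 : n ≤ -1 := by omega
          have : (n:ℝ) ≤ -1 := by exact_mod_cast h1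
          nlinarith
        · have h1 : 1 ≤ n := by omega
          have : (1:ℝ) ≤ n := by exact_mod_cast h1
          nlinarith
      rw [hn0] at hn'
      simp at hn'
      linarith [hn']
    have hmin₂ : ∀ s, (f₂ 0).im ≤ (f₂ s).im := by
      intro s
      simp only [hf₂def, neg_zero]
      exact hmin₁ (-s)
    have hdir₂ : deriv f₂ 0 = 1 := by
      rw [hder₂ 0, neg_zero]
      apply Complex.ext
      · simp only [Complex.neg_re, Complex.one_re, hre]; ring
      · simp only [Complex.neg_im, Complex.one_im, him0]; ring
    have hcore := core hL hf₂ hper₂ hunit₂ hinj₂ hmin₂ hdir₂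
    have hW2 : (∫ t in (0:ℝ)..L, kappa f₂ t) = -(∫ t in (0:ℝ)..L, kappa f₁ t) := by
      have h1 : (∫ t in (0:ℝ)..L, kappa f₂ t)
          = ∫ t in (0:ℝ)..L, -(kappa f₁ (-t)) := by
        apply intervalIntegral.integral_congr
        intro t _
        exact hkap₂ t
      rw [h1, intervalIntegral.integral_neg]
      congr 1
      have h2 : (∫ t in (0:ℝ)..L, kappa f₁ (-t)) = ∫ t in (-L)..(0:ℝ), kappa f₁ t := by
        have := intervalIntegral.integral_comp_neg (a := (0:ℝ)) (b := L) (fun t => kappa f₁ t)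
        simpa using this
      rw [h2]
      have h3 := (kappa_periodic hper₁).intervalIntegral_add_eq (-L) 0
      rw [zero_add] at h3
      rw [show -L + L = (0:ℝ) by ring] at h3
      exact h3
    rw [hW2] at hcore
    rw [← hWeq]
    linarith [hcore]

end Hopf

set_option maxHeartbeats 1000000 in
/-- Hopf's Umlaufsatz: the total signed curvature of a simple closed plane curve
is `2 * π` or `-2 * π`. -/
theorem hopf_umlaufsatz
    (L : ℝ) (hL : 0 < L)
    (γ : ℝ → EuclideanSpace ℝ (Fin 2))
    (hsmooth : ContDiff ℝ 2 γ)
    (hper : ∀ t : ℝ, γ (t + L) = γ t)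
    (hunit : ∀ t : ℝ, ‖deriv γ t‖ = 1)
    (hsimple : Set.InjOn γ (Set.Ico 0 L)) :
    (∫ t in (0 : ℝ)..L,
        (deriv (deriv γ) t 1 * deriv γ t 0 - deriv (deriv γ) t 0 * deriv γ t 1))
      = 2 * Real.pi ∨
    (∫ t in (0 : ℝ)..L,
        (deriv (deriv γ) t 1 * deriv γ t 0 - deriv (deriv γ) t 0 * deriv γ t 1))
      = -(2 * Real.pi) := by
  classical
  set l : EuclideanSpace ℝ (Fin 2) ≃ₗᵢ[ℝ] ℂ := Complex.orthonormalBasisOneI.repr.symm with hl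
  set F : ℝ → ℂ := fun t => l (γ t) with hF
  have hlv : ∀ v : EuclideanSpace ℝ (Fin 2), l v = (v 0 : ℝ) + (v 1 : ℝ) * Complex.I :=
    fun v => Complex.orthonormalBasisOneI_repr_symm_apply v
  have hF2 : ContDiff ℝ 2 F := l.contDiff.comp hsmooth
  obtain ⟨hγ1, hγ2, hγ3⟩ := Hopf.smooth_facts hsmooth
  have hdF : ∀ t, deriv F t = l (deriv γ t) := by
    intro t
    have h1 : HasDerivAt γ (deriv γ t) t := (hγ1 t).hasDerivAt
    have h2 := l.toLinearIsometry.toContinuousLinearMap.hasFDerivAt.comp_hasDerivAt t h1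
    exact h2.deriv
  have hdF2 : ∀ t, deriv (deriv F) t = l (deriv (deriv γ) t) := by
    intro t
    have h0 : deriv F = fun s => l (deriv γ s) := funext hdF
    rw [h0]
    have h1 : HasDerivAt (deriv γ) (deriv (deriv γ) t) t := (hγ2 t).hasDerivAt
    exact (l.toLinearIsometry.toContinuousLinearMap.hasFDerivAt.comp_hasDerivAt t h1).deriv
  have hFunit : ∀ t, ‖deriv F t‖ = 1 := fun t => by
    rw [hdF t, l.norm_map]; exact hunit t
  have hFper : Function.Periodic F L := fun t => by
    simp only [hF]; rw [hper t]
  have hFinj : Set.InjOn F (Set.Ico 0 L) := fun a ha b hb h =>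
    hsimple ha hb (l.injective h)
  have hkap : ∀ t, Hopf.kappa F t
      = deriv (deriv γ) t 1 * deriv γ t 0 - deriv (deriv γ) t 0 * deriv γ t 1 := by
    intro t
    unfold Hopf.kappa
    rw [hdF t, hdF2 t, hlv, hlv]
    simp only [map_add, map_mul, Complex.conj_ofReal, Complex.conj_I, Complex.add_re,
      Complex.add_im, Complex.mul_re, Complex.mul_im, Complex.I_re, Complex.I_im,
      Complex.ofReal_re, Complex.ofReal_im, Complex.neg_re, Complex.neg_im]
    ring
  have hgoal := Hopf.main_c hL hF2 hFper hFunit hFinj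
  have hinteq : (∫ t in (0:ℝ)..L, Hopf.kappa F t)
      = ∫ t in (0:ℝ)..L,
        (deriv (deriv γ) t 1 * deriv γ t 0 - deriv (deriv γ) t 0 * deriv γ t 1) :=
    intervalIntegral.integral_congr (fun t _ => hkap t)
  rw [hinteq] at hgoal
  exact hgoal
end
end

section
/- (Fenchel's theorem, discrete case.) Let n ≥ 3 and let C : ZMod n → EuclideanSpace ℝ (Fin 3) be a closed polygon with C(i+1) ≠ C(i) for all i. Then ∑_{i ∈ ZMod n} κ_i ≥ 2π, where κ_i = angle(C(i+1) − C(i), C(i+2) − C(i+1)) ∈ [0, π] is the unoriented angle between consecutive edge vectors (equivalently, κ_i = π − ∠ C(i) C(i+1) C(i+2)). -/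
open InnerProductGeometry Real

variable {V : Type*} [NormedAddCommGroup V] [InnerProductSpace ℝ V]

local notation "⟪" x ", " y "⟫" => @inner ℝ V _ x y

lemma cos_add_le_inner {x y z : V} (hx : ‖x‖ = 1) (hy : ‖y‖ = 1) (hz : ‖z‖ = 1) :
    Real.cos (angle x y + angle y z) ≤ ⟪x, z⟫ := by
  have ca : Real.cos (angle x y) = ⟪x, y⟫ := by rw [cos_angle, hx, hy]; simp
  have cb : Real.cos (angle y z) = ⟪y, z⟫ := by rw [cos_angle, hy, hz]; simp
  set px : V := x - ⟪x, y⟫ • y with hpx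
  set pz : V := z - ⟪z, y⟫ • y with hpz
  have hyy : ⟪y, y⟫ = (1 : ℝ) := by
    rw [real_inner_self_eq_norm_sq, hy]; norm_num
  have hpx2 : ‖px‖ ^ 2 = 1 - ⟪x, y⟫ ^ 2 := by
    rw [← real_inner_self_eq_norm_sq, hpx]
    simp only [inner_sub_sub_self, real_inner_smul_left, real_inner_smul_right]
    rw [real_inner_self_eq_norm_sq, hx, hyy, real_inner_comm y x]
    ring
  have hpz2 : ‖pz‖ ^ 2 = 1 - ⟪z, y⟫ ^ 2 := by
    rw [← real_inner_self_eq_norm_sq, hpz]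
    simp only [inner_sub_sub_self, real_inner_smul_left, real_inner_smul_right]
    rw [real_inner_self_eq_norm_sq, hz, hyy, real_inner_comm y z]
    ring
  have sin_eq : ∀ (u w : V) (p : V), Real.cos (angle u w) = ⟪u, w⟫ →
      ‖p‖ ^ 2 = 1 - ⟪u, w⟫ ^ 2 → Real.sin (angle u w) = ‖p‖ := by
    intro u w p hc hp
    have h1 : Real.sin (angle u w) ^ 2 = ‖p‖ ^ 2 := by
      rw [Real.sin_sq, hc, hp]
    have h2 : 0 ≤ Real.sin (angle u w) :=
      Real.sin_nonneg_of_nonneg_of_le_pi (angle_nonneg u w) (angle_le_pi u w)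
    rw [← Real.sqrt_sq h2, ← Real.sqrt_sq (norm_nonneg p), h1]
  have sa : Real.sin (angle x y) = ‖px‖ := sin_eq x y px ca hpx2
  have hpz2' : ‖pz‖ ^ 2 = 1 - ⟪y, z⟫ ^ 2 := by rw [hpz2, real_inner_comm z y]
  have sb : Real.sin (angle y z) = ‖pz‖ := sin_eq y z pz cb hpz2'
  have hinner : ⟪x, z⟫ = ⟪x, y⟫ * ⟪y, z⟫ + ⟪px, pz⟫ := by
    rw [hpx, hpz]
    simp only [inner_sub_left, inner_sub_right, real_inner_smul_left, real_inner_smul_right]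
    rw [hyy, real_inner_comm y z]
    ring
  have hcs : -(‖px‖ * ‖pz‖) ≤ ⟪px, pz⟫ := neg_le_of_abs_le (abs_real_inner_le_norm px pz)
  rw [Real.cos_add, ca, cb, sa, sb, hinner]
  linarith

lemma angle_triangle_ineq {x y z : V} (hx : x ≠ 0) (hy : y ≠ 0) (hz : z ≠ 0) :
    angle x z ≤ angle x y + angle y z := by
  -- reduce to unit vectors
  have hux : ‖(‖x‖⁻¹ • x : V)‖ = 1 := by
    rw [norm_smul, norm_inv, norm_norm, inv_mul_cancel₀ (norm_ne_zero_iff.2 hx)]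
  have huy : ‖(‖y‖⁻¹ • y : V)‖ = 1 := by
    rw [norm_smul, norm_inv, norm_norm, inv_mul_cancel₀ (norm_ne_zero_iff.2 hy)]
  have huz : ‖(‖z‖⁻¹ • z : V)‖ = 1 := by
    rw [norm_smul, norm_inv, norm_norm, inv_mul_cancel₀ (norm_ne_zero_iff.2 hz)]
  set x' : V := ‖x‖⁻¹ • x
  set y' : V := ‖y‖⁻¹ • y
  set z' : V := ‖z‖⁻¹ • z
  have hxp : (0:ℝ) < ‖x‖⁻¹ := inv_pos.2 (norm_pos_iff.2 hx)
  have hyp : (0:ℝ) < ‖y‖⁻¹ := inv_pos.2 (norm_pos_iff.2 hy)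
  have hzp : (0:ℝ) < ‖z‖⁻¹ := inv_pos.2 (norm_pos_iff.2 hz)
  have e1 : angle x z = angle x' z' := by
    rw [angle_smul_left_of_pos _ _ hxp, angle_smul_right_of_pos _ _ hzp]
  have e2 : angle x y = angle x' y' := by
    rw [angle_smul_left_of_pos _ _ hxp, angle_smul_right_of_pos _ _ hyp]
  have e3 : angle y z = angle y' z' := by
    rw [angle_smul_left_of_pos _ _ hyp, angle_smul_right_of_pos _ _ hzp]
  rw [e1, e2, e3]
  rcases le_or_gt (angle x' y' + angle y' z') π with hle | hgt
  · have hkey := cos_add_le_inner hux huy huz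
    have h1 : angle x' z' = Real.arccos ⟪x', z'⟫ := by
      rw [InnerProductGeometry.angle, hux, huz]
      norm_num
    have h2 : Real.arccos ⟪x', z'⟫ ≤ Real.arccos (Real.cos (angle x' y' + angle y' z')) := by
      unfold Real.arccos
      have := Real.monotone_arcsin hkey
      linarith
    rw [Real.arccos_cos (add_nonneg (angle_nonneg _ _) (angle_nonneg _ _)) hle] at h2
    linarith [h1 ▸ h2]
  · linarith [angle_le_pi x' z']

lemma angle_split {u v : V} (hv : v ≠ 0) (huv : u + v ≠ 0) :
    angle u (u + v) + angle (u + v) v = angle u v := by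
  have h := InnerProductGeometry.angle_add_angle_sub_add_angle_sub_eq_pi (u + v) hv
    (y := v)
  rw [add_sub_cancel_right] at h
  have h2 : v - (u + v) = -u := by abel
  rw [h2, angle_neg_right] at h
  have h3 : angle u (u + v) = angle (u + v) u := angle_comm _ _
  have h4 : angle u v = angle v u := angle_comm _ _
  linarith

noncomputable def cA : List V → ℝ
  | [] => 0
  | [_] => 0
  | x :: y :: t => angle x y + cA (y :: t)

noncomputable def cS (l : List V) : ℝ := cA l + angle (l.getLastD 0) (l.headD 0)

lemma cA_append_singleton (x : V) : ∀ (l : List V), l ≠ [] →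
    cA (l ++ [x]) = cA l + angle (l.getLastD 0) x
  | [], h => absurd rfl h
  | [a], _ => by simp [cA]
  | a :: b :: t, _ => by
    have ih := cA_append_singleton x (b :: t) (by simp)
    simp only [List.cons_append, cA, List.append_eq] at ih ⊢
    rw [ih]
    simp [List.getLastD]
    ring

lemma cS_rotate_one (l : List V) : cS (l.rotate 1) = cS l := by
  match l with
  | [] => simp
  | [a] => simp [List.rotate]
  | a :: b :: t =>
    have h1 : (a :: b :: t).rotate 1 = (b :: t) ++ [a] := by
      rw [List.rotate_cons_succ, List.rotate_zero]
    rw [h1]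
    unfold cS
    rw [cA_append_singleton a (b :: t) (by simp)]
    simp only [cA]
    have hlast : ((b :: t) ++ [a]).getLastD 0 = a := by
      rw [List.getLastD_eq_getLast?, List.getLast?_concat]
      rfl
    rw [hlast]
    simp only [List.headD_cons, List.cons_append, List.getLastD_cons]
    ring

lemma cS_rotate (l : List V) (k : ℕ) : cS (l.rotate k) = cS l := by
  induction k with
  | zero => simp
  | succ k ih =>
    rw [← ih, ← cS_rotate_one (l.rotate k), List.rotate_rotate]

lemma cS_merge (a b h : V) (t' : List V) (hb : b ≠ 0) (hab : a + b ≠ 0)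
    (hh : h ≠ 0) (hlastnz : (h :: t').getLastD 0 ≠ 0) (ha : a ≠ 0) :
    cS ((a + b) :: h :: t') ≤ cS (a :: b :: h :: t') := by
  have hsplit := angle_split hb hab
  have tri1 : angle (a + b) h ≤ angle (a + b) b + angle b h :=
    angle_triangle_ineq hab hb hh
  have tri2 : angle ((h :: t').getLastD 0) (a + b) ≤
      angle ((h :: t').getLastD 0) a + angle a (a + b) :=
    angle_triangle_ineq hlastnz ha hab
  unfold cS
  simp only [cA, List.headD_cons, List.getLastD_cons] at tri2 ⊢
  linarith

lemma chain'_of_no_pair : ∀ (l : List V),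
    (∀ (p : List V) (a b : V) (s : List V), l = p ++ a :: b :: s → a + b = 0) →
    l.Chain' (fun x y => x + y = 0)
  | [], _ => List.isChain_nil
  | [_], _ => List.isChain_singleton _
  | x :: y :: t, h =>
    List.isChain_cons_cons.2 ⟨h [] x y t rfl,
      chain'_of_no_pair (y :: t) fun p a b s hp => h (x :: p) a b s (by rw [List.cons_append, hp])⟩

lemma cA_chain : ∀ (l : List V), (∀ v ∈ l, v ≠ 0) →
    l.Chain' (fun x y => x + y = 0) → cA l = ((l.length - 1 : ℕ) : ℝ) * π
  | [], _, _ => by simp [cA]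
  | [_], _, _ => by simp [cA]
  | x :: y :: t, hnz, hch => by
    obtain ⟨hxy, hch'⟩ := List.isChain_cons_cons.1 hch
    have hy : y = -x := by linear_combination (norm := abel) hxy
    have ih := cA_chain (y :: t) (fun v hv => hnz v (List.mem_cons_of_mem _ hv)) hch'
    have hx : x ≠ 0 := hnz x (by simp)
    have hangle : angle x y = π := by rw [hy]; exact angle_self_neg_of_nonzero hx
    show angle x y + cA (y :: t) = _
    rw [hangle, ih]
    simp only [List.length_cons, Nat.add_sub_cancel]
    push_cast
    ring

lemma cyclic_main (n : ℕ) : ∀ l : List V, l.length = n → 2 ≤ n →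
    (∀ v ∈ l, v ≠ 0) → l.sum = 0 → 2 * π ≤ cS l := by
  induction n using Nat.strong_induction_on with
  | _ n IH =>
  intro l hlen h2 hnz hsum
  rcases eq_or_lt_of_le h2 with h2' | h3
  · -- n = 2
    obtain ⟨a, b, rfl⟩ := List.length_eq_two.1 (hlen.trans h2'.symm)
    have ha : a ≠ 0 := hnz a (by simp)
    have hb : b = -a := by
      have : a + b = 0 := by simpa using hsum
      linear_combination (norm := abel) this
    subst hb
    unfold cS
    simp only [cA, List.headD_cons, List.getLastD_cons, List.getLastD_nil]
    rw [angle_self_neg_of_nonzero ha, angle_neg_self_of_nonzero ha]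
    linarith
  · -- n ≥ 3
    by_cases hex : ∃ (p : List V) (a b : V) (s : List V), l = p ++ a :: b :: s ∧ a + b ≠ 0
    · obtain ⟨p, a, b, s, rfl, hab⟩ := hex
      have hrot : (p ++ a :: b :: s).rotate p.length = a :: b :: (s ++ p) := by
        rw [List.rotate_eq_drop_append_take (by simp)]
        rw [List.drop_left, List.take_left]
        simp
      have hlenrot : (a :: b :: (s ++ p)).length = n := by
        rw [← hrot, List.length_rotate]; exact hlen
      obtain ⟨h, t', ht⟩ : ∃ h t', s ++ p = h :: t' := by
        cases hsp : s ++ p with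
        | nil =>
          rw [hsp] at hlenrot; simp at hlenrot; omega
        | cons h t' => exact ⟨h, t', rfl⟩
      rw [ht] at hrot hlenrot
      have hmem : ∀ v ∈ a :: b :: h :: t', v ≠ 0 := by
        intro v hv
        apply hnz
        rw [← hrot] at hv
        exact List.mem_rotate.1 hv
      have hsum' : (a :: b :: h :: t').sum = 0 := by
        rw [← hrot, (List.rotate_perm _ _).sum_eq, hsum]
      have hIH : 2 * π ≤ cS ((a + b) :: h :: t') := by
        refine IH (n - 1) (by omega) _ ?_ (by omega) ?_ ?_
        · simp only [List.length_cons] at hlenrot ⊢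
          omega
        · intro v hv
          rcases List.mem_cons.1 hv with rfl | hv'
          · exact hab
          · exact hmem v (List.mem_cons_of_mem _ (List.mem_cons_of_mem _ hv'))
        · simp only [List.sum_cons] at hsum' ⊢
          linear_combination (norm := abel) hsum'
      have hmerge : cS ((a + b) :: h :: t') ≤ cS (a :: b :: h :: t') := by
        refine cS_merge a b h t' (hmem b (by simp)) hab (hmem h (by simp)) ?_ (hmem a (by simp))
        have hL : (h :: t').getLastD 0 = t'.getLastD h := List.getLastD_cons
        rw [hL]
        exact hmem _ (List.mem_cons_of_mem _ (List.mem_cons_of_mem _ List.getLastD_mem_cons))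
      have hcSeq : cS (a :: b :: h :: t') = cS (p ++ a :: b :: s) := by
        rw [← hrot, cS_rotate]
      linarith
    · push_neg at hex
      have hch := chain'_of_no_pair l fun p a b s hp => hex p a b s hp
      have hA := cA_chain l hnz hch
      have hge : (2 : ℝ) ≤ ((l.length - 1 : ℕ) : ℝ) := by
        have : 2 ≤ l.length - 1 := by omega
        exact_mod_cast this
      have hang : 0 ≤ angle (l.getLastD 0) (l.headD 0) := angle_nonneg _ _
      unfold cS
      rw [hA]
      nlinarith [Real.pi_pos]

lemma cA_ofFn : ∀ (m : ℕ) (w : Fin (m + 1) → V),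
    cA (List.ofFn w) = ∑ i : Fin m, angle (w i.castSucc) (w i.succ) := by
  intro m
  induction m with
  | zero => intro w; simp [List.ofFn_succ, cA]
  | succ k ih =>
    intro w
    have h2 : cA (List.ofFn w) =
        angle (w 0) (w (Fin.succ 0)) + cA (List.ofFn (fun i : Fin (k + 1) => w i.succ)) := by
      rw [List.ofFn_succ (f := w), List.ofFn_succ (f := fun i : Fin (k + 1) => w i.succ)]
      rfl
    rw [h2, ih (fun i => w i.succ), Fin.sum_univ_succ]
    simp [Fin.succ_castSucc, -Fin.castSucc_succ]

lemma headD_ofFn (m : ℕ) (w : Fin (m + 1) → V) : (List.ofFn w).headD 0 = w 0 := by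
  rw [List.ofFn_succ]; rfl

lemma getLastD_ofFn (m : ℕ) (w : Fin (m + 1) → V) :
    (List.ofFn w).getLastD 0 = w (Fin.last m) := by
  rw [List.ofFn_succ', List.concat_eq_append, List.getLastD_eq_getLast?, List.getLast?_concat]
  rfl

lemma cS_ofFn (m : ℕ) (w : Fin (m + 1) → V) :
    cS (List.ofFn w) = ∑ i : Fin (m + 1), angle (w i) (w (i + 1)) := by
  unfold cS
  rw [cA_ofFn, headD_ofFn, getLastD_ofFn, Fin.sum_univ_castSucc]
  congr 1
  · congr 1
    · ext i
      congr 1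
      rw [Fin.coeSucc_eq_succ]
  · rw [Fin.last_add_one]

lemma fin_zmod_bij (N : ℕ) [NeZero N] :
    Function.Bijective (fun i : Fin N => ((i : ℕ) : ZMod N)) := by
  constructor
  · intro i j hij
    have hij' : ((i : ℕ) : ZMod N) = ((j : ℕ) : ZMod N) := hij
    have : ((i : ℕ) : ZMod N).val = ((j : ℕ) : ZMod N).val := by rw [hij']
    rwa [ZMod.val_cast_of_lt i.isLt, ZMod.val_cast_of_lt j.isLt, ← Fin.ext_iff] at this
  · intro x
    exact ⟨⟨x.val, ZMod.val_lt x⟩, ZMod.natCast_rightInverse x⟩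

/-- Fenchel's theorem, discrete case: the total curvature of a closed space polygon
is at least `2π`. -/
theorem fenchel_discrete
    (n : ℕ) [NeZero n] (hn : 3 ≤ n)
    (C : ZMod n → EuclideanSpace ℝ (Fin 3))
    (hC : ∀ i : ZMod n, C (i + 1) ≠ C i) :
    2 * Real.pi ≤
      ∑ i : ZMod n,
        InnerProductGeometry.angle (C (i + 1) - C i) (C (i + 2) - C (i + 1)) := by
  obtain ⟨m, rfl⟩ : ∃ m, n = m + 3 := ⟨n - 3, by omega⟩
  set e : ZMod (m + 3) → EuclideanSpace ℝ (Fin 3) := fun i => C (i + 1) - C i with he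
  have hnz : ∀ i, e i ≠ 0 := fun i => sub_ne_zero.2 (hC i)
  have hterm : ∀ i : ZMod (m + 3),
      angle (C (i + 1) - C i) (C (i + 2) - C (i + 1)) = angle (e i) (e (i + 1)) := by
    intro i
    have h12 : i + 2 = (i + 1) + 1 := by ring
    rw [he, h12]
  rw [Finset.sum_congr rfl fun i _ => hterm i]
  have hsum0 : ∑ i : ZMod (m + 3), e i = 0 := by
    rw [he, Finset.sum_sub_distrib]
    have : ∑ i : ZMod (m + 3), C (i + 1) = ∑ i : ZMod (m + 3), C i :=
      Fintype.sum_equiv (Equiv.addRight 1) _ _ fun i => rfl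
    rw [this, sub_self]
  set w : Fin (m + 3) → EuclideanSpace ℝ (Fin 3) := fun i => e ((i : ℕ) : ZMod (m + 3)) with hw
  have hcast : ∀ i : Fin (m + 3),
      (((i + 1 : Fin (m + 3)) : ℕ) : ZMod (m + 3)) = ((i : ℕ) : ZMod (m + 3)) + 1 := by
    intro i
    rw [Fin.val_add, ZMod.natCast_mod, Fin.val_one, Nat.cast_add, Nat.cast_one]
  have htrans : ∑ i : ZMod (m + 3), angle (e i) (e (i + 1)) =
      ∑ i : Fin (m + 3), angle (w i) (w (i + 1)) := by
    refine (Fintype.sum_bijective _ (fin_zmod_bij (m + 3)) _ _ fun i => ?_).symm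
    rw [hw]
    simp only
    rw [hcast i]
  rw [htrans, ← cS_ofFn (m + 2) w]
  apply cyclic_main (m + 3) (List.ofFn w)
  · simp
  · omega
  · intro v hv
    obtain ⟨i, rfl⟩ := List.mem_ofFn.1 hv
    exact hnz _
  · rw [List.sum_ofFn]
    rw [← hsum0]
    exact Fintype.sum_bijective _ (fin_zmod_bij (m + 3)) _ _ fun i => rfl
end

section
/- (Fenchel's theorem, smooth case.) Let L > 0 and let γ : ℝ → EuclideanSpace ℝ (Fin 3) be twice continuously differentiable, L-periodic (γ(t + L) = γ(t) for all t), and parametrized by arc length (‖γ'(t)‖ = 1 for all t). Then ∫_0^L ‖γ''(t)‖ dt ≥ 2π. -/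
open Real intervalIntegral
open scoped RealInnerProductSpace

section FenchelAux
variable {E : Type*} [NormedAddCommGroup E] [InnerProductSpace ℝ E]

/-- Pointwise bound: if `u, x` are unit and `v ⟂ x` then `|⟪u,v⟫| ≤ ‖v‖ √(1 - ⟪u,x⟫²)`. -/
lemma fenchel_key_inner_bound (u x v : E) (hu : ‖u‖ = 1)
    (hx : ‖x‖ = 1) (horth : ⟪x, v⟫ = 0) :
    |⟪u, v⟫| ≤ ‖v‖ * Real.sqrt (1 - ⟪u, x⟫ ^ 2) := by
  set ψ : ℝ := ⟪u, x⟫ with hψ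
  have hw : ⟪u - ψ • x, v⟫ = ⟪u, v⟫ := by
    rw [inner_sub_left, real_inner_smul_left, horth]; ring
  have hwn : ‖u - ψ • x‖ ^ 2 = 1 - ψ ^ 2 := by
    rw [norm_sub_sq_real, real_inner_smul_right, norm_smul, hu, hx, ← hψ]
    simp [mul_pow, sq_abs]; ring
  have hwnorm : ‖u - ψ • x‖ = Real.sqrt (1 - ψ ^ 2) := by
    rw [← hwn, Real.sqrt_sq (norm_nonneg _)]
  calc |⟪u, v⟫| = |⟪u - ψ • x, v⟫| := by rw [hw]
    _ ≤ ‖u - ψ • x‖ * ‖v‖ := abs_real_inner_le_norm _ _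
    _ = ‖v‖ * Real.sqrt (1 - ψ ^ 2) := by rw [hwnorm]; ring

/-- The spherical angle from a fixed unit vector to a unit-sphere curve changes by at most
the length traversed. -/
lemma fenchel_arccos_lipschitz (T T' : ℝ → E)
    (hd : ∀ t, HasDerivAt T (T' t) t) (hc : Continuous T')
    (h1 : ∀ t, ‖T t‖ = 1) (ho : ∀ t, ⟪T t, T' t⟫ = 0)
    (u : E) (hu : ‖u‖ = 1) {c d : ℝ} (hcd : c ≤ d) :
    |Real.arccos ⟪u, T d⟫ - Real.arccos ⟪u, T c⟫| ≤ ∫ t in c..d, ‖T' t‖ := by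
  have hTdiff : Differentiable ℝ T := fun t => (hd t).differentiableAt
  have hTc : Continuous T := hTdiff.continuous
  set ψ : ℝ → ℝ := fun t => ⟪u, T t⟫ with hψdef
  have hψd : ∀ t, HasDerivAt ψ ⟪u, T' t⟫ t := by
    intro t
    have := HasDerivAt.inner ℝ (hasDerivAt_const t u) (hd t)
    simpa using this
  have hψle : ∀ t, |ψ t| ≤ 1 := by
    intro t
    calc |ψ t| ≤ ‖u‖ * ‖T t‖ := abs_real_inner_le_norm _ _
      _ = 1 := by rw [hu, h1 t]; ring
  have key : ∀ ε : ℝ, 0 < ε →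
      |Real.arccos (ψ d / (1+ε)) - Real.arccos (ψ c / (1+ε))| ≤ ∫ t in c..d, ‖T' t‖ := by
    intro ε hε
    have hε1 : (0:ℝ) < 1 + ε := by linarith
    set D : ℝ → ℝ :=
      fun t => -(1 / Real.sqrt (1 - (ψ t / (1+ε))^2)) * (⟪u, T' t⟫ / (1+ε)) with hD
    have hlt : ∀ t, |ψ t / (1+ε)| < 1 := by
      intro t
      rw [abs_div, abs_of_pos hε1, div_lt_one hε1]
      linarith [hψle t]
    have hposrad : ∀ t, 0 < 1 - (ψ t / (1+ε))^2 := by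
      intro t
      have h := hlt t
      nlinarith [abs_nonneg (ψ t / (1+ε)), sq_abs (ψ t / (1+ε))]
    have hsqrtpos : ∀ t, 0 < Real.sqrt (1 - (ψ t / (1+ε))^2) :=
      fun t => Real.sqrt_pos.mpr (hposrad t)
    have hg : ∀ t, HasDerivAt (fun s => Real.arccos (ψ s / (1+ε))) (D t) t := by
      intro t
      have h₁ : ψ t / (1+ε) ≠ -1 := by
        intro h; have := hlt t; rw [h] at this; simp at this
      have h₂ : ψ t / (1+ε) ≠ 1 := by
        intro h; have := hlt t; rw [h] at this; simp at this
      have := (Real.hasDerivAt_arccos h₁ h₂).comp t ((hψd t).div_const (1+ε))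
      exact this
    have hψc : Continuous ψ := continuous_const.inner hTc
    have hDc : Continuous D := by
      apply Continuous.mul
      · apply Continuous.neg
        apply continuous_const.div
        · exact Real.continuous_sqrt.comp (by continuity)
        · intro t; exact ne_of_gt (hsqrtpos t)
      · exact (continuous_const.inner hc).div_const _
    have hDle : ∀ t, |D t| ≤ ‖T' t‖ := by
      intro t
      have hb := fenchel_key_inner_bound u (T t) (T' t) hu (h1 t) (ho t)
      have hsq : (1+ε) * Real.sqrt (1 - (ψ t / (1+ε))^2)
          = Real.sqrt ((1+ε)^2 - ψ t^2) := by
        have e1 : (1+ε)^2 - ψ t^2 = (1+ε)^2 * (1 - (ψ t/(1+ε))^2) := by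
          field_simp
        rw [e1, Real.sqrt_mul (by positivity), Real.sqrt_sq hε1.le]
      have hden : 0 < Real.sqrt ((1+ε)^2 - ψ t^2) := by
        exact mul_pos hε1 (hsqrtpos t) |>.trans_eq hsq
      have habs : |D t| * ((1+ε) * Real.sqrt (1 - (ψ t/(1+ε))^2)) = |⟪u, T' t⟫| := by
        simp only [hD, abs_mul, abs_neg, abs_div, abs_one,
          abs_of_pos hε1, abs_of_pos (hsqrtpos t)]
        have hr := hsqrtpos t; generalize Real.sqrt (1 - (ψ t/(1+ε))^2) = r at hr ⊢
        field_simp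
      have hmul : |D t| * Real.sqrt ((1+ε)^2 - ψ t^2)
          ≤ ‖T' t‖ * Real.sqrt ((1+ε)^2 - ψ t^2) := by
        rw [← hsq, habs]
        calc |⟪u, T' t⟫| ≤ ‖T' t‖ * Real.sqrt (1 - ψ t^2) := hb
          _ ≤ ‖T' t‖ * Real.sqrt ((1+ε)^2 - ψ t^2) := by
              apply mul_le_mul_of_nonneg_left _ (norm_nonneg _)
              apply Real.sqrt_le_sqrt
              nlinarith
          _ = ‖T' t‖ * ((1+ε) * Real.sqrt (1 - (ψ t/(1+ε))^2)) := by rw [hsq]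
      exact le_of_mul_le_mul_right hmul hden
    have heq : ∫ t in c..d, D t
        = Real.arccos (ψ d/(1+ε)) - Real.arccos (ψ c/(1+ε)) :=
      integral_eq_sub_of_hasDerivAt (fun t _ => hg t) (hDc.intervalIntegrable _ _)
    rw [← heq]
    calc |∫ t in c..d, D t| ≤ ∫ t in c..d, |D t| := abs_integral_le_integral_abs hcd
      _ ≤ ∫ t in c..d, ‖T' t‖ :=
          integral_mono_on hcd (hDc.abs.intervalIntegrable _ _)
            (hc.norm.intervalIntegrable _ _) (fun t _ => hDle t)
  have hca : ∀ r : ℝ, ContinuousAt (fun ε : ℝ => Real.arccos (r/(1+ε))) 0 := by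
    intro r
    have h0 : ContinuousAt (fun ε : ℝ => r/(1+ε)) 0 :=
      continuousAt_const.div ((continuous_const.add continuous_id).continuousAt) (by norm_num)
    exact Real.continuous_arccos.continuousAt.comp h0
  have hlim : Filter.Tendsto
      (fun ε : ℝ => |Real.arccos (ψ d/(1+ε)) - Real.arccos (ψ c/(1+ε))|)
      (nhdsWithin 0 (Set.Ioi 0))
      (nhds (|Real.arccos (ψ d) - Real.arccos (ψ c)|)) := by
    have h2 : ContinuousAt
        (fun ε : ℝ => |Real.arccos (ψ d/(1+ε)) - Real.arccos (ψ c/(1+ε))|) 0 :=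
      ContinuousAt.abs ((hca (ψ d)).sub (hca (ψ c)))
    have h3 := h2.tendsto
    have h4 := h3.mono_left (nhdsWithin_le_nhds (s := Set.Ioi (0:ℝ)))
    simpa using h4
  exact le_of_tendsto hlim
    (Filter.eventually_of_mem self_mem_nhdsWithin (fun ε hε => key ε hε))

end FenchelAux

/-- Fenchel's theorem, smooth case: the total curvature of a closed space curve
is at least `2π`. -/
theorem fenchel_smooth
    (L : ℝ) (hL : 0 < L)
    (γ : ℝ → EuclideanSpace ℝ (Fin 3))
    (hsmooth : ContDiff ℝ 2 γ)
    (hper : ∀ t : ℝ, γ (t + L) = γ t)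
    (hunit : ∀ t : ℝ, ‖deriv γ t‖ = 1) :
    2 * Real.pi ≤ ∫ t in (0 : ℝ)..L, ‖deriv (deriv γ) t‖ := by
  classical
  set T : ℝ → EuclideanSpace ℝ (Fin 3) := deriv γ with hTdef
  set T' : ℝ → EuclideanSpace ℝ (Fin 3) := deriv T with hT'def
  have h2 : (2 : WithTop ℕ∞) = 1 + 1 := by norm_num
  rw [h2] at hsmooth
  have hγd : Differentiable ℝ γ := (contDiff_succ_iff_deriv.mp hsmooth).1
  have hT1 : ContDiff ℝ 1 T := (contDiff_succ_iff_deriv.mp hsmooth).2.2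
  have hTdiff : Differentiable ℝ T := hT1.differentiable one_ne_zero
  have hTd : ∀ t, HasDerivAt T (T' t) t := fun t => (hTdiff t).hasDerivAt
  have hT'c : Continuous T' := hT1.continuous_deriv le_rfl
  have hTc : Continuous T := hT1.continuous
  have hnorm : ∀ t, ‖T t‖ = 1 := hunit
  have horth : ∀ t, ⟪T t, T' t⟫ = 0 := by
    intro t
    have hconst : (fun s => ⟪T s, T s⟫) = fun _ => (1:ℝ) := by
      funext s
      rw [real_inner_self_eq_norm_sq, hnorm s]; norm_num
    have hder : HasDerivAt (fun s => ⟪T s, T s⟫) (⟪T t, T' t⟫ + ⟪T' t, T t⟫) t :=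
      HasDerivAt.inner ℝ (hTd t) (hTd t)
    rw [hconst] at hder
    have := hder.unique (hasDerivAt_const t (1:ℝ))
    rw [real_inner_comm (T t) (T' t)] at this
    linarith
  have hTper : ∀ t, T (t + L) = T t := by
    intro t
    have hfun : (fun s => γ (s + L)) = γ := funext hper
    have : deriv (fun s => γ (s + L)) t = deriv γ t := by rw [hfun]
    rwa [deriv_comp_add_const] at this
  have hclosed : γ L = γ 0 := by simpa using hper 0
  have hintT : ∫ t in (0:ℝ)..L, T t = 0 := by
    have := integral_eq_sub_of_hasDerivAt (f := γ) (f' := T)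
      (fun t _ => (hγd t).hasDerivAt) (hTc.intervalIntegrable 0 L)
    rw [this, hclosed, sub_self]
  set K : ℝ := ∫ t in (0:ℝ)..L, ‖T' t‖ with hKdef
  have hKnonneg : 0 ≤ K :=
    intervalIntegral.integral_nonneg hL.le (fun t _ => norm_nonneg _)
  by_contra hcon
  push_neg at hcon
  have hKlt : K < 2 * Real.pi := hcon
  have hKhalf : K / 2 < Real.pi := by linarith
  -- the primitive of ‖T'‖
  set s : ℝ → ℝ := fun t => ∫ u in (0:ℝ)..t, ‖T' u‖ with hsdef
  have hscont : Continuous s := by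
    have : ∀ t : ℝ, HasDerivAt s ‖T' t‖ t := by
      intro t
      exact ((hT'c.norm).integral_hasStrictDerivAt 0 t).hasDerivAt
    exact continuous_iff_continuousAt.mpr (fun t => ((this t).differentiableAt).continuousAt)
  have hs0 : s 0 = 0 := integral_same
  have hsL : s L = K := rfl
  -- choose a bisecting the total curvature
  have hmem : K / 2 ∈ Set.Icc (s 0) (s L) := by
    rw [hs0, hsL]; constructor <;> linarith
  obtain ⟨a, ha, hsa⟩ := intermediate_value_Icc hL.le hscont.continuousOn hmem
  set p := T 0 with hpdef
  set q := T a with hqdef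
  have hintegrable : ∀ c d : ℝ, IntervalIntegrable (fun t => ‖T' t‖) MeasureTheory.volume c d :=
    fun c d => (hT'c.norm).intervalIntegrable c d
  have hsplit : ∀ {c d e : ℝ}, (∫ t in c..d, ‖T' t‖) + ∫ t in d..e, ‖T' t‖ = ∫ t in c..e, ‖T' t‖ :=
    fun {c d e} => integral_add_adjacent_intervals (hintegrable c d) (hintegrable d e)
  have lipA := fun (u : EuclideanSpace ℝ (Fin 3)) (hu : ‖u‖ = 1) {c d : ℝ} (hcd : c ≤ d) =>
    fenchel_arccos_lipschitz T T' hTd hT'c hnorm horth u hu hcd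
  -- the angle between p and q is at most K/2
  have hpq_angle : Real.arccos ⟪p, q⟫ ≤ K / 2 := by
    have h := lipA p (hnorm 0) ha.1
    have hself : Real.arccos ⟪p, T 0⟫ = 0 := by
      rw [← hpdef, real_inner_self_eq_norm_sq, hnorm 0]
      norm_num [Real.arccos_one]
    rw [hself, sub_zero] at h
    calc Real.arccos ⟪p, q⟫ ≤ |Real.arccos ⟪p, T a⟫| := le_abs_self _
      _ ≤ ∫ t in (0:ℝ)..a, ‖T' t‖ := h
      _ = K / 2 := hsa
  have hpq_gt : -1 < ⟪p, q⟫ := by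
    by_contra h
    push_neg at h
    have : Real.arccos ⟪p, q⟫ = Real.pi := Real.arccos_eq_pi.mpr h
    rw [this] at hpq_angle
    linarith
  have hpq_norm_sq : ‖p + q‖ ^ 2 = 2 + 2 * ⟪p, q⟫ := by
    rw [norm_add_sq_real, hnorm 0, hnorm a]; ring
  have hpq_pos : 0 < ‖p + q‖ := by
    nlinarith [norm_nonneg (p + q)]
  set m : EuclideanSpace ℝ (Fin 3) := ‖p + q‖⁻¹ • (p + q) with hmdef
  have hminner : ∀ x, ⟪m, x⟫ = ‖p + q‖⁻¹ * (⟪p, x⟫ + ⟪q, x⟫) := by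
    intro x
    rw [hmdef, real_inner_smul_left, inner_add_left]
  have hmp : 0 < ⟪m, p⟫ := by
    rw [hminner]
    have : ⟪p, p⟫ + ⟪q, p⟫ = 1 + ⟪p, q⟫ := by
      rw [real_inner_self_eq_norm_sq, hnorm 0, real_inner_comm]; ring
    rw [this]
    exact mul_pos (inv_pos.mpr hpq_pos) (by linarith)
  have hmq : 0 < ⟪m, q⟫ := by
    rw [hminner]
    have : ⟪p, q⟫ + ⟪q, q⟫ = 1 + ⟪p, q⟫ := by
      rw [real_inner_self_eq_norm_sq, hnorm a]; ring
    rw [this]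
    exact mul_pos (inv_pos.mpr hpq_pos) (by linarith)
  -- there is a point where ⟪m, T t⟫ ≤ 0
  have hexists : ∃ t ∈ Set.Icc (0:ℝ) L, ⟪m, T t⟫ ≤ 0 := by
    by_contra h
    push_neg at h
    have hpos : 0 < ∫ t in (0:ℝ)..L, ⟪m, T t⟫ := by
      apply intervalIntegral_pos_of_pos_on
      · exact (continuous_const.inner hTc).intervalIntegrable _ _
      · exact fun t ht => h t ⟨ht.1.le, ht.2.le⟩
      · exact hL
    have hzero : ∫ t in (0:ℝ)..L, ⟪m, T t⟫ = 0 := by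
      have hTi : IntervalIntegrable T MeasureTheory.volume 0 L := hTc.intervalIntegrable 0 L
      have := (innerSL ℝ m).intervalIntegral_comp_comm hTi
      simp only [innerSL_apply_apply] at this
      rw [this, hintT, inner_zero_right]
    rw [hzero] at hpos
    exact lt_irrefl _ hpos
  obtain ⟨t₀, ht₀mem, ht₀⟩ := hexists
  have hmTcont : Continuous fun t => ⟪m, T t⟫ := continuous_const.inner hTc
  -- In both cases we find s₀ with ⟪m, T s₀⟫ = 0 and derive π ≤ K/2.
  have hfinal : Real.pi ≤ K / 2 := by
    rcases le_total t₀ a with hta | hat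
    · -- s₀ ∈ [0, t₀] ⊆ [0, a]
      have h0mem : (0:ℝ) ∈ Set.Icc ⟪m, T t₀⟫ ⟪m, T 0⟫ := ⟨ht₀, hmp.le⟩
      obtain ⟨s₀, hs₀mem, hs₀⟩ :=
        intermediate_value_Icc' ht₀mem.1 hmTcont.continuousOn h0mem
      have hs₀a : s₀ ≤ a := le_trans hs₀mem.2 hta
      -- orthogonality gives ⟪q, T s₀⟫ = -⟪p, T s₀⟫
      have hs₀' : ⟪m, T s₀⟫ = 0 := hs₀
      have h2 : ⟪p, T s₀⟫ + ⟪q, T s₀⟫ = 0 := by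
        have h3 : ‖p + q‖⁻¹ * (⟪p, T s₀⟫ + ⟪q, T s₀⟫) = 0 := by
          rw [← hminner, hs₀']
        rcases mul_eq_zero.mp h3 with h | h
        · exact absurd h (inv_ne_zero (ne_of_gt hpq_pos))
        · exact h
      have horth0 : ⟪q, T s₀⟫ = -⟪p, T s₀⟫ := by linarith
      have hA1 : Real.arccos ⟪p, T s₀⟫ ≤ ∫ t in (0:ℝ)..s₀, ‖T' t‖ := by
        have h := lipA p (hnorm 0) hs₀mem.1
        have hself : Real.arccos ⟪p, T 0⟫ = 0 := by
          rw [← hpdef, real_inner_self_eq_norm_sq, hnorm 0]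
          norm_num [Real.arccos_one]
        rw [hself, sub_zero] at h
        exact le_trans (le_abs_self _) h
      have hA2 : Real.arccos ⟪q, T s₀⟫ ≤ ∫ t in s₀..a, ‖T' t‖ := by
        have h := lipA q (hnorm a) hs₀a
        have hself : Real.arccos ⟪q, T a⟫ = 0 := by
          rw [← hqdef, real_inner_self_eq_norm_sq, hnorm a]
          norm_num [Real.arccos_one]
        rw [hself, zero_sub, abs_neg] at h
        exact le_trans (le_abs_self _) h
      have hsum : Real.arccos ⟪p, T s₀⟫ + Real.arccos ⟪q, T s₀⟫ ≤ K / 2 := by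
        calc Real.arccos ⟪p, T s₀⟫ + Real.arccos ⟪q, T s₀⟫
            ≤ (∫ t in (0:ℝ)..s₀, ‖T' t‖) + ∫ t in s₀..a, ‖T' t‖ := add_le_add hA1 hA2
          _ = ∫ t in (0:ℝ)..a, ‖T' t‖ := hsplit
          _ = K / 2 := hsa
      have hpi : Real.arccos ⟪p, T s₀⟫ + Real.arccos ⟪q, T s₀⟫ = Real.pi := by
        rw [horth0, Real.arccos_neg]; ring
      linarith
    · -- s₀ ∈ [a, t₀] ⊆ [a, L]
      have h0mem : (0:ℝ) ∈ Set.Icc ⟪m, T t₀⟫ ⟪m, T a⟫ := ⟨ht₀, hmq.le⟩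
      obtain ⟨s₀, hs₀mem, hs₀⟩ :=
        intermediate_value_Icc' hat hmTcont.continuousOn h0mem
      have hs₀L : s₀ ≤ L := le_trans hs₀mem.2 ht₀mem.2
      have hTL : T L = p := by
        have := hTper 0
        rw [zero_add] at this
        rw [this]
      have hs₀' : ⟪m, T s₀⟫ = 0 := hs₀
      have h2 : ⟪p, T s₀⟫ + ⟪q, T s₀⟫ = 0 := by
        have h3 : ‖p + q‖⁻¹ * (⟪p, T s₀⟫ + ⟪q, T s₀⟫) = 0 := by
          rw [← hminner, hs₀']
        rcases mul_eq_zero.mp h3 with h | h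
        · exact absurd h (inv_ne_zero (ne_of_gt hpq_pos))
        · exact h
      have horth0 : ⟪p, T s₀⟫ = -⟪q, T s₀⟫ := by linarith
      have hA1 : Real.arccos ⟪q, T s₀⟫ ≤ ∫ t in a..s₀, ‖T' t‖ := by
        have h := lipA q (hnorm a) hs₀mem.1
        have hself : Real.arccos ⟪q, T a⟫ = 0 := by
          rw [← hqdef, real_inner_self_eq_norm_sq, hnorm a]
          norm_num [Real.arccos_one]
        rw [hself, sub_zero] at h
        exact le_trans (le_abs_self _) h
      have hA2 : Real.arccos ⟪p, T s₀⟫ ≤ ∫ t in s₀..L, ‖T' t‖ := by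
        have h := lipA p (hnorm 0) hs₀L
        have hself : Real.arccos ⟪p, T L⟫ = 0 := by
          rw [hTL, real_inner_self_eq_norm_sq, hnorm 0]
          norm_num [Real.arccos_one]
        rw [hself, zero_sub, abs_neg] at h
        exact le_trans (le_abs_self _) h
      have hsum : Real.arccos ⟪q, T s₀⟫ + Real.arccos ⟪p, T s₀⟫ ≤ K / 2 := by
        have hsplit2 : (∫ t in a..s₀, ‖T' t‖) + ∫ t in s₀..L, ‖T' t‖
            = ∫ t in a..L, ‖T' t‖ := hsplit
        have hsplit3 : (∫ t in (0:ℝ)..a, ‖T' t‖) + ∫ t in a..L, ‖T' t‖ = K := hsplit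
        have haL : ∫ t in a..L, ‖T' t‖ = K / 2 := by
          have : ∫ t in (0:ℝ)..a, ‖T' t‖ = K / 2 := hsa
          linarith
        calc Real.arccos ⟪q, T s₀⟫ + Real.arccos ⟪p, T s₀⟫
            ≤ (∫ t in a..s₀, ‖T' t‖) + ∫ t in s₀..L, ‖T' t‖ := add_le_add hA1 hA2
          _ = ∫ t in a..L, ‖T' t‖ := hsplit2
          _ = K / 2 := haL
      have hpi : Real.arccos ⟪q, T s₀⟫ + Real.arccos ⟪p, T s₀⟫ = Real.pi := by
        rw [horth0, Real.arccos_neg]; ring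
      linarith
  linarith
end

section
/- (The tangent indicatrix of a closed polygon is not contained in an open hemisphere.) Let n ≥ 1 and let C : ZMod n → EuclideanSpace ℝ (Fin 3) be a closed polygon with C(i+1) ≠ C(i) for all i. Then there is no vector v ∈ EuclideanSpace ℝ (Fin 3) such that ⟨C(i+1) − C(i), v⟩ > 0 for all i ∈ ZMod n. -/
open scoped RealInnerProductSpace

/-- The tangent indicatrix of a closed polygon is not contained in an open hemisphere:
there is no vector having positive inner product with every edge vector. -/
theorem tangent_indicatrix_not_in_open_hemisphere_discrete
    (n : ℕ) [NeZero n] (hn : 1 ≤ n)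
    (C : ZMod n → EuclideanSpace ℝ (Fin 3))
    (hC : ∀ i : ZMod n, C (i + 1) ≠ C i) :
    ¬ ∃ v : EuclideanSpace ℝ (Fin 3), ∀ i : ZMod n, 0 < ⟪C (i + 1) - C i, v⟫ := by
  rintro ⟨v, hv⟩
  have h0 : ∑ i : ZMod n, ⟪C (i + 1) - C i, v⟫ = 0 := by
    simp only [inner_sub_left, Finset.sum_sub_distrib]
    rw [Fintype.sum_bijective (Equiv.addRight (1 : ZMod n)) (Equiv.bijective _)
      (fun x => ⟪C (x + 1), v⟫) (fun x => ⟪C x, v⟫) (fun i => rfl), sub_self]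
  have hpos : 0 < ∑ i : ZMod n, ⟪C (i + 1) - C i, v⟫ :=
    Finset.sum_pos (fun i _ => hv i) (Finset.univ_nonempty)
  exact lt_irrefl _ (h0 ▸ hpos)
end

section
/- (Fenchel's theorem for curves of bounded total curvature.) Let L > 0 and let γ : ℝ → EuclideanSpace ℝ (Fin 3) be continuous, L-periodic, and nonconstant. Let S ⊆ ℝ be the set of all numbers of the form ∑_{i ∈ ZMod m} angle(γ(t_{i+1}) − γ(t_i), γ(t_{i+2}) − γ(t_{i+1})), taken over all m ≥ 3 and all cyclic sequences of parameters t_0 < t_1 < ⋯ < t_{m−1} < t_0 + L (indices read modulo m, with t_{i+m} := t_i + L) such that γ(t_{i+1}) ≠ γ(t_i) for all i. Then S is nonempty and every element of S is ≥ 2π; in particular the generalized total curvature sup S of γ is at least 2π. -/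
open InnerProductGeometry Finset

variable {V : Type*} [NormedAddCommGroup V] [InnerProductSpace ℝ V]



local notation "⟪" x ", " y "⟫" => @inner ℝ _ _ x y


private lemma arccos_le_of_cos_le {c x : ℝ} (h0 : 0 ≤ c) (hpi : c ≤ Real.pi)
    (h : Real.cos c ≤ x) : Real.arccos x ≤ c := by
  rw [← Real.arccos_cos h0 hpi]
  simp only [Real.arccos_eq_pi_div_two_sub_arcsin]
  have := Real.monotone_arcsin h
  linarith

private lemma angle_triangle_unit {x y z : V} (hx : ‖x‖ = 1) (hy : ‖y‖ = 1) (hz : ‖z‖ = 1) :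
    angle x z ≤ angle x y + angle y z := by
  by_cases hp : Real.pi ≤ angle x y + angle y z
  · exact le_trans (angle_le_pi x z) hp
  push_neg at hp
  have hα0 : 0 ≤ angle x y := angle_nonneg _ _
  have hβ0 : 0 ≤ angle y z := angle_nonneg _ _
  have hαπ : angle x y ≤ Real.pi := angle_le_pi _ _
  have hβπ : angle y z ≤ Real.pi := angle_le_pi _ _
  have hcx : Real.cos (angle x y) = ⟪x, y⟫ := by rw [cos_angle, hx, hy]; norm_num
  have hcz : Real.cos (angle y z) = ⟪y, z⟫ := by rw [cos_angle, hy, hz]; norm_num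
  set u : V := x - Real.cos (angle x y) • y with hu
  set v : V := z - Real.cos (angle y z) • y with hv
  have huu : ⟪u, u⟫ = 1 - Real.cos (angle x y) ^ 2 := by
    have h : ⟪u, u⟫ = ⟪x, x⟫ - 2 * Real.cos (angle x y) * ⟪x, y⟫
        + Real.cos (angle x y) ^ 2 * ⟪y, y⟫ := by
      simp only [hu, inner_sub_left, inner_sub_right, real_inner_smul_left,
        real_inner_smul_right, real_inner_comm y x]
      ring
    rw [h, real_inner_self_eq_norm_sq, real_inner_self_eq_norm_sq, hx, hy, ← hcx]
    ring
  have hvv : ⟪v, v⟫ = 1 - Real.cos (angle y z) ^ 2 := by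
    have h : ⟪v, v⟫ = ⟪z, z⟫ - 2 * Real.cos (angle y z) * ⟪y, z⟫
        + Real.cos (angle y z) ^ 2 * ⟪y, y⟫ := by
      simp only [hv, inner_sub_left, inner_sub_right, real_inner_smul_left,
        real_inner_smul_right, real_inner_comm z y]
      ring
    rw [h, real_inner_self_eq_norm_sq, real_inner_self_eq_norm_sq, hz, hy, ← hcz]
    ring
  have hnu : ‖u‖ = Real.sin (angle x y) := by
    have h1 : ‖u‖ ^ 2 = Real.sin (angle x y) ^ 2 := by
      rw [← real_inner_self_eq_norm_sq, huu, Real.sin_sq]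
    calc ‖u‖ = Real.sqrt (‖u‖ ^ 2) := (Real.sqrt_sq (norm_nonneg u)).symm
      _ = Real.sqrt (Real.sin (angle x y) ^ 2) := by rw [h1]
      _ = Real.sin (angle x y) := Real.sqrt_sq (Real.sin_nonneg_of_nonneg_of_le_pi hα0 hαπ)
  have hnv : ‖v‖ = Real.sin (angle y z) := by
    have h1 : ‖v‖ ^ 2 = Real.sin (angle y z) ^ 2 := by
      rw [← real_inner_self_eq_norm_sq, hvv, Real.sin_sq]
    calc ‖v‖ = Real.sqrt (‖v‖ ^ 2) := (Real.sqrt_sq (norm_nonneg v)).symm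
      _ = Real.sqrt (Real.sin (angle y z) ^ 2) := by rw [h1]
      _ = Real.sin (angle y z) := Real.sqrt_sq (Real.sin_nonneg_of_nonneg_of_le_pi hβ0 hβπ)
  have huy : ⟪u, y⟫ = 0 := by
    simp only [hu, inner_sub_left, real_inner_smul_left, real_inner_self_eq_norm_sq, hy, ← hcx]
    ring
  have hyv : ⟪y, v⟫ = 0 := by
    simp only [hv, inner_sub_right, real_inner_smul_right, real_inner_self_eq_norm_sq, hy, ← hcz]
    ring
  have hxd : x = Real.cos (angle x y) • y + u := by rw [hu]; abel
  have hzd : z = Real.cos (angle y z) • y + v := by rw [hv]; abel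
  have hxz : ⟪x, z⟫ = Real.cos (angle x y) * Real.cos (angle y z) + ⟪u, v⟫ := by
    conv_lhs => rw [hxd, hzd]
    simp only [inner_add_left, inner_add_right, real_inner_smul_left, real_inner_smul_right,
      real_inner_self_eq_norm_sq, hy, huy, hyv]
    ring
  have hb : Real.cos (angle x y + angle y z) ≤ ⟪x, z⟫ := by
    rw [Real.cos_add, hxz]
    have h1 := (abs_le.mp (abs_real_inner_le_norm u v)).1
    rw [hnu, hnv] at h1
    linarith
  have hangle : angle x z = Real.arccos ⟪x, z⟫ := by
    rw [InnerProductGeometry.angle, hx, hz]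
    norm_num
  rw [hangle]
  exact arccos_le_of_cos_le (by linarith) (le_of_lt hp) hb

lemma angle_triangle' (x y z : V) : angle x z ≤ angle x y + angle y z := by
  by_cases hx : x = 0
  · subst hx
    rw [angle_zero_left, angle_zero_left]
    linarith [angle_nonneg y z]
  by_cases hy : y = 0
  · subst hy
    rw [angle_zero_right, angle_zero_left]
    linarith [angle_le_pi x z]
  by_cases hz : z = 0
  · subst hz
    rw [angle_zero_right, angle_zero_right]
    linarith [angle_nonneg x y]
  have nx : (0:ℝ) < ‖x‖⁻¹ := inv_pos.mpr (norm_pos_iff.mpr hx)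
  have ny : (0:ℝ) < ‖y‖⁻¹ := inv_pos.mpr (norm_pos_iff.mpr hy)
  have nz : (0:ℝ) < ‖z‖⁻¹ := inv_pos.mpr (norm_pos_iff.mpr hz)
  have e1 : angle ((‖x‖⁻¹ : ℝ) • x) ((‖z‖⁻¹ : ℝ) • z) = angle x z := by
    rw [angle_smul_left_of_pos _ _ nx, angle_smul_right_of_pos _ _ nz]
  have e2 : angle ((‖x‖⁻¹ : ℝ) • x) ((‖y‖⁻¹ : ℝ) • y) = angle x y := by
    rw [angle_smul_left_of_pos _ _ nx, angle_smul_right_of_pos _ _ ny]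
  have e3 : angle ((‖y‖⁻¹ : ℝ) • y) ((‖z‖⁻¹ : ℝ) • z) = angle y z := by
    rw [angle_smul_left_of_pos _ _ ny, angle_smul_right_of_pos _ _ nz]
  rw [← e1, ← e2, ← e3]
  exact angle_triangle_unit (norm_smul_inv_norm hx) (norm_smul_inv_norm hy) (norm_smul_inv_norm hz)

lemma angle_add_eq' {a b : V} (ha : a ≠ 0) (hb : b ≠ 0) (hab : a + b ≠ 0) :
    angle a (a + b) + angle (a + b) b = angle a b := by
  have h := angle_add_angle_sub_add_angle_sub_eq_pi a hab
  have h1 : a - (a + b) = -b := by abel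
  have h2 : a + b - a = b := by abel
  rw [h1, h2, angle_neg_right] at h
  linarith



private lemma sum_shift_one {g : ℕ → ℝ} {m : ℕ} (hg : g m = g 0) :
    ∑ i ∈ range m, g (i + 1) = ∑ i ∈ range m, g i := by
  have h1 := Finset.sum_range_succ g m
  have h2 := Finset.sum_range_succ' g m
  rw [hg] at h1
  linarith

private lemma sum_shift {m : ℕ} {g : ℕ → ℝ} (hg : ∀ i, g (i + m) = g i) (s : ℕ) :
    ∑ i ∈ range m, g (i + s) = ∑ i ∈ range m, g i := by
  induction s with
  | zero => simp
  | succ s ih =>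
    have hper' : (fun j => g (j + s)) m = (fun j => g (j + s)) 0 := by
      show g (m + s) = g (0 + s)
      rw [Nat.add_comm m s, Nat.zero_add]
      exact hg s
    have step := sum_shift_one (g := fun j => g (j + s)) (m := m) hper'
    calc ∑ i ∈ range m, g (i + (s + 1))
        = ∑ i ∈ range m, (fun j => g (j + s)) (i + 1) := by
          refine Finset.sum_congr rfl fun i _ => ?_
          show g (i + (s + 1)) = g ((i + 1) + s)
          congr 1
          omega
      _ = ∑ i ∈ range m, g (i + s) := step
      _ = ∑ i ∈ range m, g i := ih
lemma fenchel_polygon : ∀ m : ℕ, 3 ≤ m → ∀ P : ℕ → V,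
    (∀ i, P (i + m) = P i) → (∀ i, P (i + 1) ≠ P i) →
    2 * Real.pi ≤ ∑ i ∈ range m, angle (P (i + 1) - P i) (P (i + 2) - P (i + 1)) := by
  refine Nat.le_induction ?_ ?_
  · -- base case m = 3
    intro P hper hne
    have h3 : P 3 = P 0 := by simpa using hper 0
    have h4 : P 4 = P 1 := by simpa using hper 1
    have he0 : P 1 - P 0 ≠ 0 := sub_ne_zero.2 (by simpa using hne 0)
    have he1 : P 2 - P 1 ≠ 0 := sub_ne_zero.2 (by simpa using hne 1)
    have he2 : P 3 - P 2 ≠ 0 := sub_ne_zero.2 (by simpa using hne 2)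
    have he01 : (P 1 - P 0) + (P 2 - P 1) ≠ 0 := by
      rw [h3] at he2
      intro h
      apply he2
      have h' : P 0 - P 2 = -((P 1 - P 0) + (P 2 - P 1)) := by abel
      rw [h', h, neg_zero]
    have key := angle_add_eq' he0 he1 he01
    rw [show (3:ℕ) = 2 + 1 from rfl, Finset.sum_range_succ,
      show (2:ℕ) = 1 + 1 from rfl, Finset.sum_range_succ, Finset.sum_range_one]
    norm_num
    rw [h3, h4]
    have e3 : P 0 - P 2 = -((P 1 - P 0) + (P 2 - P 1)) := by abel
    rw [e3, angle_neg_right, angle_neg_left,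
      angle_comm (P 2 - P 1) ((P 1 - P 0) + (P 2 - P 1)),
      angle_comm ((P 1 - P 0) + (P 2 - P 1)) (P 1 - P 0)]
    linarith
  · -- induction step
    intro m hm ih P hper hne
    by_cases hdeg : ∀ i, P (i + 2) = P i
    · have hterm : ∀ i, angle (P (i+1) - P i) (P (i+2) - P (i+1)) = Real.pi := by
        intro i
        rw [hdeg i, show P i - P (i+1) = -(P (i+1) - P i) from by abel,
          angle_self_neg_of_nonzero (sub_ne_zero.2 (hne i))]
      rw [Finset.sum_congr rfl fun i _ => hterm i, Finset.sum_const, Finset.card_range,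
        nsmul_eq_mul]
      have hpi := Real.pi_pos
      have h4 : (4:ℝ) ≤ ((m+1 : ℕ) : ℝ) := by exact_mod_cast Nat.succ_le_succ hm
      nlinarith
    · push_neg at hdeg
      obtain ⟨j, hj⟩ := hdeg
      obtain ⟨k, rfl⟩ : ∃ k, m = k + 3 := ⟨m - 3, by omega⟩
      have hPper : ∀ i, P (i + (k+4)) = P i := by
        intro i
        have h := hper i
        rwa [show i + (k+3+1) = i + (k+4) from by omega] at h
      set R : ℕ → V := fun i => P (i + (j + 2)) with hR
      have hRper : ∀ i, R (i + (k+4)) = R i := by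
        intro i
        show P ((i + (k+4)) + (j+2)) = P (i + (j+2))
        rw [show i + (k+4) + (j+2) = (i + (j+2)) + (k+4) from by omega]
        exact hPper _
      have hRne : ∀ i, R (i+1) ≠ R i := by
        intro i
        show P ((i+1) + (j+2)) ≠ P (i + (j+2))
        rw [show (i+1) + (j+2) = (i + (j+2)) + 1 from by omega]
        exact hne _
      have hgper : ∀ i, (fun i => angle (P (i+1) - P i) (P (i+2) - P (i+1))) (i + (k+4))
          = (fun i => angle (P (i+1) - P i) (P (i+2) - P (i+1))) i := by
        intro i
        show angle (P (i + (k+4) + 1) - P (i + (k+4))) (P (i + (k+4) + 2) - P (i + (k+4) + 1))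
          = angle (P (i+1) - P i) (P (i+2) - P (i+1))
        rw [show i + (k+4) + 1 = (i+1) + (k+4) from by omega,
            show i + (k+4) + 2 = (i+2) + (k+4) from by omega, hPper, hPper, hPper]
      have hRsum : ∑ i ∈ range (k+4), angle (R (i+1) - R i) (R (i+2) - R (i+1))
          = ∑ i ∈ range (k+4), angle (P (i+1) - P i) (P (i+2) - P (i+1)) := by
        have h1 : ∀ i, angle (R (i+1) - R i) (R (i+2) - R (i+1))
            = (fun i => angle (P (i+1) - P i) (P (i+2) - P (i+1))) (i + (j+2)) := by
          intro i
          show angle (P ((i+1)+(j+2)) - P (i+(j+2))) (P ((i+2)+(j+2)) - P ((i+1)+(j+2)))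
              = angle (P ((i+(j+2))+1) - P (i+(j+2))) (P ((i+(j+2))+2) - P ((i+(j+2))+1))
          rw [show (i+1)+(j+2) = (i+(j+2))+1 from by omega,
              show (i+2)+(j+2) = (i+(j+2))+2 from by omega]
        rw [Finset.sum_congr rfl fun i _ => h1 i]
        exact sum_shift (m := k+4) (g := fun i => angle (P (i+1) - P i) (P (i+2) - P (i+1))) hgper (j+2)
      set Q : ℕ → V := fun i => R (i % (k+3)) with hQ
      have hmodsucc : ∀ i : ℕ, (i+1) % (k+3) = (i % (k+3) + 1) % (k+3) := by
        intro i
        conv_lhs => rw [← Nat.div_add_mod i (k+3)]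
        rw [Nat.add_assoc, Nat.mul_add_mod]
      have hQper : ∀ i, Q (i + (k+3)) = Q i := by
        intro i
        show R ((i + (k+3)) % (k+3)) = R (i % (k+3))
        rw [Nat.add_mod_right]
      have hR0 : R 0 = P (j + 2) := by
        show P (0 + (j+2)) = P (j+2)
        rw [Nat.zero_add]
      have hRk2 : R (k+2) = P j := by
        show P ((k+2) + (j+2)) = P j
        rw [show (k+2)+(j+2) = j + (k+4) from by omega]
        exact hPper j
      have hfne : R 0 ≠ R (k+2) := by rw [hR0, hRk2]; exact hj
      have hQne : ∀ i, Q (i+1) ≠ Q i := by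
        intro i
        show R ((i+1) % (k+3)) ≠ R (i % (k+3))
        have hmod : i % (k+3) < k+3 := Nat.mod_lt _ (by omega)
        by_cases hc : i % (k+3) = k + 2
        · rw [hmodsucc i, hc, show k+2+1 = k+3 from rfl, Nat.mod_self]
          exact hfne
        · rw [hmodsucc i, Nat.mod_eq_of_lt (by omega)]
          exact hRne _
      have hIH := ih Q hQper hQne
      have hQsmall : ∀ i, i < k+3 → Q i = R i := by
        intro i hi
        show R (i % (k+3)) = R i
        rw [Nat.mod_eq_of_lt hi]
      have hQk3 : Q (k+3) = R 0 := by
        show R ((k+3) % (k+3)) = R 0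
        rw [Nat.mod_self]
      have hQk4 : Q (k+4) = R 1 := by
        show R ((k+4) % (k+3)) = R 1
        rw [show k+4 = (k+3) + 1 from rfl, Nat.add_mod_left, Nat.mod_eq_of_lt (by omega)]
      have hRk4 : R (k+4) = R 0 := by simpa using hRper 0
      have hRk5 : R (k+5) = R 1 := by
        have h := hRper 1
        rwa [show 1 + (k+4) = k+5 from by omega] at h
      have he1' : R (k+2) - R (k+1) ≠ 0 := sub_ne_zero.2 (hRne (k+1))
      have he2' : R (k+3) - R (k+2) ≠ 0 := sub_ne_zero.2 (hRne (k+2))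
      have he3' : R (k+4) - R (k+3) ≠ 0 := sub_ne_zero.2 (hRne (k+3))
      have hf : R 0 - R (k+2) ≠ 0 := sub_ne_zero.2 hfne
      have hfeq : (R (k+3) - R (k+2)) + (R (k+4) - R (k+3)) = R 0 - R (k+2) := by
        rw [hRk4]; abel
      have hkey : angle (R (k+3) - R (k+2)) (R 0 - R (k+2))
          + angle (R 0 - R (k+2)) (R (k+4) - R (k+3))
          = angle (R (k+3) - R (k+2)) (R (k+4) - R (k+3)) := by
        have h := angle_add_eq' he2' he3' (by rw [hfeq]; exact hf)
        rwa [hfeq] at h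
      have ht1 : angle (R (k+2) - R (k+1)) (R 0 - R (k+2))
          ≤ angle (R (k+2) - R (k+1)) (R (k+3) - R (k+2))
            + angle (R (k+3) - R (k+2)) (R 0 - R (k+2)) := angle_triangle' _ _ _
      have ht2 : angle (R 0 - R (k+2)) (R 1 - R 0)
          ≤ angle (R 0 - R (k+2)) (R (k+4) - R (k+3))
            + angle (R (k+4) - R (k+3)) (R 1 - R 0) := angle_triangle' _ _ _
      have hQsum : ∑ i ∈ range (k+3), angle (Q (i+1) - Q i) (Q (i+2) - Q (i+1))
          = (∑ i ∈ range (k+1), angle (R (i+1) - R i) (R (i+2) - R (i+1)))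
            + angle (R (k+2) - R (k+1)) (R 0 - R (k+2))
            + angle (R 0 - R (k+2)) (R 1 - R 0) := by
        rw [show k+3 = (k+2)+1 from rfl, Finset.sum_range_succ,
            show k+2 = (k+1)+1 from rfl, Finset.sum_range_succ]
        congr 1
        · congr 1
          · refine Finset.sum_congr rfl fun i hi => ?_
            have hi' : i < k + 1 := Finset.mem_range.mp hi
            rw [hQsmall i (by omega), hQsmall (i+1) (by omega), hQsmall (i+2) (by omega)]
          · show angle (Q (k+2) - Q (k+1)) (Q (k+3) - Q (k+2))
              = angle (R (k+2) - R (k+1)) (R 0 - R (k+2))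
            rw [hQsmall (k+2) (by omega), hQsmall (k+1) (by omega), hQk3]
        · show angle (Q (k+3) - Q (k+2)) (Q (k+4) - Q (k+3))
            = angle (R 0 - R (k+2)) (R 1 - R 0)
          rw [hQsmall (k+2) (by omega), hQk3, hQk4]
      have hC : R (k+5) - R (k+4) = R 1 - R 0 := by rw [hRk5, hRk4]
      have hRsplit : ∑ i ∈ range (k+4), angle (R (i+1) - R i) (R (i+2) - R (i+1))
          = (∑ i ∈ range (k+1), angle (R (i+1) - R i) (R (i+2) - R (i+1)))
            + angle (R (k+2) - R (k+1)) (R (k+3) - R (k+2))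
            + angle (R (k+3) - R (k+2)) (R (k+4) - R (k+3))
            + angle (R (k+4) - R (k+3)) (R (k+5) - R (k+4)) := by
        rw [show k+4 = (k+3)+1 from rfl, Finset.sum_range_succ,
            show k+3 = (k+2)+1 from rfl, Finset.sum_range_succ,
            show k+2 = (k+1)+1 from rfl, Finset.sum_range_succ]
      rw [hC] at hRsplit
      show 2 * Real.pi ≤ ∑ i ∈ range (k+4), angle (P (i+1) - P i) (P (i+2) - P (i+1))
      rw [← hRsum, hRsplit]
      rw [hQsum] at hIH
      linarith
/-- Fenchel's theorem for curves of bounded total curvature: for a nonconstant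
continuous closed space curve, the set of total curvatures of inscribed closed
polygons is nonempty and every inscribed closed polygon has total curvature at
least `2π`; in particular the generalized total curvature is at least `2π`. -/
theorem fenchel_generalized
    (L : ℝ) (hL : 0 < L)
    (γ : ℝ → EuclideanSpace ℝ (Fin 3))
    (hcont : Continuous γ)
    (hper : ∀ t : ℝ, γ (t + L) = γ t)
    (hnonconst : ∃ a b : ℝ, γ a ≠ γ b) :
    ({s : ℝ | ∃ m : ℕ, 3 ≤ m ∧ ∃ t : ℕ → ℝ,
        (∀ i : ℕ, t (i + m) = t i + L) ∧
        (∀ i : ℕ, t i < t (i + 1)) ∧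
        (∀ i : ℕ, γ (t (i + 1)) ≠ γ (t i)) ∧
        s = ∑ i ∈ Finset.range m,
          InnerProductGeometry.angle (γ (t (i + 1)) - γ (t i)) (γ (t (i + 2)) - γ (t (i + 1)))}).Nonempty
    ∧ ∀ s ∈ {s : ℝ | ∃ m : ℕ, 3 ≤ m ∧ ∃ t : ℕ → ℝ,
        (∀ i : ℕ, t (i + m) = t i + L) ∧
        (∀ i : ℕ, t i < t (i + 1)) ∧
        (∀ i : ℕ, γ (t (i + 1)) ≠ γ (t i)) ∧
        s = ∑ i ∈ Finset.range m,
          InnerProductGeometry.angle (γ (t (i + 1)) - γ (t i)) (γ (t (i + 2)) - γ (t (i + 1)))},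
      2 * Real.pi ≤ s := by
  obtain ⟨a, b, hab⟩ := hnonconst
  have hnat : ∀ (x : ℝ) (n : ℕ), γ (x + L * n) = γ x := by
    intro x n
    induction n with
    | zero => simp
    | succ n ih =>
      rw [show x + L * ((n + 1 : ℕ) : ℝ) = (x + L * (n : ℕ)) + L by push_cast; ring, hper, ih]
  have hperiodic : Function.Periodic γ L := hper
  set n0 : ℤ := ⌊(b - a) / L⌋ with hn0
  set b' : ℝ := b - (n0 : ℝ) * L with hb'
  have hγb' : γ b' = γ b := hperiodic.sub_int_mul_eq n0
  have hfl := Int.floor_le ((b - a) / L)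
  have hfu := Int.lt_floor_add_one ((b - a) / L)
  rw [← hn0] at hfl hfu
  have hl1 : (n0 : ℝ) * L ≤ b - a := (le_div_iff₀ hL).mp hfl
  have hl2 : b - a < ((n0 : ℝ) + 1) * L := (div_lt_iff₀ hL).mp hfu
  have hab' : a ≤ b' := by rw [hb']; nlinarith
  have hb'lt : b' < a + L := by rw [hb']; nlinarith
  have hne_ab' : γ a ≠ γ b' := by rw [hγb']; exact hab
  have haltb' : a < b' := lt_of_le_of_ne hab' (fun h => hne_ab' (by rw [← h]))
  set d : ℝ := dist (γ b') (γ a) with hd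
  have hdpos : 0 < d := dist_pos.mpr (fun h => hne_ab' h.symm)
  set g : ℝ → ℝ := fun u => dist (γ u) (γ a) with hg
  have hgcont : Continuous g := hcont.dist continuous_const
  have hgaL : g (a + L) = 0 := by simp [hg, hper a]
  have hgb' : g b' = d := rfl
  have hmem : d / 2 ∈ Set.Icc (g (a + L)) (g b') := by
    rw [hgaL, hgb']
    constructor <;> linarith
  obtain ⟨c, hc, hgc2⟩ :=
    intermediate_value_Icc' (le_of_lt hb'lt) hgcont.continuousOn hmem
  have hcb' : b' < c := by
    rcases eq_or_lt_of_le hc.1 with h | h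
    · exfalso
      rw [← h, hgb'] at hgc2
      linarith
    · exact h
  have hcaL : c < a + L := by
    rcases eq_or_lt_of_le hc.2 with h | h
    · exfalso
      rw [h, hgaL] at hgc2
      linarith
    · exact h
  have hγca : γ c ≠ γ a := by
    intro h
    have h0 : g c = 0 := by simp [hg, h]
    rw [h0] at hgc2
    linarith
  have hγcb' : γ c ≠ γ b' := by
    intro h
    have h0 : g c = d := by
      show dist (γ c) (γ a) = d
      rw [h]
    rw [h0] at hgc2
    linarith
  set t : ℕ → ℝ :=
    fun i => (if i % 3 = 0 then a else if i % 3 = 1 then b' else c) + L * ((i / 3 : ℕ) : ℝ)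
    with ht
  have htper : ∀ i, t (i + 3) = t i + L := by
    intro i
    show (if (i+3) % 3 = 0 then a else if (i+3) % 3 = 1 then b' else c) + L * (((i+3) / 3 : ℕ) : ℝ)
      = (if i % 3 = 0 then a else if i % 3 = 1 then b' else c) + L * ((i / 3 : ℕ) : ℝ) + L
    rw [show (i+3) % 3 = i % 3 from by omega, show (i+3)/3 = i/3 + 1 from by omega]
    push_cast
    ring
  have htmono : ∀ i, t i < t (i + 1) := by
    intro i
    show (if i % 3 = 0 then a else if i % 3 = 1 then b' else c) + L * ((i / 3 : ℕ) : ℝ)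
      < (if (i+1) % 3 = 0 then a else if (i+1) % 3 = 1 then b' else c) + L * (((i+1) / 3 : ℕ) : ℝ)
    have h3 : i % 3 = 0 ∨ i % 3 = 1 ∨ i % 3 = 2 := by omega
    rcases h3 with h | h | h
    · rw [h, show (i+1) % 3 = 1 from by omega, show (i+1)/3 = i/3 from by omega]
      norm_num
      linarith
    · rw [h, show (i+1) % 3 = 2 from by omega, show (i+1)/3 = i/3 from by omega]
      norm_num
      linarith
    · rw [h, show (i+1) % 3 = 0 from by omega, show (i+1)/3 = i/3 + 1 from by omega]
      norm_num
      nlinarith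
  have htval : ∀ i, γ (t i) = γ (if i % 3 = 0 then a else if i % 3 = 1 then b' else c) :=
    fun i => hnat _ _
  have htne : ∀ i, γ (t (i + 1)) ≠ γ (t i) := by
    intro i
    rw [htval (i+1), htval i]
    have h3 : i % 3 = 0 ∨ i % 3 = 1 ∨ i % 3 = 2 := by omega
    rcases h3 with h | h | h
    · rw [h, show (i+1) % 3 = 1 from by omega]
      norm_num
      exact Ne.symm hne_ab'
    · rw [h, show (i+1) % 3 = 2 from by omega]
      norm_num
      exact hγcb'
    · rw [h, show (i+1) % 3 = 0 from by omega]
      norm_num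
      exact Ne.symm hγca
  refine ⟨⟨_, ⟨3, le_refl 3, t, htper, htmono, htne, rfl⟩⟩, ?_⟩
  rintro s ⟨m, hm, u, huper, humono, hune, rfl⟩
  exact fenchel_polygon m hm (fun i => γ (u i)) (fun i => by show γ (u (i + m)) = γ (u i); rw [huper i, hper]) hune
end

section
/- (Higher-dimensional total vertex curvature: the normal cones of a polytope tile the sphere.) Let n ≥ 1 and let N ⊆ EuclideanSpace ℝ (Fin n) be a compact convex set with nonempty interior whose set of extreme points is finite. For each extreme point p of N, let β_p = μH^{n−1}({v ∈ S^{n−1} : ∀ x ∈ N, ⟨v, x − p⟩ ≤ 0}), where S^{n−1} = Metric.sphere (0 : EuclideanSpace ℝ (Fin n)) 1 and μH^{n−1} is the (n−1)-dimensional Hausdorff measure. Then ∑_{p ∈ extremePoints N} β_p = μH^{n−1}(S^{n−1}), the total area ω_{n−1} of the unit sphere. -/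
open scoped RealInnerProductSpace MeasureTheory

open MeasureTheory Module

/-- The intersection of the unit sphere with a hyperplane through the origin is null
for the `(n-1)`-dimensional Hausdorff measure. -/
lemma sphere_inter_hyperplane_null
    (n : ℕ) (hn : 1 ≤ n) (w : EuclideanSpace ℝ (Fin n)) (hw : w ≠ 0) :
    μH[(n : ℝ) - 1] (Metric.sphere (0 : EuclideanSpace ℝ (Fin n)) 1 ∩
      {v | ⟪w, v⟫ = 0}) = 0 := by
  set W := (ℝ ∙ w)ᗮ with hW
  have hd : (0:ℝ) ≤ (n:ℝ) - 1 := by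
    have : (1:ℝ) ≤ (n:ℝ) := by exact_mod_cast hn
    linarith
  have himg : Metric.sphere (0 : EuclideanSpace ℝ (Fin n)) 1 ∩ {v | ⟪w, v⟫ = 0}
      = Subtype.val '' (Metric.sphere (0 : W) 1) := by
    ext v
    constructor
    · rintro ⟨hv1, hv2⟩
      refine ⟨⟨v, Submodule.mem_orthogonal_singleton_iff_inner_right.mpr hv2⟩, ?_, rfl⟩
      simpa [mem_sphere_iff_norm] using hv1
    · rintro ⟨⟨v, hvW⟩, hv1, rfl⟩
      refine ⟨?_, Submodule.mem_orthogonal_singleton_iff_inner_right.mp hvW⟩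
      simpa [mem_sphere_iff_norm] using hv1
  rw [himg, isometry_subtype_coe.hausdorffMeasure_image (Or.inl hd)]
  have h1 : finrank ℝ (ℝ ∙ w) = 1 := finrank_span_singleton hw
  have h2 : finrank ℝ (ℝ ∙ w) + finrank ℝ W = finrank ℝ (EuclideanSpace ℝ (Fin n)) :=
    Submodule.finrank_add_finrank_orthogonal _
  have h3 : finrank ℝ (EuclideanSpace ℝ (Fin n)) = n := finrank_euclideanSpace_fin
  have hfr : finrank ℝ W = n - 1 := by omega
  have hcast : (n : ℝ) - 1 = ((n - 1 : ℕ) : ℝ) := by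
    rw [Nat.cast_sub hn]; norm_num
  rw [hcast, ← hfr]
  exact Measure.addHaar_sphere_of_ne_zero _ _ one_ne_zero

/-- Higher-dimensional total vertex curvature: the normal cones at the vertices of a
convex polytope in `ℝⁿ` tile the unit sphere, so the sum of the external angles at
the vertices equals the total area of the unit sphere `S^{n-1}`. -/
theorem total_vertex_curvature_of_polytope_highdim
    (n : ℕ) (hn : 1 ≤ n)
    (N : Set (EuclideanSpace ℝ (Fin n)))
    (hcomp : IsCompact N) (hconv : Convex ℝ N) (hint : (interior N).Nonempty)
    (hfin : (Set.extremePoints ℝ N).Finite) :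
    ∑ p ∈ hfin.toFinset,
        μH[(n : ℝ) - 1] {v : EuclideanSpace ℝ (Fin n) |
          v ∈ Metric.sphere (0 : EuclideanSpace ℝ (Fin n)) 1 ∧ ∀ x ∈ N, ⟪v, x - p⟫ ≤ 0}
      = μH[(n : ℝ) - 1] (Metric.sphere (0 : EuclideanSpace ℝ (Fin n)) 1) := by
  classical
  set A : EuclideanSpace ℝ (Fin n) → Set (EuclideanSpace ℝ (Fin n)) :=
    fun p => {v | v ∈ Metric.sphere (0 : EuclideanSpace ℝ (Fin n)) 1 ∧
      ∀ x ∈ N, ⟪v, x - p⟫ ≤ 0} with hA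
  have hclosed : ∀ p, IsClosed (A p) := by
    intro p
    have : A p = Metric.sphere (0 : EuclideanSpace ℝ (Fin n)) 1 ∩
        ⋂ x ∈ N, {v | ⟪v, x - p⟫ ≤ 0} := by
      ext v; simp [hA, Set.mem_iInter]
    rw [this]
    exact Metric.isClosed_sphere.inter (isClosed_biInter fun x _ =>
      isClosed_le (continuous_id.inner continuous_const) continuous_const)
  -- the normal cones cover the sphere
  have hcover : Metric.sphere (0 : EuclideanSpace ℝ (Fin n)) 1 = ⋃ p ∈ hfin.toFinset, A p := by
    apply Set.Subset.antisymm
    · intro v hv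
      have hNne : N.Nonempty := hint.mono interior_subset
      have hcont : Continuous fun x : EuclideanSpace ℝ (Fin n) => ⟪v, x⟫ :=
        continuous_const.inner continuous_id
      obtain ⟨z, hzN, hz⟩ := hcomp.exists_isMaxOn hNne hcont.continuousOn
      set F := {x ∈ N | ∀ y ∈ N, ⟪v, y⟫ ≤ ⟪v, x⟫} with hF
      have hFne : F.Nonempty := ⟨z, hzN, fun y hy => hz hy⟩
      have hexp : IsExposed ℝ N F := fun _ => ⟨innerSL ℝ v, by ext x; simp [hF]⟩
      have hFclosed : IsClosed F := hexp.isClosed hcomp.isClosed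
      have hFcomp : IsCompact F := hcomp.of_isClosed_subset hFclosed fun x hx => hx.1
      obtain ⟨p, hp⟩ := hFcomp.extremePoints_nonempty hFne
      have hpN : p ∈ Set.extremePoints ℝ N :=
        hexp.isExtreme.extremePoints_subset_extremePoints hp
      refine Set.mem_biUnion (hfin.mem_toFinset.mpr hpN) ⟨hv, fun x hx => ?_⟩
      have hle := hp.1.2 x hx
      rw [inner_sub_right]; linarith
    · exact Set.iUnion₂_subset fun p _ v hv => hv.1
  -- pairwise a.e. disjointness
  have hnull : ∀ p ∈ hfin.toFinset, ∀ q ∈ hfin.toFinset, p ≠ q →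
      μH[(n : ℝ) - 1] (A p ∩ A q) = 0 := by
    intro p hp q hq hpq
    have hqN : q ∈ N := extremePoints_subset (hfin.mem_toFinset.mp hq)
    have hpN : p ∈ N := extremePoints_subset (hfin.mem_toFinset.mp hp)
    have hsub : A p ∩ A q ⊆ Metric.sphere (0 : EuclideanSpace ℝ (Fin n)) 1 ∩
        {v | ⟪q - p, v⟫ = 0} := by
      rintro v ⟨hvp, hvq⟩
      refine ⟨hvp.1, ?_⟩
      have h1 : ⟪v, q - p⟫ ≤ 0 := hvp.2 q hqN
      have h2 : ⟪v, p - q⟫ ≤ 0 := hvq.2 p hpN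
      have h3 : ⟪v, q - p⟫ = 0 := by
        rw [inner_sub_right] at h1 h2 ⊢; linarith
      rw [real_inner_comm] at h3
      exact h3
    exact measure_mono_null hsub
      (sphere_inter_hyperplane_null n hn (q - p) (sub_ne_zero.mpr (Ne.symm hpq)))
  have key : μH[(n : ℝ) - 1] (⋃ p ∈ hfin.toFinset, A p)
      = ∑ p ∈ hfin.toFinset, μH[(n : ℝ) - 1] (A p) :=
    measure_biUnion_finset₀ (fun p hp q hq hpq => hnull p hp q hq hpq)
      (fun p _ => ((hclosed p).measurableSet).nullMeasurableSet)
  conv_rhs => rw [hcover]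
  exact key.symm
end

section
/- (Continuity of volume with respect to the Hausdorff metric on convex bodies.) Let n ≥ 1, and let K : ℕ → Set (EuclideanSpace ℝ (Fin n)) be a sequence of nonempty compact convex sets and N a nonempty compact convex set such that the Hausdorff distance between K_j and N tends to 0 as j → ∞. Then volume (K_j) tends to volume N, where volume denotes the Lebesgue measure on EuclideanSpace ℝ (Fin n). -/
open MeasureTheory Metric Filter RealInnerProductSpace

/-- If a closed convex nonempty set `K` is such that `N ⊆ cthickening ε K`, then any point whose
distance to `Nᶜ` is at least `2ε` lies in `K`. -/
lemma aux_mem_of_infDist_compl {E : Type*} [NormedAddCommGroup E] [InnerProductSpace ℝ E]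
    [CompleteSpace E] {K N : Set E} (hKcl : IsClosed K) (hKc : Convex ℝ K)
    (hKne : K.Nonempty) {ε : ℝ} (hε : 0 < ε) (hN : N ⊆ Metric.cthickening ε K) :
    {x | 2 * ε ≤ Metric.infDist x Nᶜ} ⊆ K := by
  intro x hx
  simp only [Set.mem_setOf_eq] at hx
  by_contra hxK
  obtain ⟨f, u, hfu, hux⟩ := geometric_hahn_banach_closed_point hKc hKcl hxK
  obtain ⟨b, hb⟩ := hKne
  set v := (InnerProductSpace.toDual ℝ E).symm f with hv
  have hfy : ∀ y, f y = ⟪v, y⟫ := fun y => (InnerProductSpace.toDual_symm_apply).symm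
  have hvne : v ≠ 0 := by
    intro h0
    have h1 : f x = 0 := by rw [hfy, h0, inner_zero_left]
    have h2 : f b = 0 := by rw [hfy, h0, inner_zero_left]
    have := (hfu b hb).trans hux
    rw [h1, h2] at this
    exact lt_irrefl _ this
  have hvpos : 0 < ‖v‖ := norm_pos_iff.2 hvne
  set t : ℝ := 3 * ε / (2 * ‖v‖) with ht
  set z := x + t • v with hz
  have htpos : 0 < t := by positivity
  have hdxz : dist x z = 3 * ε / 2 := by
    rw [dist_eq_norm, hz]
    have : x - (x + t • v) = (-t) • v := by module
    rw [this, norm_smul, norm_neg, Real.norm_eq_abs, abs_of_pos htpos, ht]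
    field_simp
  have hzN : z ∉ N := by
    intro hzNmem
    have hz' : z ∈ thickening (ε + ε / 4) K :=
      cthickening_subset_thickening' (by linarith) (by linarith) K (hN hzNmem)
    obtain ⟨k, hk, hzk⟩ := mem_thickening_iff.1 hz'
    have h1 : f z - f k = ⟪v, z - k⟫ := by rw [hfy z, hfy k, ← inner_sub_right]
    have h2 : ⟪v, z - k⟫ ≤ ‖v‖ * ‖z - k‖ := real_inner_le_norm v (z - k)
    have h3 : f z = f x + t * ‖v‖ ^ 2 := by
      rw [hfy z, hfy x, hz, inner_add_right, real_inner_smul_right,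
        real_inner_self_eq_norm_sq]
    have h4 : t * ‖v‖ ^ 2 = 3 * ε / 2 * ‖v‖ := by
      rw [ht]; field_simp
    have h5 : ‖z - k‖ < ε + ε / 4 := by rwa [← dist_eq_norm]
    have h6 : f k < u := hfu k hk
    nlinarith [hux]
  have : Metric.infDist x Nᶜ ≤ 3 * ε / 2 := by
    rw [← hdxz]
    exact Metric.infDist_le_dist_of_mem hzN
  linarith

/-- Continuity of volume with respect to the Hausdorff metric on convex bodies:
if a sequence of convex bodies converges to a convex body in the Hausdorff distance,
then their volumes converge. -/
theorem volume_continuous_in_hausdorff_metric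
    (n : ℕ) (hn : 1 ≤ n)
    (K : ℕ → Set (EuclideanSpace ℝ (Fin n)))
    (N : Set (EuclideanSpace ℝ (Fin n)))
    (hKne : ∀ j, (K j).Nonempty) (hKcomp : ∀ j, IsCompact (K j))
    (hKconv : ∀ j, Convex ℝ (K j))
    (hNne : N.Nonempty) (hNcomp : IsCompact N) (hNconv : Convex ℝ N)
    (hdist : Filter.Tendsto (fun j => Metric.hausdorffDist (K j) N)
      Filter.atTop (nhds 0)) :
    Filter.Tendsto (fun j => volume (K j)) Filter.atTop (nhds (volume N)) := by
  haveI : Nontrivial (EuclideanSpace ℝ (Fin n)) := Module.nontrivial_of_finrank_pos (R := ℝ)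
    (by rw [finrank_euclideanSpace_fin]; omega)
  -- the complement of N is nonempty since the space is noncompact
  have hNcne : Nᶜ.Nonempty := by
    rw [Set.nonempty_compl]
    intro h
    exact IsCompact.ne_univ hNcomp h
  -- the Hausdorff edistances are finite
  have hedist : ∀ j, EMetric.hausdorffEdist (K j) N ≠ ⊤ := fun j =>
    Metric.hausdorffEdist_ne_top_of_nonempty_of_bounded (hKne j) hNne
      (hKcomp j).isBounded hNcomp.isBounded
  -- volume of interior equals volume of N, since the frontier of a convex set is null
  have hfr : volume (frontier N) = 0 := hNconv.addHaar_frontier volume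
  have hIntN : volume (interior N) = volume N := by
    refine le_antisymm (measure_mono interior_subset) ?_
    calc volume N ≤ volume (interior N ∪ frontier N) := by
          refine measure_mono ?_
          rw [← closure_eq_interior_union_frontier]
          exact subset_closure
      _ ≤ volume (interior N) + volume (frontier N) := measure_union_le _ _
      _ = volume (interior N) := by rw [hfr, add_zero]
  -- inner approximation sets
  set g : ℕ → Set (EuclideanSpace ℝ (Fin n)) := fun m => {x | 1 / ((m : ℝ) + 1) ≤ Metric.infDist x Nᶜ} with hg
  have hIC : IsClosed ((interior N)ᶜ) := isClosed_compl_iff.2 isOpen_interior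
  have hICne : ((interior N)ᶜ).Nonempty :=
    hNcne.mono (Set.compl_subset_compl.2 interior_subset)
  have hinfd : ∀ x : EuclideanSpace ℝ (Fin n), Metric.infDist x Nᶜ = Metric.infDist x ((interior N)ᶜ) := by
    intro x
    rw [← Metric.infDist_closure (s := Nᶜ), closure_compl]
  have hiUnion : interior N = ⋃ m, g m := by
    ext x
    simp only [Set.mem_iUnion, hg, Set.mem_setOf_eq]
    constructor
    · intro hx
      have hpos : 0 < Metric.infDist x Nᶜ := by
        rw [hinfd]
        exact (hIC.notMem_iff_infDist_pos hICne).1 (by simpa using hx)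
      obtain ⟨m, hm⟩ := exists_nat_one_div_lt hpos
      exact ⟨m, hm.le⟩
    · rintro ⟨m, hm⟩
      have hpos : 0 < Metric.infDist x Nᶜ := lt_of_lt_of_le (by positivity) hm
      rw [hinfd] at hpos
      have := (hIC.notMem_iff_infDist_pos hICne).2 hpos
      simpa using this
  have hmono : Monotone g := by
    intro m m' hmm' x hx
    simp only [hg, Set.mem_setOf_eq] at hx ⊢
    refine le_trans ?_ hx
    have h1 : (0:ℝ) < (m : ℝ) + 1 := by positivity
    have : (m:ℝ) ≤ (m':ℝ) := by exact_mod_cast hmm'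
    gcongr <;> linarith
  have hsup : volume (interior N) = ⨆ m, volume (g m) := by
    rw [hiUnion]
    exact hmono.measure_iUnion
  rw [tendsto_order]
  constructor
  · -- lower bound
    intro a ha
    rw [← hIntN, hsup, lt_iSup_iff] at ha
    obtain ⟨m, ham⟩ := ha
    set ε : ℝ := 1 / (2 * ((m : ℝ) + 1)) with hε
    have hεpos : 0 < ε := by positivity
    have h2ε : 2 * ε = 1 / ((m : ℝ) + 1) := by rw [hε]; field_simp
    filter_upwards [hdist.eventually_lt_const hεpos] with j hj
    have hNsub : N ⊆ Metric.cthickening ε (K j) := by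
      intro y hy
      have h1 : Metric.infDist y (K j) ≤ Metric.hausdorffDist N (K j) :=
        Metric.infDist_le_hausdorffDist_of_mem hy
          (by rw [EMetric.hausdorffEdist_comm]; exact hedist j)
      rw [Metric.hausdorffDist_comm] at h1
      have h2 : Metric.infDist y (K j) ≤ ε := h1.trans hj.le
      rw [Metric.mem_cthickening_iff]
      refine le_trans ?_ (ENNReal.ofReal_le_ofReal h2)
      exact (ENNReal.ofReal_toReal (Metric.infEdist_ne_top (hKne j))).ge
    have hsubK : g m ⊆ K j := by
      have := aux_mem_of_infDist_compl (N := N) (hKcomp j).isClosed (hKconv j) (hKne j)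
        hεpos hNsub
      refine Set.Subset.trans ?_ this
      intro x hx
      simp only [Set.mem_setOf_eq, h2ε]
      exact hx
    exact lt_of_lt_of_le ham (measure_mono hsubK)
  · -- upper bound
    intro b hb
    have hth := tendsto_measure_cthickening_of_isCompact (μ := volume) hNcomp
    have hev : ∀ᶠ r in nhds (0:ℝ), volume (Metric.cthickening r N) < b :=
      hth.eventually_lt_const hb
    obtain ⟨δ, hδpos, hδ⟩ := Metric.eventually_nhds_iff.1 hev
    set ε : ℝ := δ / 2 with hεdef
    have hεpos : 0 < ε := by positivity
    have hvol : volume (Metric.cthickening ε N) < b := by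
      apply hδ
      rw [Real.dist_eq, sub_zero, abs_of_pos hεpos]
      linarith
    filter_upwards [hdist.eventually_lt_const hεpos] with j hj
    have hKsub : K j ⊆ Metric.cthickening ε N := by
      intro y hy
      have h1 : Metric.infDist y N ≤ Metric.hausdorffDist (K j) N :=
        Metric.infDist_le_hausdorffDist_of_mem hy (hedist j)
      have h2 : Metric.infDist y N ≤ ε := h1.trans hj.le
      rw [Metric.mem_cthickening_iff]
      refine le_trans ?_ (ENNReal.ofReal_le_ofReal h2)
      exact (ENNReal.ofReal_toReal (Metric.infEdist_ne_top hNne)).ge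
    exact lt_of_le_of_lt (measure_mono hKsub) hvol
end

section
/- (Equality case of Fenchel, necessity of planarity.) Let n ≥ 3 and let C : ZMod n → EuclideanSpace ℝ (Fin 3) be a closed polygon with C(i+1) ≠ C(i) for all i, such that ∑_{i ∈ ZMod n} κ_i = 2π, where κ_i = angle(C(i+1) − C(i), C(i+2) − C(i+1)) ∈ [0, π] is the unoriented angle between consecutive edge vectors. Then the polygon is planar: there exists an affine subspace A of EuclideanSpace ℝ (Fin 3) whose direction has dimension at most 2 such that C(i) ∈ A for all i. -/
open InnerProductGeometry Real

namespace FenchelAux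

variable {V : Type*} [NormedAddCommGroup V] [InnerProductSpace ℝ V]

local notation "⟪" x ", " y "⟫" => @inner ℝ _ _ x y

lemma proj_inner {y : V} (hy : y ≠ 0) (x z : V) :
    ⟪x - (⟪x, y⟫ / ‖y‖ ^ 2) • y, z - (⟪z, y⟫ / ‖y‖ ^ 2) • y⟫
      = ⟪x, z⟫ - ⟪x, y⟫ * ⟪z, y⟫ / ‖y‖ ^ 2 := by
  have hy' : ‖y‖ ≠ 0 := norm_ne_zero_iff.2 hy
  have hyy : ⟪y, y⟫ = ‖y‖ ^ 2 := real_inner_self_eq_norm_sq y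
  rw [inner_sub_left, inner_sub_right, inner_sub_right, real_inner_smul_left,
    real_inner_smul_left, real_inner_smul_right, real_inner_smul_right, hyy,
    real_inner_comm y z]
  field_simp
  ring

lemma proj_norm {y : V} (hy : y ≠ 0) (x : V) :
    ‖x - (⟪x, y⟫ / ‖y‖ ^ 2) • y‖ = Real.sin (angle x y) * ‖x‖ := by
  have hy' : ‖y‖ ≠ 0 := norm_ne_zero_iff.2 hy
  have h0 : (0:ℝ) ≤ Real.sin (angle x y) * ‖x‖ :=
    mul_nonneg (Real.sin_nonneg_of_nonneg_of_le_pi (angle_nonneg _ _) (angle_le_pi _ _))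
      (norm_nonneg _)
  have hsq : ‖x - (⟪x, y⟫ / ‖y‖ ^ 2) • y‖ ^ 2 = (Real.sin (angle x y) * ‖x‖) ^ 2 := by
    have h1 : ‖x - (⟪x, y⟫ / ‖y‖ ^ 2) • y‖ ^ 2 = ⟪x, x⟫ - ⟪x, y⟫ * ⟪x, y⟫ / ‖y‖ ^ 2 := by
      rw [← real_inner_self_eq_norm_sq]
      exact proj_inner hy x x
    have h2 : Real.sin (angle x y) * (‖x‖ * ‖y‖) = √(⟪x, x⟫ * ⟪y, y⟫ - ⟪x, y⟫ * ⟪x, y⟫) :=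
      sin_angle_mul_norm_mul_norm x y
    have h3 : (Real.sin (angle x y) * (‖x‖ * ‖y‖)) ^ 2 = ⟪x, x⟫ * ⟪y, y⟫ - ⟪x, y⟫ * ⟪x, y⟫ := by
      rw [h2, sq_sqrt]
      have := real_inner_mul_inner_self_le x y
      linarith
    have hyy : ⟪y, y⟫ = ‖y‖ ^ 2 := real_inner_self_eq_norm_sq y
    rw [hyy] at h3
    rw [h1]
    field_simp at h3 ⊢
    nlinarith [h3]
  calc ‖x - (⟪x, y⟫ / ‖y‖ ^ 2) • y‖ = √(‖x - (⟪x, y⟫ / ‖y‖ ^ 2) • y‖ ^ 2) :=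
        (Real.sqrt_sq (norm_nonneg _)).symm
    _ = √((Real.sin (angle x y) * ‖x‖) ^ 2) := by rw [hsq]
    _ = Real.sin (angle x y) * ‖x‖ := Real.sqrt_sq h0


lemma key_identity {x y z : V} (hx : x ≠ 0) (hy : y ≠ 0) (hz : z ≠ 0) :
    ⟪x - (⟪x, y⟫ / ‖y‖ ^ 2) • y, z - (⟪z, y⟫ / ‖y‖ ^ 2) • y⟫
      = (Real.cos (angle x z) - Real.cos (angle x y) * Real.cos (angle y z)) * (‖x‖ * ‖z‖) := by
  have hx' : ‖x‖ ≠ 0 := norm_ne_zero_iff.2 hx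
  have hy' : ‖y‖ ≠ 0 := norm_ne_zero_iff.2 hy
  have hz' : ‖z‖ ≠ 0 := norm_ne_zero_iff.2 hz
  rw [proj_inner hy x z, cos_angle, cos_angle, cos_angle, real_inner_comm y z]
  field_simp

/-- Triangle inequality for unoriented vector angles. -/
theorem angle_triangle_aux {x y z : V} (hx : x ≠ 0) (hy : y ≠ 0) (hz : z ≠ 0) :
    angle x z ≤ angle x y + angle y z := by
  by_cases hab : π ≤ angle x y + angle y z
  · exact (angle_le_pi _ _).trans hab
  push_neg at hab
  have hx' : (0:ℝ) < ‖x‖ := norm_pos_iff.2 hx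
  have hz' : (0:ℝ) < ‖z‖ := norm_pos_iff.2 hz
  set x' := x - (⟪x, y⟫ / ‖y‖ ^ 2) • y with hx'def
  set z' := z - (⟪z, y⟫ / ‖y‖ ^ 2) • y with hz'def
  have hcs : -(‖x'‖ * ‖z'‖) ≤ ⟪x', z'⟫ := neg_le_of_abs_le (abs_real_inner_le_norm x' z')
  have hki : ⟪x', z'⟫
      = (Real.cos (angle x z) - Real.cos (angle x y) * Real.cos (angle y z)) * (‖x‖ * ‖z‖) :=
    key_identity hx hy hz
  have hn : ‖x'‖ * ‖z'‖ = Real.sin (angle x y) * Real.sin (angle y z) * (‖x‖ * ‖z‖) := by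
    rw [proj_norm hy x, proj_norm hy z, angle_comm y z]
    ring
  have hP : (0:ℝ) < ‖x‖ * ‖z‖ := mul_pos hx' hz'
  have h1 : (Real.cos (angle x y) * Real.cos (angle y z)
      - Real.sin (angle x y) * Real.sin (angle y z)) * (‖x‖ * ‖z‖)
      ≤ Real.cos (angle x z) * (‖x‖ * ‖z‖) := by nlinarith [hcs, hki, hn]
  have hcos : Real.cos (angle x y + angle y z) ≤ Real.cos (angle x z) := by
    rw [Real.cos_add]
    exact le_of_mul_le_mul_right h1 hP
  by_contra hcon
  push_neg at hcon
  have := Real.cos_lt_cos_of_nonneg_of_le_pi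
    (add_nonneg (angle_nonneg x y) (angle_nonneg y z)) (angle_le_pi x z) hcon
  linarith

/-- Equality case of the angle triangle inequality: the middle vector lies in the span
of the outer two (provided the outer angle is less than `π`). -/
theorem eq_mid {x y z : V} (hx : x ≠ 0) (hy : y ≠ 0) (hz : z ≠ 0)
    (heq : angle x y + angle y z = angle x z) (hlt : angle x z < π) :
    y ∈ Submodule.span ℝ {x, z} := by
  have hxmem : x ∈ Submodule.span ℝ ({x, z} : Set V) :=
    Submodule.subset_span (Set.mem_insert _ _)
  have hzmem : z ∈ Submodule.span ℝ ({x, z} : Set V) :=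
    Submodule.subset_span (Set.mem_insert_of_mem _ rfl)
  by_cases ha0 : angle x y = 0
  · obtain ⟨-, r, hr, rfl⟩ := angle_eq_zero_iff.1 ha0
    exact Submodule.smul_mem _ r hxmem
  by_cases hb0 : angle y z = 0
  · obtain ⟨-, r, hr, hzy⟩ := angle_eq_zero_iff.1 hb0
    have : y = r⁻¹ • z := by rw [hzy, smul_smul, inv_mul_cancel₀ hr.ne', one_smul]
    rw [this]; exact Submodule.smul_mem _ _ hzmem
  have ha : 0 < angle x y := lt_of_le_of_ne (angle_nonneg _ _) (Ne.symm ha0)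
  have hb : 0 < angle y z := lt_of_le_of_ne (angle_nonneg _ _) (Ne.symm hb0)
  have hapi : angle x y < π := by
    have := angle_nonneg y z; rw [← heq] at hlt; linarith
  have hbpi : angle y z < π := by
    have := angle_nonneg x y; rw [← heq] at hlt; linarith
  set x' := x - (⟪x, y⟫ / ‖y‖ ^ 2) • y with hx'def
  set z' := z - (⟪z, y⟫ / ‖y‖ ^ 2) • y with hz'def
  have hnx : ‖x'‖ = Real.sin (angle x y) * ‖x‖ := proj_norm hy x
  have hnz : ‖z'‖ = Real.sin (angle y z) * ‖z‖ := by
    rw [proj_norm hy z, angle_comm y z]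
  have hx'0 : x' ≠ 0 := by
    rw [← norm_pos_iff, hnx]
    exact mul_pos (Real.sin_pos_of_pos_of_lt_pi ha hapi) (norm_pos_iff.2 hx)
  have hz'0 : z' ≠ 0 := by
    rw [← norm_pos_iff, hnz]
    exact mul_pos (Real.sin_pos_of_pos_of_lt_pi hb hbpi) (norm_pos_iff.2 hz)
  have hcoseq : Real.cos (angle x z) = Real.cos (angle x y + angle y z) := by rw [heq]
  have hki : ⟪x', z'⟫
      = (Real.cos (angle x z) - Real.cos (angle x y) * Real.cos (angle y z)) * (‖x‖ * ‖z‖) :=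
    key_identity hx hy hz
  have hinner : ⟪x', z'⟫ = -(‖x'‖ * ‖z'‖) := by
    rw [hki, hnx, hnz, hcoseq, Real.cos_add]; ring
  have hpi : angle x' z' = π := (inner_eq_neg_mul_norm_iff_angle_eq_pi hx'0 hz'0).1 hinner
  obtain ⟨-, r, hr, hz'x'⟩ := angle_eq_pi_iff.1 hpi
  -- z - tz • y = r • (x - tx • y)  ⟹  (tz - r * tx) • y = z - r • x
  set tx := ⟪x, y⟫ / ‖y‖ ^ 2
  set tz := ⟪z, y⟫ / ‖y‖ ^ 2
  have hlin : (tz - r * tx) • y = z - r • x := by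
    have : z - tz • y = r • x - (r * tx) • y := by
      rw [← smul_smul, ← smul_sub]; exact hz'x'
    rw [sub_smul]
    linear_combination (norm := module) -this
  by_cases hc : tz - r * tx = 0
  · exfalso
    have hzx : z = r • x := by
      have := hlin; rw [hc, zero_smul] at this
      exact sub_eq_zero.1 this.symm
    have : angle x z = π := angle_eq_pi_iff.2 ⟨hx, r, hr, hzx⟩
    linarith
  · have : y = (tz - r * tx)⁻¹ • (z - r • x) := by
      rw [← hlin, smul_smul, inv_mul_cancel₀ hc, one_smul]
    rw [this]
    exact Submodule.smul_mem _ _ (Submodule.sub_mem _ hzmem (Submodule.smul_mem _ _ hxmem))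

/-- Splitting an angle along the sum of the two vectors. -/
theorem angle_split {x y : V} (hx : x ≠ 0) (hy : y ≠ 0) :
    angle x (x + y) + angle (x + y) y = angle x y := by
  have h := angle_add_angle_sub_add_angle_sub_eq_pi x (neg_ne_zero.2 hy)
  rw [angle_neg_right] at h
  have h1 : x - -y = x + y := by abel
  have h2 : -y - x = -(x + y) := by abel
  rw [h1, h2, angle_neg_neg] at h
  have h3 : angle y (x + y) = angle (x + y) y := angle_comm _ _
  have h4 : angle x (x + y) = angle (x + y) x := angle_comm _ _
  linarith [h]


/-- Sum of consecutive unoriented angles along the chain `p :: l`. -/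
noncomputable def chain : V → List V → ℝ
  | _, [] => 0
  | p, b :: t => angle p b + chain b t

/-- Total curvature of a closed polygon of edge vectors given by a list (cyclically). -/
noncomputable def cyc : List V → ℝ
  | [] => 0
  | a :: t => chain a (t ++ [a])

@[simp] lemma chain_nil (p : V) : chain p ([] : List V) = 0 := rfl

@[simp] lemma chain_cons (p b : V) (t : List V) :
    chain p (b :: t) = angle p b + chain b t := rfl

lemma chain_nonneg (p : V) (l : List V) : 0 ≤ chain p l := by
  induction l generalizing p with
  | nil => simp
  | cons b t ih => simpa using add_nonneg (angle_nonneg p b) (ih b)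

lemma chain_concat (l : List V) (p y : V) :
    chain p (l ++ [y]) = chain p l + angle (l.getLastD p) y := by
  induction l generalizing p with
  | nil => simp [chain]
  | cons b t ih =>
    rw [List.cons_append, chain_cons, ih b, chain_cons, List.getLastD_cons]
    ring

lemma cyc_cons (a : V) (l : List V) :
    cyc (a :: l) = chain a l + angle (l.getLastD a) a :=
  chain_concat l a a

lemma cyc_rotate_one (l : List V) : cyc (l.rotate 1) = cyc l := by
  cases l with
  | nil => simp
  | cons a t =>
    rw [show (a :: t).rotate 1 = t ++ [a] by
      rw [List.rotate_cons_succ, List.rotate_zero]]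
    cases t with
    | nil => simp
    | cons b t' =>
      rw [List.cons_append, cyc_cons, cyc_cons, chain_concat, List.getLastD_concat,
        List.getLastD_cons, chain_cons]
      ring

lemma cyc_rotate (l : List V) (k : ℕ) : cyc (l.rotate k) = cyc l := by
  induction k with
  | zero => simp
  | succ k ih =>
    rw [← List.rotate_rotate l k 1, cyc_rotate_one, ih]

lemma chain_eq_zero (q : V) (t : List V) (h : chain q t = 0) :
    ∀ v ∈ t, ∃ c : ℝ, 0 < c ∧ v = c • q := by
  induction t generalizing q with
  | nil => simp
  | cons b t' ih =>
    rw [chain_cons] at h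
    have h1 : angle q b = 0 ∧ chain b t' = 0 := by
      constructor <;> nlinarith [angle_nonneg q b, chain_nonneg b t']
    obtain ⟨-, r, hr, rfl⟩ := angle_eq_zero_iff.1 h1.1
    intro v hv
    rcases List.mem_cons.1 hv with rfl | hv
    · exact ⟨r, hr, rfl⟩
    · obtain ⟨c, hc, rfl⟩ := ih _ h1.2 v hv
      exact ⟨c * r, mul_pos hc hr, by rw [smul_smul]⟩


lemma chain_range' (v : ℕ → V) (cend : V) :
    ∀ (m s : ℕ), chain (v s) (((List.range' (s + 1) m).map v) ++ [cend])
      = (∑ k ∈ Finset.range m, angle (v (s + k)) (v (s + k + 1))) + angle (v (s + m)) cend := by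
  intro m
  induction m with
  | zero => simp [chain]
  | succ m ih =>
    intro s
    rw [List.range'_succ, List.map_cons, List.cons_append, chain_cons, ih (s + 1),
      Finset.sum_range_succ']
    have hsum : ∑ k ∈ Finset.range m, angle (v (s + 1 + k)) (v (s + 1 + k + 1))
        = ∑ k ∈ Finset.range m, angle (v (s + (k + 1))) (v (s + (k + 1) + 1)) :=
      Finset.sum_congr rfl fun k _ => by
        rw [show s + 1 + k = s + (k + 1) by omega, show s + (k + 1) + 1 = s + 1 + k + 1 by omega]
    rw [hsum, show s + 1 + m = s + (m + 1) by omega, show s + 0 = s by omega,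
      show s + 1 = s + 0 + 1 by omega]
    ring

lemma cyc_range (v : ℕ → V) (m : ℕ) :
    cyc ((List.range (m + 1)).map v)
      = ∑ k ∈ Finset.range (m + 1), angle (v k) (v ((k + 1) % (m + 1))) := by
  have h0 : List.range (m + 1) = 0 :: List.range' 1 m := by
    rw [List.range_eq_range', List.range'_succ]
  rw [h0, List.map_cons]
  show chain (v 0) _ = _
  have := chain_range' v (v 0) m 0
  simp only [zero_add] at this
  rw [this, Finset.sum_range_succ]
  congr 1
  · apply Finset.sum_congr rfl
    intro k hk
    have : (k + 1) % (m + 1) = k + 1 := Nat.mod_eq_of_lt (by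
      have := Finset.mem_range.1 hk; omega)
    rw [this]
  · rw [Nat.mod_self]



lemma list_range_map_sum {M : Type*} [AddCommMonoid M] (f : ℕ → M) (n : ℕ) :
    ((List.range n).map f).sum = ∑ k ∈ Finset.range n, f k := by
  induction n with
  | zero => simp
  | succ n ih =>
    rw [List.range_succ, List.map_append, List.sum_append, Finset.sum_range_succ, ih]
    simp

lemma zmod_sum {M : Type*} [AddCommMonoid M] {n : ℕ} [NeZero n] (f : ZMod n → M) :
    ∑ k ∈ Finset.range n, f (k : ZMod n) = ∑ i : ZMod n, f i := by
  have himg : Finset.range n = Finset.image ZMod.val (Finset.univ : Finset (ZMod n)) := by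
    ext k
    simp only [Finset.mem_range, Finset.mem_image, Finset.mem_univ, true_and]
    constructor
    · intro hk; exact ⟨(k : ZMod n), ZMod.val_natCast_of_lt hk⟩
    · rintro ⟨i, rfl⟩; exact ZMod.val_lt i
  rw [himg, Finset.sum_image (fun x _ y _ hxy => ZMod.val_injective n hxy)]
  exact Finset.sum_congr rfl fun i _ => by rw [ZMod.natCast_rightInverse i]

/-- The main induction: Fenchel's inequality for closed polygons of edge vectors,
together with the equality case (all edge vectors lie in a plane). -/
theorem fenchel_list (N : ℕ) : ∀ l : List V, l.length = N → 3 ≤ N →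
    (∀ v ∈ l, v ≠ 0) → l.sum = 0 →
    2 * π ≤ cyc l ∧
      (cyc l = 2 * π → ∃ x y : V, ∀ v ∈ l, v ∈ Submodule.span ℝ ({x, y} : Set V)) := by
  induction N using Nat.strong_induction_on with
  | _ N IH =>
  intro l hlen hN hnz hsum
  rcases l with - | ⟨a, l⟩; · simp at hlen; omega
  rcases l with - | ⟨b, l⟩; · simp at hlen; omega
  rcases l with - | ⟨q, t⟩; · simp at hlen; omega
  have ha : a ≠ 0 := hnz a (by simp)
  have hb : b ≠ 0 := hnz b (by simp)
  have hq : q ≠ 0 := hnz q (by simp)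
  rcases t with - | ⟨c, t'⟩
  · -- triangle case: exactly 2π
    have hq' : q = -(a + b) := by
      simp only [List.sum_cons, List.sum_nil, add_zero] at hsum
      linear_combination (norm := module) hsum
    have hsplit := angle_split ha hb
    have h1 : angle b q = π - angle b (a + b) := by rw [hq', angle_neg_right]
    have h2 : angle q a = π - angle (a + b) a := by rw [hq', angle_neg_left]
    have hcyc : cyc [a, b, q] = angle a b + angle b q + angle q a := by
      show chain a ([b, q] ++ [a]) = _
      simp only [List.cons_append, List.nil_append, chain_cons, chain_nil]
      try ring
    have hval : cyc [a, b, q] = 2 * π := by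
      rw [hcyc, h1, h2, angle_comm b (a + b), angle_comm (a + b) a]
      linarith [hsplit]
    refine ⟨le_of_eq hval.symm, fun _ => ⟨a, b, fun v hv => ?_⟩⟩
    have hamem : a ∈ Submodule.span ℝ ({a, b} : Set V) :=
      Submodule.subset_span (Set.mem_insert _ _)
    have hbmem : b ∈ Submodule.span ℝ ({a, b} : Set V) :=
      Submodule.subset_span (Set.mem_insert_of_mem _ rfl)
    rcases List.mem_cons.1 hv with rfl | h
    · exact hamem
    rcases List.mem_cons.1 h with rfl | h
    · exact hbmem
    rcases List.mem_cons.1 h with rfl | h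
    · rw [hq']; exact Submodule.neg_mem _ (Submodule.add_mem _ hamem hbmem)
    · simp at h
  · -- N ≥ 4
    set l : List V := a :: b :: q :: c :: t' with hl
    have hN4 : 4 ≤ N := by
      rw [← hlen]; simp [hl]; try omega
    by_cases Hex : ∃ (k : ℕ) (x y : V) (tt : List V), l.rotate k = x :: y :: tt ∧ x + y ≠ 0
    · obtain ⟨k, a₁, b₁, tt, hshape0, hk⟩ := Hex
      have hlen1 : (l.rotate k).length = N := by rw [List.length_rotate]; exact hlen
      have hmem1' : ∀ v, v ∈ l.rotate k ↔ v ∈ l := fun v => (List.rotate_perm l k).mem_iff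
      have hsum1' : (l.rotate k).sum = 0 := by rw [(List.rotate_perm l k).sum_eq]; exact hsum
      have hcyc1' : cyc (l.rotate k) = cyc l := cyc_rotate l k
      obtain ⟨q₁, t₁, h₃⟩ : ∃ q₁ t₁, tt = q₁ :: t₁ := by
        cases tt with
        | nil =>
          rw [hshape0] at hlen1
          simp at hlen1; omega
        | cons q₁ t₁ => exact ⟨q₁, t₁, rfl⟩
      have hshape : l.rotate k = a₁ :: b₁ :: q₁ :: t₁ := by rw [hshape0, h₃]
      rw [hshape] at hlen1
      have hmem1 : ∀ v, v ∈ (a₁ :: b₁ :: q₁ :: t₁ : List V) ↔ v ∈ l := by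
        rw [← hshape]; exact hmem1'
      have hsum1 : (a₁ :: b₁ :: q₁ :: t₁ : List V).sum = 0 := by rw [← hshape]; exact hsum1'
      have hcyc1 : cyc (a₁ :: b₁ :: q₁ :: t₁ : List V) = cyc l := by
        rw [← hshape]; exact hcyc1'
      have ha₁ : a₁ ≠ 0 := hnz _ ((hmem1 a₁).1 (by simp))
      have hb₁ : b₁ ≠ 0 := hnz _ ((hmem1 b₁).1 (by simp))
      have hq₁ : q₁ ≠ 0 := hnz _ ((hmem1 q₁).1 (by simp))
      have ht₁nz : ∀ v ∈ t₁, v ≠ 0 := fun v hv => hnz _ ((hmem1 v).1 (by simp [hv]))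
      obtain ⟨s, hs⟩ : ∃ s : V, a₁ + b₁ = s := ⟨_, rfl⟩
      have hs0 : s ≠ 0 := hs ▸ hk
      obtain ⟨p, hp⟩ : ∃ p : V, t₁.getLastD q₁ = p := ⟨_, rfl⟩
      have hpmem : p ∈ q₁ :: t₁ := hp ▸ List.getLastD_mem_cons (l := t₁) (a := q₁)
      have hp0 : p ≠ 0 := by
        rcases List.mem_cons.1 hpmem with rfl | h
        · exact hq₁
        · exact ht₁nz _ h
      -- the two cyclic curvature formulas
      have hcycl₁ : cyc (a₁ :: b₁ :: q₁ :: t₁)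
          = angle a₁ b₁ + angle b₁ q₁ + chain q₁ t₁ + angle p a₁ := by
        rw [cyc_cons, List.getLastD_cons, List.getLastD_cons, hp, chain_cons, chain_cons]
        try ring
      have hcycm : cyc (s :: q₁ :: t₁) = angle s q₁ + chain q₁ t₁ + angle p s := by
        rw [cyc_cons, List.getLastD_cons, hp, chain_cons]
        try ring
      have hsplit : angle a₁ s + angle s b₁ = angle a₁ b₁ := by
        rw [← hs]; exact angle_split ha₁ hb₁
      have hD1 : angle p s ≤ angle p a₁ + angle a₁ s := angle_triangle_aux hp0 ha₁ hs0
      have hD2 : angle s q₁ ≤ angle s b₁ + angle b₁ q₁ := angle_triangle_aux hs0 hb₁ hq₁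
      -- apply the induction hypothesis to the merged polygon
      have hmlen : (s :: q₁ :: t₁).length = N - 1 := by
        simp at hlen1 ⊢; omega
      have hmnz : ∀ v ∈ s :: q₁ :: t₁, v ≠ 0 := by
        intro v hv
        rcases List.mem_cons.1 hv with rfl | hv
        · exact hs0
        rcases List.mem_cons.1 hv with rfl | hv
        · exact hq₁
        · exact ht₁nz _ hv
      have hmsum : (s :: q₁ :: t₁).sum = 0 := by
        simp only [List.sum_cons] at hsum1 ⊢
        rw [← hs]
        linear_combination (norm := module) hsum1
      have hIH := IH (N - 1) (by omega) (s :: q₁ :: t₁) hmlen (by omega) hmnz hmsum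
      have hle : cyc (s :: q₁ :: t₁) ≤ cyc l := by
        rw [← hcyc1, hcycl₁, hcycm]
        linarith
      constructor
      · linarith [hIH.1]
      · intro h2π
        have hm2π : cyc (s :: q₁ :: t₁) = 2 * π := le_antisymm (h2π ▸ hle) hIH.1
        have hDD : angle p a₁ + angle a₁ s - angle p s
            + (angle s b₁ + angle b₁ q₁ - angle s q₁) = 0 := by
          have := hcyc1
          rw [hcycl₁] at this
          rw [hcycm] at hm2π
          rw [h2π] at this
          linarith
        have hE1 : angle p a₁ + angle a₁ s = angle p s := by linarith
        have hE2 : angle s b₁ + angle b₁ q₁ = angle s q₁ := by linarith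
        obtain ⟨u, w, hP⟩ := hIH.2 hm2π
        have hsP : s ∈ Submodule.span ℝ ({u, w} : Set V) := hP s (by simp)
        have hq₁P : q₁ ∈ Submodule.span ℝ ({u, w} : Set V) := hP q₁ (by simp)
        have ht₁P : ∀ v ∈ t₁, v ∈ Submodule.span ℝ ({u, w} : Set V) :=
          fun v hv => hP v (by simp [hv])
        have hpP : p ∈ Submodule.span ℝ ({u, w} : Set V) := by
          rcases List.mem_cons.1 hpmem with rfl | h
          · exact hq₁P
          · exact ht₁P _ h
        have finish : ∀ x y : V,
            a₁ ∈ Submodule.span ℝ ({x, y} : Set V) →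
            b₁ ∈ Submodule.span ℝ ({x, y} : Set V) →
            q₁ ∈ Submodule.span ℝ ({x, y} : Set V) →
            (∀ v ∈ t₁, v ∈ Submodule.span ℝ ({x, y} : Set V)) →
            ∃ x y : V, ∀ v ∈ l, v ∈ Submodule.span ℝ ({x, y} : Set V) := by
          intro x y hxa hxb hxq hxt
          refine ⟨x, y, fun v hv => ?_⟩
          have hv1 : v ∈ a₁ :: b₁ :: q₁ :: t₁ := (hmem1 v).2 hv
          rcases List.mem_cons.1 hv1 with rfl | hv1
          · exact hxa
          rcases List.mem_cons.1 hv1 with rfl | hv1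
          · exact hxb
          rcases List.mem_cons.1 hv1 with rfl | hv1
          · exact hxq
          · exact hxt _ hv1
        by_cases hps : angle p s < π
        · have ha₁P : a₁ ∈ Submodule.span ℝ ({u, w} : Set V) := by
            have := eq_mid hp0 ha₁ hs0 hE1 hps
            refine Submodule.span_le.2 ?_ this
            intro z hz
            rcases hz with rfl | hz
            · exact hpP
            · rcases hz with rfl; exact hsP
          have hb₁P : b₁ ∈ Submodule.span ℝ ({u, w} : Set V) := by
            have : b₁ = s - a₁ := by rw [← hs]; abel
            rw [this]; exact Submodule.sub_mem _ hsP ha₁P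
          exact finish u w ha₁P hb₁P hq₁P ht₁P
        by_cases hsq : angle s q₁ < π
        · have hb₁P : b₁ ∈ Submodule.span ℝ ({u, w} : Set V) := by
            have := eq_mid hs0 hb₁ hq₁ hE2 hsq
            refine Submodule.span_le.2 ?_ this
            intro z hz
            rcases hz with rfl | hz
            · exact hsP
            · rcases hz with rfl; exact hq₁P
          have ha₁P : a₁ ∈ Submodule.span ℝ ({u, w} : Set V) := by
            have : a₁ = s - b₁ := by rw [← hs]; abel
            rw [this]; exact Submodule.sub_mem _ hsP hb₁P
          exact finish u w ha₁P hb₁P hq₁P ht₁P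
        · -- degenerate case: s antiparallel to both p and q₁
          have hps' : angle p s = π := le_antisymm (angle_le_pi _ _) (not_lt.1 hps)
          have hsq' : angle s q₁ = π := le_antisymm (angle_le_pi _ _) (not_lt.1 hsq)
          obtain ⟨-, r', hr', hqr⟩ := angle_eq_pi_iff.1 hsq'
          -- q₁ = r' • s with r' < 0, so s = r'⁻¹ • q₁ with r'⁻¹ < 0
          have hsr : s = r'⁻¹ • q₁ := by
            rw [hqr, smul_smul, inv_mul_cancel₀ (ne_of_lt hr'), one_smul]
          have hrinv : r'⁻¹ < 0 := inv_lt_zero.2 hr'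
          have hchain0 : chain q₁ t₁ = 0 := by
            have h2 := hcyc1
            rw [hcycl₁, h2π] at h2
            -- 2π = angle a₁ b₁ + angle b₁ q₁ + chain q₁ t₁ + angle p a₁
            -- angle p a₁ + angle a₁ s = π, angle s b₁ + angle b₁ q₁ = π,
            -- angle a₁ b₁ = angle a₁ s + angle s b₁
            have := hE1; have := hE2
            rw [hps'] at hE1; rw [hsq'] at hE2
            linarith [hsplit]
          have ht₁q : ∀ v ∈ t₁, ∃ cc : ℝ, 0 < cc ∧ v = cc • q₁ := chain_eq_zero q₁ t₁ hchain0
          have has : angle a₁ s = angle a₁ (-q₁) := by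
            rw [hsr, angle_smul_right_of_neg _ _ hrinv]
          have hsb : angle s b₁ = angle (-q₁) b₁ := by
            rw [hsr, angle_smul_left_of_neg _ _ hrinv]
          have heq3 : angle a₁ (-q₁) + angle (-q₁) b₁ = angle a₁ b₁ := by
            rw [← has, ← hsb]; exact hsplit
          -- helper: spans containing q₁ contain s, p, t₁
          by_cases hab₁ : angle a₁ b₁ = π
          · obtain ⟨-, ρ, hρ, hba⟩ := angle_eq_pi_iff.1 hab₁
            refine finish q₁ a₁ ?_ ?_ ?_ ?_
            · exact Submodule.subset_span (Set.mem_insert_of_mem _ rfl)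
            · rw [hba]
              exact Submodule.smul_mem _ _ (Submodule.subset_span (Set.mem_insert_of_mem _ rfl))
            · exact Submodule.subset_span (Set.mem_insert _ _)
            · intro v hv
              obtain ⟨cc, -, rfl⟩ := ht₁q v hv
              exact Submodule.smul_mem _ _ (Submodule.subset_span (Set.mem_insert _ _))
          · have hlt : angle a₁ b₁ < π := lt_of_le_of_ne (angle_le_pi _ _) hab₁
            have hmid := eq_mid ha₁ (neg_ne_zero.2 hq₁) hb₁ heq3 hlt
            obtain ⟨mm, nn, hmn⟩ := Submodule.mem_span_pair.1 hmid
            by_cases hnn : nn = 0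
            · -- q₁ ∈ span a₁; use plane span {a₁, b₁}
              have hq₁span : q₁ = (-mm) • a₁ := by
                rw [hnn, zero_smul, add_zero] at hmn
                rw [neg_smul, hmn, neg_neg]
              refine finish a₁ b₁ ?_ ?_ ?_ ?_
              · exact Submodule.subset_span (Set.mem_insert _ _)
              · exact Submodule.subset_span (Set.mem_insert_of_mem _ rfl)
              · rw [hq₁span]
                exact Submodule.smul_mem _ _ (Submodule.subset_span (Set.mem_insert _ _))
              · intro v hv
                obtain ⟨cc, -, rfl⟩ := ht₁q v hv
                rw [hq₁span, smul_smul]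
                exact Submodule.smul_mem _ _ (Submodule.subset_span (Set.mem_insert _ _))
            · -- b₁ ∈ span {q₁, a₁}
              have hb₁span : b₁ = nn⁻¹ • (-q₁ - mm • a₁) := by
                have : nn • b₁ = -q₁ - mm • a₁ := by
                  linear_combination (norm := module) hmn
                rw [← this, smul_smul, inv_mul_cancel₀ hnn, one_smul]
              refine finish q₁ a₁ ?_ ?_ ?_ ?_
              · exact Submodule.subset_span (Set.mem_insert_of_mem _ rfl)
              · rw [hb₁span]
                refine Submodule.smul_mem _ _ (Submodule.sub_mem _
                  (Submodule.neg_mem _ (Submodule.subset_span (Set.mem_insert _ _)))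
                  (Submodule.smul_mem _ _
                    (Submodule.subset_span (Set.mem_insert_of_mem _ rfl))))
              · exact Submodule.subset_span (Set.mem_insert _ _)
              · intro v hv
                obtain ⟨cc, -, rfl⟩ := ht₁q v hv
                exact Submodule.smul_mem _ _ (Submodule.subset_span (Set.mem_insert _ _))
    · -- all cyclically adjacent pairs sum to zero: curvature is at least 3π
      push_neg at Hex
      have h0 : a + b = 0 := Hex 0 a b (q :: c :: t') (by rw [List.rotate_zero])
      have hrot1 : l.rotate 1 = b :: q :: c :: (t' ++ [a]) := by
        rw [show l.rotate 1 = (b :: q :: c :: t') ++ [a] by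
          rw [hl, List.rotate_cons_succ, List.rotate_zero]]
        simp
      have hrot2 : l.rotate 2 = q :: c :: (t' ++ [a] ++ [b]) := by
        have h21 : l.rotate 2 = (l.rotate 1).rotate 1 := by rw [List.rotate_rotate]
        rw [h21, hrot1, List.rotate_cons_succ, List.rotate_zero]
        simp
      have h1 : b + q = 0 := Hex 1 b q (c :: (t' ++ [a])) hrot1
      have h2 : q + c = 0 := Hex 2 q c (t' ++ [a] ++ [b]) hrot2
      have hab : angle a b = π := by
        have : b = -a := by linear_combination (norm := module) h0
        rw [this]; exact angle_self_neg_of_nonzero ha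
      have hbq : angle b q = π := by
        have : q = -b := by linear_combination (norm := module) h1
        rw [this]; exact angle_self_neg_of_nonzero hb
      have hqc : angle q c = π := by
        have : c = -q := by linear_combination (norm := module) h2
        rw [this]; exact angle_self_neg_of_nonzero hq
      have hcycl : cyc l = angle a b + angle b q + angle q c + chain c t'
          + angle ((b :: q :: c :: t').getLastD a) a := by
        rw [hl, cyc_cons]
        simp [chain_cons]
        ring
      have hge : 3 * π ≤ cyc l := by
        rw [hcycl, hab, hbq, hqc]
        have := chain_nonneg c t'
        have := angle_nonneg ((b :: q :: c :: t').getLastD a) a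
        linarith
      constructor
      · linarith [Real.pi_pos]
      · intro h2π
        exfalso
        linarith [Real.pi_pos]


end FenchelAux

/-- Equality case of Fenchel's theorem, necessity of planarity: a closed space polygon
with total curvature exactly `2π` lies in an affine subspace of dimension at most 2. -/
theorem fenchel_equality_planar
    (n : ℕ) [NeZero n] (hn : 3 ≤ n)
    (C : ZMod n → EuclideanSpace ℝ (Fin 3))
    (hC : ∀ i : ZMod n, C (i + 1) ≠ C i)
    (htot : ∑ i : ZMod n,
        InnerProductGeometry.angle (C (i + 1) - C i) (C (i + 2) - C (i + 1))
      = 2 * Real.pi) :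
    ∃ A : AffineSubspace ℝ (EuclideanSpace ℝ (Fin 3)),
      Module.finrank ℝ A.direction ≤ 2 ∧ ∀ i : ZMod n, C i ∈ A := by
  classical
  open InnerProductGeometry FenchelAux in
  obtain ⟨m, rfl⟩ : ∃ m, n = m + 1 := ⟨n - 1, by omega⟩
  set e : ZMod (m + 1) → EuclideanSpace ℝ (Fin 3) := fun i => C (i + 1) - C i with he_def
  have he : ∀ i, e i ≠ 0 := fun i => sub_ne_zero_of_ne (hC i)
  have htot' : ∑ i : ZMod (m + 1), angle (e i) (e (i + 1)) = 2 * Real.pi := by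
    rw [← htot]
    refine Finset.sum_congr rfl fun i _ => ?_
    show angle (C (i + 1) - C i) (C (i + 1 + 1) - C (i + 1))
      = angle (C (i + 1) - C i) (C (i + 2) - C (i + 1))
    rw [show i + 1 + 1 = i + 2 by ring]
  have hsum : ∑ i : ZMod (m + 1), e i = 0 := by
    have hshift : ∑ i : ZMod (m + 1), C (i + 1) = ∑ i : ZMod (m + 1), C i :=
      Fintype.sum_equiv (Equiv.addRight 1) _ _ (fun i => by simp)
    simp only [he_def]
    rw [Finset.sum_sub_distrib, hshift, sub_self]
  set l : List (EuclideanSpace ℝ (Fin 3)) :=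
    (List.range (m + 1)).map (fun k : ℕ => e ((k : ℕ) : ZMod (m + 1))) with hl
  have hlen : l.length = m + 1 := by simp [hl]
  have hnz : ∀ v ∈ l, v ≠ 0 := by
    intro v hv
    rw [hl] at hv
    obtain ⟨k, -, rfl⟩ := List.mem_map.1 hv
    exact he _
  have hlsum : l.sum = 0 := by
    rw [hl, list_range_map_sum, zmod_sum (fun i => e i)]
    exact hsum
  have hcyc : cyc l = 2 * Real.pi := by
    rw [hl, cyc_range]
    have hcongr : ∀ k ∈ Finset.range (m + 1),
        angle (e (k : ZMod (m + 1))) (e ((((k + 1) % (m + 1) : ℕ)) : ZMod (m + 1)))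
          = angle (e (k : ZMod (m + 1))) (e ((k : ZMod (m + 1)) + 1)) := by
      intro k _
      have : ((((k + 1) % (m + 1) : ℕ)) : ZMod (m + 1)) = (k : ZMod (m + 1)) + 1 := by
        rw [ZMod.natCast_mod]
        push_cast
        ring
      rw [this]
    rw [Finset.sum_congr rfl hcongr, zmod_sum (fun i => angle (e i) (e (i + 1)))]
    exact htot'
  obtain ⟨x, y, hP⟩ := (fenchel_list (m + 1) l hlen hn hnz hlsum).2 hcyc
  refine ⟨AffineSubspace.mk' (C 0) (Submodule.span ℝ ({x, y} : Set _)), ?_, ?_⟩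
  · rw [AffineSubspace.direction_mk']
    have h1 : ({x, y} : Set (EuclideanSpace ℝ (Fin 3)))
        = (({x, y} : Finset (EuclideanSpace ℝ (Fin 3))) : Set _) := by simp
    rw [h1]
    refine le_trans (finrank_span_finset_le_card _) ?_
    exact le_trans (Finset.card_insert_le _ _) (by simp)
  · intro i
    rw [AffineSubspace.mem_mk']
    have hPe : ∀ j : ZMod (m + 1), e j ∈ Submodule.span ℝ ({x, y} : Set _) := by
      intro j
      refine hP _ ?_
      rw [hl]
      exact List.mem_map.2 ⟨j.val, List.mem_range.2 (ZMod.val_lt j),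
        by rw [ZMod.natCast_rightInverse j]⟩
    have tele : ∀ j : ℕ, C ((j : ℕ) : ZMod (m + 1)) - C 0
        = ∑ k ∈ Finset.range j, e ((k : ℕ) : ZMod (m + 1)) := by
      intro j
      induction j with
      | zero => simp
      | succ j ih =>
        rw [Finset.sum_range_succ, ← ih, Nat.cast_succ]
        show C ((j : ZMod (m + 1)) + 1) - C 0
          = (C ((j : ℕ) : ZMod (m + 1)) - C 0)
            + (C (((j : ℕ) : ZMod (m + 1)) + 1) - C ((j : ℕ) : ZMod (m + 1)))
        abel
    have hmem : C i - C 0 ∈ Submodule.span ℝ ({x, y} : Set _) := by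
      have hi : ((i.val : ℕ) : ZMod (m + 1)) = i := ZMod.natCast_rightInverse i
      rw [← hi, tele i.val]
      exact Submodule.sum_mem _ fun k _ => hPe _
    simpa using hmem
end
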